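/- arXiv:2411.04621 — 6 statements merged into one kernel-verified Lean document; each statement's English description precedes it below -/
import Mathlib

section
/- Let V be a finite-dimensional complex inner product space of dimension k ≥ 1 and let R be a Kähler curvature-type tensor on V. Let (E_1,…,E_k) be an orthonormal basis of V and let σ denote the rotation-invariant probability measure on the unit sphere of V. Then ∫ R(Z,Z̄,Z,Z̄) dσ(Z) = (2/(k(k+1))) · Σ_{i,j=1}^k R(E_i,Ē_i,E_j,Ē_j). (Both sides are real.) -/
open MeasureTheory

/-- A Kähler curvature-type tensor on a complex vector space `V`: a map
`R : V × V × V × V → ℂ` that is `ℂ`-linear in the first and third arguments,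
conjugate-linear in the second and fourth arguments, and satisfies the Kähler
symmetries `R(X,Y,Z,W) = R(Z,Y,X,W)`, `R(X,Y,Z,W) = R(X,W,Z,Y)` and
`conj (R(X,Y,Z,W)) = R(Y,X,W,Z)`. -/
structure IsKahlerCurvatureTensor {V : Type*} [AddCommGroup V] [Module ℂ V]
    (R : V → V → V → V → ℂ) : Prop where
  map_add₁ : ∀ x x' y z w, R (x + x') y z w = R x y z w + R x' y z w
  map_smul₁ : ∀ (a : ℂ) (x y z w : V), R (a • x) y z w = a * R x y z w
  map_add₂ : ∀ x y y' z w, R x (y + y') z w = R x y z w + R x y' z w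
  map_smul₂ : ∀ (a : ℂ) (x y z w : V), R x (a • y) z w = starRingEnd ℂ a * R x y z w
  map_add₃ : ∀ x y z z' w, R x y (z + z') w = R x y z w + R x y z' w
  map_smul₃ : ∀ (a : ℂ) (x y z w : V), R x y (a • z) w = a * R x y z w
  map_add₄ : ∀ x y z w w', R x y z (w + w') = R x y z w + R x y z w'
  map_smul₄ : ∀ (a : ℂ) (x y z w : V), R x y z (a • w) = starRingEnd ℂ a * R x y z w
  symm₁₃ : ∀ x y z w, R x y z w = R z y x w
  symm₂₄ : ∀ x y z w, R x y z w = R x w z y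
  conj_symm : ∀ x y z w, starRingEnd ℂ (R x y z w) = R y x w z

section AuxAHSC
open ComplexConjugate Finset
namespace AHSC
variable {k : ℕ}

noncomputable def mono (a b c d : Fin k) (x : EuclideanSpace ℂ (Fin k)) : ℂ :=
  x a * conj (x b) * x c * conj (x d)

lemma mono_continuous (a b c d : Fin k) : Continuous (mono a b c d) := by
  have h : ∀ i : Fin k, Continuous fun x : EuclideanSpace ℂ (Fin k) => x i :=
    fun i => (EuclideanSpace.proj (𝕜 := ℂ) i).continuous
  exact (((h a).mul (continuous_star.comp (h b))).mul (h c)).mul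
    (continuous_star.comp (h d))

noncomputable def phaseU (c : Fin k → ℂ) (hc : ∀ i, ‖c i‖ = 1) :
    EuclideanSpace ℂ (Fin k) ≃ₗᵢ[ℂ] EuclideanSpace ℂ (Fin k) :=
  have hne : ∀ i, c i ≠ 0 := fun i h => by
    have := hc i; rw [h] at this; simp at this
  LinearEquiv.isometryOfInner
    { toFun := fun x => WithLp.toLp 2 (fun i => c i * x i)
      invFun := fun x => WithLp.toLp 2 (fun i => (c i)⁻¹ * x i)
      map_add' := fun x y => by ext i; simp [PiLp.add_apply]; ring
      map_smul' := fun a x => by ext i; simp [PiLp.smul_apply, smul_eq_mul]; ring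
      left_inv := fun x => by
        ext i; exact inv_mul_cancel_left₀ (hne i) _
      right_inv := fun x => by
        ext i; exact mul_inv_cancel_left₀ (hne i) _ }
    (by
      intro x y
      simp only [PiLp.inner_apply, RCLike.inner_apply, LinearEquiv.coe_mk, map_mul,
        PiLp.toLp_apply, LinearMap.coe_mk, AddHom.coe_mk]
      refine Finset.sum_congr rfl fun i _ => ?_
      have h1 : conj (c i) * c i = 1 := by
        rw [Complex.conj_mul']; simp [hc i]
      linear_combination (y i * conj (x i)) * h1)

@[simp] lemma phaseU_apply (c : Fin k → ℂ) (hc : ∀ i, ‖c i‖ = 1)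
    (x : EuclideanSpace ℂ (Fin k)) (i : Fin k) :
    phaseU c hc x i = c i * x i := rfl

noncomputable def sC : ℂ := ((Real.sqrt 2 : ℝ) : ℂ)⁻¹

lemma sC_conj : conj sC = sC := by
  simp [sC, map_inv₀, Complex.conj_ofReal]

lemma sC_sq : sC * sC = 1 / 2 := by
  rw [sC, ← mul_inv, ← Complex.ofReal_mul, Real.mul_self_sqrt (by norm_num : (0:ℝ) ≤ 2)]
  norm_num

noncomputable def rotFun (i0 i1 : Fin k) (x : EuclideanSpace ℂ (Fin k)) :
    EuclideanSpace ℂ (Fin k) :=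
  WithLp.toLp 2 fun i => if i = i0 then sC * x i0 + sC * x i1
    else if i = i1 then sC * x i0 - sC * x i1 else x i

lemma rotFun_apply (i0 i1 : Fin k) (x : EuclideanSpace ℂ (Fin k)) (i : Fin k) :
    rotFun i0 i1 x i = if i = i0 then sC * x i0 + sC * x i1
      else if i = i1 then sC * x i0 - sC * x i1 else x i := rfl

lemma rotFun_apply₀ (i0 i1 : Fin k) (x : EuclideanSpace ℂ (Fin k)) :
    rotFun i0 i1 x i0 = sC * x i0 + sC * x i1 := by simp [rotFun]

lemma rotFun_apply₁ (i0 i1 : Fin k) (h : i0 ≠ i1) (x : EuclideanSpace ℂ (Fin k)) :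
    rotFun i0 i1 x i1 = sC * x i0 - sC * x i1 := by simp [rotFun, h.symm]

lemma sum_split (i0 i1 : Fin k) (h : i0 ≠ i1) (g : Fin k → ℂ) :
    ∑ i, g i = g i0 + g i1 + ∑ i ∈ (univ.erase i0).erase i1, g i := by
  rw [← Finset.add_sum_erase _ g (mem_univ i0),
    ← Finset.add_sum_erase _ g (by simp [Finset.mem_erase, h.symm] : i1 ∈ univ.erase i0)]
  ring

noncomputable def rotU (i0 i1 : Fin k) (h : i0 ≠ i1) :
    EuclideanSpace ℂ (Fin k) ≃ₗᵢ[ℂ] EuclideanSpace ℂ (Fin k) :=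
  LinearEquiv.isometryOfInner
    (LinearEquiv.ofInvolutive
      { toFun := rotFun i0 i1
        map_add' := fun x y => by
          ext i
          simp only [rotFun_apply, PiLp.add_apply]
          split_ifs <;> ring
        map_smul' := fun a x => by
          ext i
          simp only [rotFun_apply, PiLp.smul_apply, smul_eq_mul, RingHom.id_apply]
          split_ifs <;> ring }
      (by
        intro x
        ext i
        simp only [LinearMap.coe_mk, AddHom.coe_mk]
        by_cases h0 : i = i0
        · subst h0
          rw [rotFun_apply₀, rotFun_apply₀, rotFun_apply₁ _ _ h]
          linear_combination (2 * x i) * sC_sq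
        · by_cases h1 : i = i1
          · subst h1
            rw [rotFun_apply₁ _ _ h, rotFun_apply₀, rotFun_apply₁ _ _ h]
            linear_combination (2 * x i) * sC_sq
          · simp only [rotFun_apply, if_neg h0, if_neg h1]))
    (by
      intro x y
      simp only [PiLp.inner_apply, RCLike.inner_apply, LinearEquiv.coe_ofInvolutive,
        LinearMap.coe_mk, AddHom.coe_mk]
      change ∑ i, rotFun i0 i1 y i * conj (rotFun i0 i1 x i) = ∑ i, y i * conj (x i)
      rw [sum_split i0 i1 h, sum_split i0 i1 h (fun i => y i * conj (x i))]
      have htail : ∑ i ∈ (univ.erase i0).erase i1, rotFun i0 i1 y i * conj (rotFun i0 i1 x i)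
          = ∑ i ∈ (univ.erase i0).erase i1, y i * conj (x i) := by
        refine Finset.sum_congr rfl fun i hi => ?_
        rw [Finset.mem_erase, Finset.mem_erase] at hi
        simp only [rotFun_apply, if_neg hi.2.1, if_neg hi.1]
      rw [htail, rotFun_apply₀, rotFun_apply₀, rotFun_apply₁ _ _ h, rotFun_apply₁ _ _ h]
      simp only [map_add, map_sub, map_mul, sC_conj]
      linear_combination (2 * conj (x i0) * y i0 + 2 * conj (x i1) * y i1) * sC_sq)

@[simp] lemma rotU_apply (i0 i1 : Fin k) (h : i0 ≠ i1) (x : EuclideanSpace ℂ (Fin k)) :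
    rotU i0 i1 h x = rotFun i0 i1 x := rfl


section Meas
variable {V : Type*} [NormedAddCommGroup V] [InnerProductSpace ℂ V]
  [MeasurableSpace V] [BorelSpace V] {k : ℕ}
  (E : OrthonormalBasis (Fin k) ℂ V) (σ : Measure V)

/-- the moment integral -/
noncomputable def Mint (a b c d : Fin k) : ℂ :=
  ∫ Z, mono a b c d (E.repr Z) ∂σ

lemma key_inv (hinv : ∀ f : V ≃ₗᵢ[ℂ] V, Measure.map f σ = σ)
    (U : EuclideanSpace ℂ (Fin k) ≃ₗᵢ[ℂ] EuclideanSpace ℂ (Fin k))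
    (g : EuclideanSpace ℂ (Fin k) → ℂ) (hg : Continuous g) :
    ∫ Z, g (E.repr Z) ∂σ = ∫ Z, g (U (E.repr Z)) ∂σ := by
  set T : V ≃ₗᵢ[ℂ] V := (E.repr.trans U).trans E.repr.symm with hT
  have h2 : ∀ Z, E.repr (T Z) = U (E.repr Z) := by
    intro Z
    simp [hT, LinearIsometryEquiv.trans_apply]
  calc ∫ Z, g (E.repr Z) ∂σ = ∫ Z, g (E.repr Z) ∂(Measure.map T σ) := by rw [hinv T]
    _ = ∫ Z, g (E.repr (T Z)) ∂σ :=
        integral_map T.continuous.measurable.aemeasurable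
          (hg.comp E.repr.continuous).aestronglyMeasurable
    _ = ∫ Z, g (U (E.repr Z)) ∂σ := by simp_rw [h2]

variable [IsProbabilityMeasure σ]

lemma mono_integrable (hsupp : σ (Metric.sphere (0 : V) 1)ᶜ = 0) (a b c d : Fin k) :
    Integrable (fun Z => mono a b c d (E.repr Z)) σ := by
  refine ⟨((mono_continuous a b c d).comp E.repr.continuous).aestronglyMeasurable, ?_⟩
  refine HasFiniteIntegral.of_bounded (C := 1) ?_
  have hs : ∀ᵐ Z ∂σ, Z ∈ Metric.sphere (0 : V) 1 := by
    rw [ae_iff]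
    exact hsupp
  filter_upwards [hs] with Z hZ
  have hZ1 : ‖Z‖ = 1 := by simpa using hZ
  have hb : ∀ i, ‖E.repr Z i‖ ≤ 1 := by
    intro i
    rw [E.repr_apply_apply]
    calc ‖(inner ℂ (E i) Z : ℂ)‖ ≤ ‖E i‖ * ‖Z‖ := norm_inner_le_norm _ _
      _ = 1 := by rw [E.orthonormal.1 i, hZ1, one_mul]
  have h0 : ∀ i, (0:ℝ) ≤ ‖E.repr Z i‖ := fun i => norm_nonneg _
  simp only [mono, norm_mul, RCLike.norm_conj]
  calc ‖E.repr Z a‖ * ‖E.repr Z b‖ * ‖E.repr Z c‖ * ‖E.repr Z d‖ ≤ 1 * 1 * 1 * 1 := by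
        gcongr <;> [exact hb a; exact hb b; exact hb c; exact hb d]
    _ = 1 := by norm_num

end Meas
section Meas2
variable {V : Type*} [NormedAddCommGroup V] [InnerProductSpace ℂ V]
  [MeasurableSpace V] [BorelSpace V] {k : ℕ}
  (E : OrthonormalBasis (Fin k) ℂ V) (σ : Measure V) [IsProbabilityMeasure σ]

lemma Mint_swap (a c : Fin k) : Mint E σ a c c a = Mint E σ a a c c := by
  have h : ∀ x : EuclideanSpace ℂ (Fin k), mono a c c a x = mono a a c c x :=
    fun x => by simp only [mono]; ring
  simp only [Mint, h]

lemma Mint_vanish (hinv : ∀ f : V ≃ₗᵢ[ℂ] V, Measure.map f σ = σ)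
    (a b c d j : Fin k)
    (hcount : ((if a = j then 1 else 0) + (if c = j then 1 else 0) : ℕ) ≠
      (if b = j then 1 else 0) + (if d = j then 1 else 0)) :
    Mint E σ a b c d = 0 := by
  set cf : Fin k → ℂ := fun i => if i = j then Complex.I else 1 with hcf
  have hc : ∀ i, ‖cf i‖ = 1 := fun i => by by_cases h : i = j <;> simp [hcf, h]
  have key := key_inv E σ hinv (phaseU cf hc) (mono a b c d) (mono_continuous a b c d)
  have hph : ∀ x, mono a b c d (phaseU cf hc x) =
      (cf a * conj (cf b) * (cf c * conj (cf d))) * mono a b c d x := fun x => by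
    simp only [mono, phaseU_apply, map_mul]; ring
  simp only [hph, integral_const_mul] at key
  have key' : Mint E σ a b c d =
      (cf a * conj (cf b) * (cf c * conj (cf d))) * Mint E σ a b c d := key
  have hφ : cf a * conj (cf b) * (cf c * conj (cf d)) ≠ 1 := by
    clear key key' hph hc
    by_cases ha : a = j <;> by_cases hb : b = j <;> by_cases hc2 : c = j <;>
      by_cases hd : d = j <;>
      simp [ha, hb, hc2, hd, hcf, Complex.ext_iff] at hcount ⊢ <;> norm_num
  have h0 : (1 - cf a * conj (cf b) * (cf c * conj (cf d))) * Mint E σ a b c d = 0 := by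
    linear_combination key'
  rcases mul_eq_zero.mp h0 with h | h
  · exact absurd (by linear_combination -h : cf a * conj (cf b) * (cf c * conj (cf d)) = 1)
      hφ
  · exact h

lemma Mint_perm (hinv : ∀ f : V ≃ₗᵢ[ℂ] V, Measure.map f σ = σ)
    (e : Fin k ≃ Fin k) (a b c d : Fin k) :
    Mint E σ a b c d = Mint E σ (e a) (e b) (e c) (e d) := by
  have key := key_inv E σ hinv (LinearIsometryEquiv.piLpCongrLeft 2 ℂ ℂ e.symm)
    (mono a b c d) (mono_continuous a b c d)
  have hap : ∀ x : EuclideanSpace ℂ (Fin k),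
      mono a b c d ((LinearIsometryEquiv.piLpCongrLeft 2 ℂ ℂ e.symm) x) =
      mono (e a) (e b) (e c) (e d) x := by
    intro x
    simp [mono, LinearIsometryEquiv.piLpCongrLeft_apply, Equiv.piCongrLeft'_apply]
  simp only [hap] at key
  exact key

lemma Mint_rot (hinv : ∀ f : V ≃ₗᵢ[ℂ] V, Measure.map f σ = σ)
    (hsupp : σ (Metric.sphere (0 : V) 1)ᶜ = 0) (a c : Fin k) (hac : a ≠ c) :
    Mint E σ a a c c = (1/4 : ℂ) * (Mint E σ a a a a + Mint E σ c c c c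
      - Mint E σ a c a c - Mint E σ c a c a) := by
  have key := key_inv E σ hinv (rotU a c hac) (mono a a c c) (mono_continuous a a c c)
  have hap : ∀ x : EuclideanSpace ℂ (Fin k), mono a a c c (rotU a c hac x)
      = (1/4 : ℂ) * (mono a a a a x + mono c c c c x - mono a c a c x - mono c a c a x) := by
    intro x
    simp only [mono, rotU_apply, rotFun_apply₀, rotFun_apply₁ _ _ hac, map_add, map_sub,
      map_mul, sC_conj]
    linear_combination ((sC * sC + 1/2) *
      ((x a ^ 2 - x c ^ 2) * (conj (x a) ^ 2 - conj (x c) ^ 2))) * sC_sq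
  simp only [hap] at key
  rw [integral_const_mul] at key
  have i1 := mono_integrable E σ hsupp a a a a
  have i2 := mono_integrable E σ hsupp c c c c
  have i3 := mono_integrable E σ hsupp a c a c
  have i4 := mono_integrable E σ hsupp c a c a
  have i12 : Integrable (fun Z => mono a a a a (E.repr Z) + mono c c c c (E.repr Z)) σ :=
    i1.add i2
  have i123 : Integrable (fun Z => mono a a a a (E.repr Z) + mono c c c c (E.repr Z)
      - mono a c a c (E.repr Z)) σ := i12.sub i3
  rw [integral_sub i123 i4, integral_sub i12 i3, integral_add i1 i2] at key
  exact key

lemma Mint_sum_one (hsupp : σ (Metric.sphere (0 : V) 1)ᶜ = 0) :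
    ∑ a : Fin k, ∑ c : Fin k, Mint E σ a a c c = 1 := by
  have h1 : ∀ a : Fin k, ∑ c, Mint E σ a a c c = ∫ Z, ∑ c, mono a a c c (E.repr Z) ∂σ :=
    fun a => (integral_finset_sum _ fun c _ => mono_integrable E σ hsupp a a c c).symm
  calc ∑ a, ∑ c, Mint E σ a a c c
      = ∑ a, ∫ Z, ∑ c, mono a a c c (E.repr Z) ∂σ := Finset.sum_congr rfl fun a _ => h1 a
    _ = ∫ Z, ∑ a, ∑ c, mono a a c c (E.repr Z) ∂σ :=
        (integral_finset_sum _ fun a _ =>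
          integrable_finset_sum _ fun c _ => mono_integrable E σ hsupp a a c c).symm
    _ = ∫ _Z, (1:ℂ) ∂σ := by
        refine integral_congr_ae ?_
        have hs : ∀ᵐ Z ∂σ, Z ∈ Metric.sphere (0:V) 1 := by
          rw [ae_iff]; exact hsupp
        filter_upwards [hs] with Z hZ
        have hZ1 : ‖Z‖ = 1 := by simpa using hZ
        have hx : ‖E.repr Z‖ = 1 := by rw [LinearIsometryEquiv.norm_map, hZ1]
        have hinner : ∑ i, conj (E.repr Z i) * (E.repr Z i) = 1 := by
          have h := inner_self_eq_norm_sq_to_K (𝕜 := ℂ) (E.repr Z)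
          rw [PiLp.inner_apply] at h
          simp only [RCLike.inner_apply] at h
          refine (Finset.sum_congr rfl fun i _ => mul_comm _ _).trans ?_
          rw [h, hx]
          norm_num
        calc ∑ a, ∑ c, mono a a c c (E.repr Z)
            = (∑ a, conj (E.repr Z a) * E.repr Z a) * (∑ c, conj (E.repr Z c) * E.repr Z c) := by
              rw [Finset.sum_mul_sum]
              exact Finset.sum_congr rfl fun a _ => Finset.sum_congr rfl fun c _ => by
                simp only [mono]; ring
          _ = 1 := by rw [hinner, one_mul]
    _ = 1 := by simp

lemma expand (R : V → V → V → V → ℂ) (hR : IsKahlerCurvatureTensor R) (Z : V) :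
    R Z Z Z Z = ∑ a, ∑ b, ∑ c, ∑ d,
      mono a b c d (E.repr Z) * R (E a) (E b) (E c) (E d) := by
  have h1 : ∀ y z w, R Z y z w = ∑ a, E.repr Z a * R (E a) y z w := by
    intro y z w
    calc R Z y z w = (AddMonoidHom.mk' (fun x => R x y z w)
          fun p q => hR.map_add₁ p q y z w) (∑ i, E.repr Z i • E i) := by rw [E.sum_repr]; rfl
      _ = ∑ i, (AddMonoidHom.mk' (fun x => R x y z w)
          fun p q => hR.map_add₁ p q y z w) (E.repr Z i • E i) := map_sum _ _ _
      _ = ∑ i, E.repr Z i * R (E i) y z w :=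
          Finset.sum_congr rfl fun i _ => hR.map_smul₁ _ _ _ _ _
  have h2 : ∀ x z w, R x Z z w = ∑ b, conj (E.repr Z b) * R x (E b) z w := by
    intro x z w
    calc R x Z z w = (AddMonoidHom.mk' (fun y => R x y z w)
          fun p q => hR.map_add₂ x p q z w) (∑ i, E.repr Z i • E i) := by rw [E.sum_repr]; rfl
      _ = ∑ i, (AddMonoidHom.mk' (fun y => R x y z w)
          fun p q => hR.map_add₂ x p q z w) (E.repr Z i • E i) := map_sum _ _ _
      _ = ∑ i, conj (E.repr Z i) * R x (E i) z w :=
          Finset.sum_congr rfl fun i _ => hR.map_smul₂ _ _ _ _ _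
  have h3 : ∀ x y w, R x y Z w = ∑ c, E.repr Z c * R x y (E c) w := by
    intro x y w
    calc R x y Z w = (AddMonoidHom.mk' (fun z => R x y z w)
          fun p q => hR.map_add₃ x y p q w) (∑ i, E.repr Z i • E i) := by rw [E.sum_repr]; rfl
      _ = ∑ i, (AddMonoidHom.mk' (fun z => R x y z w)
          fun p q => hR.map_add₃ x y p q w) (E.repr Z i • E i) := map_sum _ _ _
      _ = ∑ i, E.repr Z i * R x y (E i) w :=
          Finset.sum_congr rfl fun i _ => hR.map_smul₃ _ _ _ _ _
  have h4 : ∀ x y z, R x y z Z = ∑ d, conj (E.repr Z d) * R x y z (E d) := by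
    intro x y z
    calc R x y z Z = (AddMonoidHom.mk' (fun w => R x y z w)
          fun p q => hR.map_add₄ x y z p q) (∑ i, E.repr Z i • E i) := by rw [E.sum_repr]; rfl
      _ = ∑ i, (AddMonoidHom.mk' (fun w => R x y z w)
          fun p q => hR.map_add₄ x y z p q) (E.repr Z i • E i) := map_sum _ _ _
      _ = ∑ i, conj (E.repr Z i) * R x y z (E i) :=
          Finset.sum_congr rfl fun i _ => hR.map_smul₄ _ _ _ _ _
  rw [h1]
  refine Finset.sum_congr rfl fun a _ => ?_
  rw [h2, Finset.mul_sum]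
  refine Finset.sum_congr rfl fun b _ => ?_
  rw [h3, Finset.mul_sum, Finset.mul_sum]
  refine Finset.sum_congr rfl fun c _ => ?_
  rw [h4, Finset.mul_sum, Finset.mul_sum, Finset.mul_sum]
  refine Finset.sum_congr rfl fun d _ => ?_
  simp only [mono]
  ring

end Meas2

end AHSC
end AuxAHSC

/-- **Sphere average of the holomorphic sectional curvature.** Let `V` be a
`k`-dimensional complex inner product space (`k ≥ 1`) with orthonormal basis
`E`, let `R` be a Kähler curvature-type tensor on `V`, and let `σ` be the
rotation-invariant probability measure on the unit sphere of `V`. Then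
`∫ R(Z,Z̄,Z,Z̄) dσ(Z) = (2/(k(k+1))) · Σ_{i,j} R(E_i,Ē_i,E_j,Ē_j)`. -/


theorem average_holomorphic_sectional_curvature
    {V : Type*} [NormedAddCommGroup V] [InnerProductSpace ℂ V]
    [MeasurableSpace V] [BorelSpace V]
    (k : ℕ) (hk : 1 ≤ k) (E : OrthonormalBasis (Fin k) ℂ V)
    (R : V → V → V → V → ℂ) (hR : IsKahlerCurvatureTensor R)
    (σ : Measure V) [IsProbabilityMeasure σ]
    (hsupp : σ (Metric.sphere (0 : V) 1)ᶜ = 0)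
    (hinv : ∀ f : V ≃ₗᵢ[ℂ] V, Measure.map f σ = σ) :
    ∫ Z, R Z Z Z Z ∂σ =
      (2 / (k * (k + 1)) : ℂ) * ∑ i : Fin k, ∑ j : Fin k,
        R (E i) (E i) (E j) (E j) := by
  classical
  open AHSC in
  set a0 : Fin k := ⟨0, hk⟩ with ha0
  set J : ℂ := Mint E σ a0 a0 a0 a0 / 2 with hJ
  have hdiag : ∀ a, Mint E σ a a a a = 2 * J := by
    intro a
    have h := Mint_perm E σ hinv (Equiv.swap a0 a) a0 a0 a0 a0
    rw [Equiv.swap_apply_left] at h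
    rw [← h, hJ]
    ring
  have hoff : ∀ a c, a ≠ c → Mint E σ a a c c = J := by
    intro a c hac
    have hca : ¬ c = a := fun h => hac h.symm
    rw [Mint_rot E σ hinv hsupp a c hac, hdiag a, hdiag c,
      Mint_vanish E σ hinv a c a c a (by split_ifs <;> simp_all),
      Mint_vanish E σ hinv c a c a a (by split_ifs <;> simp_all)]
    ring
  have hM : ∀ a b c d, Mint E σ a b c d =
      (if b = a ∧ d = c then J else 0) + (if b = c ∧ d = a then J else 0) := by
    intro a b c d
    by_cases h1 : b = a ∧ d = c
    · obtain ⟨hb, hd⟩ := h1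
      subst hb; subst hd
      by_cases h2 : b = d
      · subst h2
        rw [hdiag b]
        simp
        ring
      · have hdb : ¬ d = b := fun h => h2 h.symm
        rw [hoff b d h2]
        simp [h2, hdb]
    · by_cases h2 : b = c ∧ d = a
      · obtain ⟨hb, hd⟩ := h2
        subst hb; subst hd
        have hac : d ≠ b := by
          rintro rfl; exact h1 ⟨rfl, rfl⟩
        have hca : ¬ b = d := fun h => hac h.symm
        rw [Mint_swap, hoff d b hac]
        simp [hac, hca]
      · have h0 : Mint E σ a b c d = 0 := by
          by_cases hba : b = a
          · have hdc : ¬ d = c := fun h => h1 ⟨hba, h⟩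
            have hcd : ¬ c = d := fun h => hdc h.symm
            exact Mint_vanish E σ hinv a b c d d (by split_ifs <;> simp_all)
          · by_cases hda : d = a
            · have hbc : ¬ b = c := fun h => h2 ⟨h, hda⟩
              have hab : ¬ a = b := fun h => hba h.symm
              have hcb : ¬ c = b := fun h => hbc h.symm
              have hdb : ¬ d = b := fun h => hab (hda ▸ h : a = b)
              exact Mint_vanish E σ hinv a b c d b (by split_ifs <;> simp_all)
            · have hab : ¬ a = b := fun h => hba h.symm
              exact Mint_vanish E σ hinv a b c d a (by split_ifs <;> simp_all)
        rw [h0, if_neg h1, if_neg h2]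
        ring
  have hnorm := Mint_sum_one E σ hsupp
  have hsum : ∑ a : Fin k, ∑ c : Fin k, Mint E σ a a c c = (k : ℂ) * ((k:ℂ)+1) * J := by
    have hval : ∀ a c : Fin k, Mint E σ a a c c = J + (if c = a then J else 0) := by
      intro a c
      by_cases h : c = a
      · subst h
        rw [hdiag c]
        simp
        ring
      · rw [hoff a c (fun h' => h h'.symm)]
        simp [h]
    simp only [hval, Finset.sum_add_distrib, Finset.sum_const, Finset.card_univ,
      Fintype.card_fin, Finset.sum_ite_eq', Finset.mem_univ, if_true, nsmul_eq_mul]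
    ring
  have hJval : (k:ℂ) * ((k:ℂ)+1) * J = 1 := by rw [← hsum]; exact hnorm
  have hk0 : (k:ℂ) ≠ 0 := Nat.cast_ne_zero.mpr (by omega)
  have hk1 : (k:ℂ) + 1 ≠ 0 := by
    intro h
    have : ((k+1 : ℕ) : ℂ) = 0 := by push_cast; linear_combination h
    exact (Nat.cast_ne_zero.mpr (by omega)) this
  have h2J : 2 * J = 2 / ((k:ℂ) * ((k:ℂ)+1)) := by
    rw [eq_div_iff (mul_ne_zero hk0 hk1)]
    linear_combination 2 * hJval
  have Iint : ∀ a b c d : Fin k,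
      Integrable (fun Z => mono a b c d (E.repr Z) * R (E a) (E b) (E c) (E d)) σ :=
    fun a b c d => (mono_integrable E σ hsupp a b c d).mul_const _
  calc ∫ Z, R Z Z Z Z ∂σ
      = ∫ Z, ∑ a, ∑ b, ∑ c, ∑ d,
          mono a b c d (E.repr Z) * R (E a) (E b) (E c) (E d) ∂σ :=
        integral_congr_ae (Filter.Eventually.of_forall fun Z => expand E R hR Z)
    _ = ∑ a, ∑ b, ∑ c, ∑ d, Mint E σ a b c d * R (E a) (E b) (E c) (E d) := by
        rw [integral_finset_sum _ (fun a _ => integrable_finset_sum _ fun b _ =>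
          integrable_finset_sum _ fun c _ => integrable_finset_sum _ fun d _ => Iint a b c d)]
        refine Finset.sum_congr rfl fun a _ => ?_
        rw [integral_finset_sum _ (fun b _ => integrable_finset_sum _ fun c _ =>
          integrable_finset_sum _ fun d _ => Iint a b c d)]
        refine Finset.sum_congr rfl fun b _ => ?_
        rw [integral_finset_sum _ (fun c _ => integrable_finset_sum _ fun d _ => Iint a b c d)]
        refine Finset.sum_congr rfl fun c _ => ?_
        rw [integral_finset_sum _ (fun d _ => Iint a b c d)]
        refine Finset.sum_congr rfl fun d _ => ?_
        exact integral_mul_const _ _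
    _ = ∑ a, ∑ c, (J * R (E a) (E a) (E c) (E c) + J * R (E a) (E c) (E c) (E a)) := by
        simp only [hM, add_mul, ite_mul, zero_mul, Finset.sum_add_distrib, ite_and,
          Finset.sum_ite_irrel, Finset.sum_const_zero, Finset.sum_ite_eq, Finset.sum_ite_eq',
          Finset.mem_univ, if_true]
    _ = ∑ a, ∑ c, (2 * J) * R (E a) (E a) (E c) (E c) := by
        refine Finset.sum_congr rfl fun a _ => Finset.sum_congr rfl fun c _ => ?_
        rw [← hR.symm₂₄ (E a) (E a) (E c) (E c)]
        ring
    _ = (2 / (k * (k + 1)) : ℂ) * ∑ i : Fin k, ∑ j : Fin k, R (E i) (E i) (E j) (E j) := by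
        rw [Finset.mul_sum]
        refine Finset.sum_congr rfl fun a _ => ?_
        rw [Finset.mul_sum]
        refine Finset.sum_congr rfl fun c _ => ?_
        rw [← h2J]
end

section
/- Let V be a finite-dimensional complex inner product space of dimension n, let R be a Kähler curvature-type tensor on V, and define Ric(Z,Z̄) = Σ_{i=1}^n R(Z,Z̄,F_i,F̄_i) for an orthonormal basis (F_1,…,F_n) of V. Let Σ ⊆ V be a complex k-dimensional subspace (1 ≤ k ≤ n) with orthonormal basis (E_1,…,E_k), let σ denote the rotation-invariant probability measure on the unit sphere of Σ, and set S_k(Σ) = Σ_{i,j=1}^k R(E_i,Ē_i,E_j,Ē_j). Then k · ∫_{unit sphere of Σ} [Ric(Z,Z̄) + R(Z,Z̄,Z,Z̄)] dσ(Z) = Σ_{j=1}^k Ric(E_j,Ē_j) + (2/(k+1)) · S_k(Σ). -/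
open MeasureTheory

open Complex

set_option linter.unusedSectionVars false
set_option linter.unreachableTactic false
set_option linter.unusedTactic false
set_option linter.unnecessarySeqFocus false
set_option maxHeartbeats 1000000

namespace IsKahlerCurvatureTensor

variable {V : Type*} [AddCommGroup V] [Module ℂ V] {R : V → V → V → V → ℂ}
  (hR : IsKahlerCurvatureTensor R)

include hR

lemma zero₁ (y z w : V) : R 0 y z w = 0 := by
  have := hR.map_smul₁ 0 0 y z w; simpa using this

lemma zero₂ (x z w : V) : R x 0 z w = 0 := by
  have := hR.map_smul₂ 0 x 0 z w; simpa using this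

lemma zero₃ (x y w : V) : R x y 0 w = 0 := by
  have := hR.map_smul₃ 0 x y 0 w; simpa using this

lemma zero₄ (x y z : V) : R x y z 0 = 0 := by
  have := hR.map_smul₄ 0 x y z 0; simpa using this

lemma sum₁ {ι : Type*} (s : Finset ι) (f : ι → ℂ) (v : ι → V) (y z w : V) :
    R (∑ i ∈ s, f i • v i) y z w = ∑ i ∈ s, f i * R (v i) y z w := by
  classical
  induction s using Finset.induction with
  | empty => simpa using hR.zero₁ y z w
  | insert _ _ h ih =>
      rw [Finset.sum_insert h, hR.map_add₁, hR.map_smul₁, ih, Finset.sum_insert h]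

lemma sum₂ {ι : Type*} (s : Finset ι) (f : ι → ℂ) (v : ι → V) (x z w : V) :
    R x (∑ i ∈ s, f i • v i) z w = ∑ i ∈ s, starRingEnd ℂ (f i) * R x (v i) z w := by
  classical
  induction s using Finset.induction with
  | empty => simpa using hR.zero₂ x z w
  | insert _ _ h ih =>
      rw [Finset.sum_insert h, hR.map_add₂, hR.map_smul₂, ih, Finset.sum_insert h]

lemma sum₃ {ι : Type*} (s : Finset ι) (f : ι → ℂ) (v : ι → V) (x y w : V) :
    R x y (∑ i ∈ s, f i • v i) w = ∑ i ∈ s, f i * R x y (v i) w := by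
  classical
  induction s using Finset.induction with
  | empty => simpa using hR.zero₃ x y w
  | insert _ _ h ih =>
      rw [Finset.sum_insert h, hR.map_add₃, hR.map_smul₃, ih, Finset.sum_insert h]

lemma sum₄ {ι : Type*} (s : Finset ι) (f : ι → ℂ) (v : ι → V) (x y z : V) :
    R x y z (∑ i ∈ s, f i • v i) = ∑ i ∈ s, starRingEnd ℂ (f i) * R x y z (v i) := by
  classical
  induction s using Finset.induction with
  | empty => simpa using hR.zero₄ x y z
  | insert _ _ h ih =>
      rw [Finset.sum_insert h, hR.map_add₄, hR.map_smul₄, ih, Finset.sum_insert h]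

/-- Expansion of `R` in the first two slots. -/
lemma expand2 {ι : Type*} [Fintype ι] (f g : ι → ℂ) (v : ι → V) (z w : V) :
    R (∑ i, f i • v i) (∑ j, g j • v j) z w
      = ∑ a : ι, ∑ b : ι, f a * starRingEnd ℂ (g b) * R (v a) (v b) z w := by
  rw [hR.sum₁]
  refine Finset.sum_congr rfl fun a _ => ?_
  rw [hR.sum₂, Finset.mul_sum]
  exact Finset.sum_congr rfl fun b _ => by ring

/-- Expansion of `R` in all four slots. -/
lemma expand4 {ι : Type*} [Fintype ι] (f g p q : ι → ℂ) (v : ι → V) :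
    R (∑ i, f i • v i) (∑ j, g j • v j) (∑ i, p i • v i) (∑ j, q j • v j)
      = ∑ a : ι, ∑ b : ι, ∑ c : ι, ∑ d : ι,
          f a * starRingEnd ℂ (g b) * (p c * starRingEnd ℂ (q d))
            * R (v a) (v b) (v c) (v d) := by
  rw [hR.expand2]
  refine Finset.sum_congr rfl fun a _ => Finset.sum_congr rfl fun b _ => ?_
  rw [hR.sum₃, Finset.mul_sum]
  simp only [hR.sum₄, Finset.mul_sum]
  exact Finset.sum_congr rfl fun c _ => Finset.sum_congr rfl fun d _ => by ring

end IsKahlerCurvatureTensor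

set_option linter.unusedSectionVars false
set_option maxHeartbeats 1000000

noncomputable section

open Complex

variable {k : ℕ}

lemma sqrt2C_mul_self : ((Real.sqrt 2 : ℝ) : ℂ) * ((Real.sqrt 2 : ℝ) : ℂ) = 2 := by
  rw [← Complex.ofReal_mul, Real.mul_self_sqrt (by norm_num : (0:ℝ) ≤ 2)]
  norm_num

lemma sqrt2C_ne_zero : ((Real.sqrt 2 : ℝ) : ℂ) ≠ 0 := by
  intro h
  have := sqrt2C_mul_self
  rw [h, zero_mul] at this
  norm_num at this

lemma rot_helper1 (x y : ℂ) :
    ((x + y) / ((Real.sqrt 2 : ℝ) : ℂ) + (x - y) / ((Real.sqrt 2 : ℝ) : ℂ))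
      / ((Real.sqrt 2 : ℝ) : ℂ) = x := by
  rw [← add_div, div_div, sqrt2C_mul_self]
  ring

lemma rot_helper2 (x y : ℂ) :
    ((x + y) / ((Real.sqrt 2 : ℝ) : ℂ) - (x - y) / ((Real.sqrt 2 : ℝ) : ℂ))
      / ((Real.sqrt 2 : ℝ) : ℂ) = y := by
  rw [div_sub_div_same, div_div, sqrt2C_mul_self]
  ring

/-- The unitary on `EuclideanSpace ℂ (Fin k)` multiplying the `e`-th coordinate by `I`. -/
def phaseAt (e : Fin k) : EuclideanSpace ℂ (Fin k) ≃ₗᵢ[ℂ] EuclideanSpace ℂ (Fin k) where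
  toFun z := WithLp.toLp 2 fun i => (if i = e then I else 1) * z i
  invFun z := WithLp.toLp 2 fun i => (if i = e then -I else 1) * z i
  map_add' x y := by ext i; simp [mul_add]
  map_smul' c x := by
    ext i
    simp only [PiLp.smul_apply, PiLp.toLp_apply, smul_eq_mul, RingHom.id_apply]
    ring
  left_inv z := by
    ext i
    simp only [← mul_assoc]
    by_cases h : i = e <;> simp [h]
  right_inv z := by
    ext i
    simp only [← mul_assoc]
    by_cases h : i = e <;> simp [h]
  norm_map' z := by
    simp only [EuclideanSpace.norm_eq, LinearEquiv.coe_mk]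
    congr 1
    refine Finset.sum_congr rfl fun i _ => ?_
    by_cases h : i = e <;> simp [h]

@[simp] lemma phaseAt_apply (e : Fin k) (z : EuclideanSpace ℂ (Fin k)) (i : Fin k) :
    phaseAt e z i = (if i = e then I else 1) * z i := rfl

/-- The rotation by 45 degrees in the `(a,b)`-coordinate plane. -/
def rotAt (a b : Fin k) (hab : a ≠ b) :
    EuclideanSpace ℂ (Fin k) ≃ₗᵢ[ℂ] EuclideanSpace ℂ (Fin k) where
  toFun z := WithLp.toLp 2 fun i =>
    if i = a then (z a + z b) / (Real.sqrt 2 : ℂ)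
    else if i = b then (z a - z b) / (Real.sqrt 2 : ℂ) else z i
  invFun z := WithLp.toLp 2 fun i =>
    if i = a then (z a + z b) / (Real.sqrt 2 : ℂ)
    else if i = b then (z a - z b) / (Real.sqrt 2 : ℂ) else z i
  map_add' x y := by
    ext i
    by_cases hia : i = a
    · simp only [hia, eq_self_iff_true, if_true, PiLp.add_apply, PiLp.toLp_apply]
      ring
    · by_cases hib : i = b
      · simp only [hia, hib, if_neg (Ne.symm hab), eq_self_iff_true, if_true, if_neg hab,
          PiLp.add_apply, PiLp.toLp_apply, if_false]
        ring
      · simp [hia, hib]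
  map_smul' c x := by
    ext i
    by_cases hia : i = a
    · simp only [hia, eq_self_iff_true, if_true, PiLp.smul_apply, PiLp.toLp_apply, smul_eq_mul, RingHom.id_apply]
      ring
    · by_cases hib : i = b
      · simp only [hia, hib, if_neg (Ne.symm hab), eq_self_iff_true, if_true, if_neg hab,
          PiLp.smul_apply, PiLp.toLp_apply, smul_eq_mul, RingHom.id_apply, if_false]
        ring
      · simp [hia, hib]
  left_inv z := by
    ext i
    by_cases hia : i = a
    · subst hia
      simp only [LinearMap.coe_mk, AddHom.coe_mk, PiLp.toLp_apply, eq_self_iff_true, if_true, if_neg hab,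
        if_neg (Ne.symm hab)]
      exact rot_helper1 _ _
    · by_cases hib : i = b
      · subst hib
        simp only [PiLp.toLp_apply, hia, if_neg (Ne.symm hab), eq_self_iff_true, if_true, if_neg hab,
          if_false]
        exact rot_helper2 _ _
      · simp [hia, hib]
  right_inv z := by
    ext i
    by_cases hia : i = a
    · subst hia
      simp only [LinearMap.coe_mk, AddHom.coe_mk, PiLp.toLp_apply, eq_self_iff_true, if_true, if_neg hab,
        if_neg (Ne.symm hab)]
      exact rot_helper1 _ _
    · by_cases hib : i = b
      · subst hib
        simp only [PiLp.toLp_apply, hia, if_neg (Ne.symm hab), eq_self_iff_true, if_true, if_neg hab,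
          if_false]
        exact rot_helper2 _ _
      · simp [hia, hib]
  norm_map' z := by
    have hs : ∀ x : ℂ, ‖x / ((Real.sqrt 2 : ℝ) : ℂ)‖ ^ 2 = ‖x‖ ^ 2 / 2 := by
      intro x
      rw [norm_div]
      have h1 : ‖((Real.sqrt 2 : ℝ) : ℂ)‖ = Real.sqrt 2 := by
        rw [Complex.norm_real, Real.norm_eq_abs, _root_.abs_of_nonneg (Real.sqrt_nonneg 2)]
      rw [h1, div_pow, Real.sq_sqrt (by norm_num : (0:ℝ) ≤ 2)]
    simp only [EuclideanSpace.norm_eq, LinearEquiv.coe_mk]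
    congr 1
    have hmem : ({a, b} : Finset (Fin k)) ⊆ Finset.univ := Finset.subset_univ _
    rw [← Finset.sum_sdiff hmem, ← Finset.sum_sdiff hmem]
    congr 1
    · refine Finset.sum_congr rfl fun i hi => ?_
      simp only [Finset.mem_sdiff, Finset.mem_insert, Finset.mem_singleton] at hi
      push_neg at hi
      simp [hi.2.1, hi.2.2]
    · rw [Finset.sum_pair hab, Finset.sum_pair hab]
      simp only [LinearMap.coe_mk, AddHom.coe_mk, PiLp.toLp_apply, eq_self_iff_true, if_true, if_neg hab,
        if_neg (Ne.symm hab)]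
      rw [hs, hs]
      have h := parallelogram_law_with_norm ℂ (z a) (z b)
      have h2 : ‖z a + z b‖ ^ 2 + ‖z a - z b‖ ^ 2 = 2 * (‖z a‖ ^ 2 + ‖z b‖ ^ 2) := by
        simp only [pow_two]
        linarith
      linarith

@[simp] lemma rotAt_apply (a b : Fin k) (hab : a ≠ b) (z : EuclideanSpace ℂ (Fin k)) (i : Fin k) :
    rotAt a b hab z i =
      if i = a then (z a + z b) / (Real.sqrt 2 : ℂ)
      else if i = b then (z a - z b) / (Real.sqrt 2 : ℂ) else z i := rfl

end
open MeasureTheory Complex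

noncomputable section Moments

variable {K : Type*} [NormedAddCommGroup K] [InnerProductSpace ℂ K]
  [MeasurableSpace K] [BorelSpace K]
  {k : ℕ} (E : OrthonormalBasis (Fin k) ℂ K)
  (σ : Measure K) [IsProbabilityMeasure σ]

lemma ae_norm_one (hsupp : σ (Metric.sphere (0 : K) 1)ᶜ = 0) :
    ∀ᵐ Z ∂σ, ‖Z‖ = 1 := by
  have h : ∀ᵐ Z ∂σ, Z ∈ Metric.sphere (0 : K) 1 := mem_ae_iff.2 hsupp
  filter_upwards [h] with Z hZ
  simpa [mem_sphere_zero_iff_norm] using hZ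

lemma cont_coord (a : Fin k) : Continuous fun Z : K => E.repr Z a := by
  simp only [E.repr_apply_apply]
  exact Continuous.inner continuous_const continuous_id

lemma coord_bound (a : Fin k) (Z : K) (h : ‖Z‖ = 1) : ‖E.repr Z a‖ ≤ 1 := by
  rw [E.repr_apply_apply]
  calc ‖(inner ℂ (E a) Z : ℂ)‖ ≤ ‖E a‖ * ‖Z‖ := norm_inner_le_norm _ _
  _ = 1 := by rw [h, E.orthonormal.1 a]; norm_num

lemma integrable_of_cont_bdd (hsupp : σ (Metric.sphere (0 : K) 1)ᶜ = 0)
    {f : K → ℂ} (hf : Continuous f) {C : ℝ}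
    (hb : ∀ Z : K, ‖Z‖ = 1 → ‖f Z‖ ≤ C) : Integrable f σ := by
  refine (integrable_const C).mono' hf.aestronglyMeasurable ?_
  filter_upwards [ae_norm_one σ hsupp] with Z hZ
  exact hb Z hZ

lemma integral_comp_isometry (hinv : ∀ f : K ≃ₗᵢ[ℂ] K, Measure.map f σ = σ)
    (U : K ≃ₗᵢ[ℂ] K) {f : K → ℂ} (hf : Continuous f) :
    ∫ Z, f (U Z) ∂σ = ∫ Z, f Z ∂σ := by
  conv_rhs => rw [← hinv U]
  rw [integral_map U.continuous.aemeasurable]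
  have h := hf.aestronglyMeasurable (μ := σ)
  rw [← hinv U] at h
  exact h

/-- conjugating a unitary of `EuclideanSpace` by the basis representation. -/
def basisConj (W : EuclideanSpace ℂ (Fin k) ≃ₗᵢ[ℂ] EuclideanSpace ℂ (Fin k)) :
    K ≃ₗᵢ[ℂ] K := (E.repr.trans W).trans E.repr.symm

lemma repr_basisConj (W : EuclideanSpace ℂ (Fin k) ≃ₗᵢ[ℂ] EuclideanSpace ℂ (Fin k))
    (Z : K) : E.repr (basisConj E W Z) = W (E.repr Z) := by
  simp [basisConj]

/-- second moment -/
def m2 (a b : Fin k) : ℂ :=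
  ∫ Z, E.repr Z a * starRingEnd ℂ (E.repr Z b) ∂σ

/-- fourth moment -/
def m4 (a b c d : Fin k) : ℂ :=
  ∫ Z, E.repr Z a * starRingEnd ℂ (E.repr Z b)
      * (E.repr Z c * starRingEnd ℂ (E.repr Z d)) ∂σ

lemma cont_m2int (a b : Fin k) :
    Continuous fun Z : K => E.repr Z a * starRingEnd ℂ (E.repr Z b) :=
  (cont_coord E a).mul ((cont_coord E b).star)

lemma cont_m4int (a b c d : Fin k) :
    Continuous fun Z : K => E.repr Z a * starRingEnd ℂ (E.repr Z b)
      * (E.repr Z c * starRingEnd ℂ (E.repr Z d)) :=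
  (cont_m2int E a b).mul (cont_m2int E c d)

lemma bdd_m2int (a b : Fin k) (Z : K) (h : ‖Z‖ = 1) :
    ‖E.repr Z a * starRingEnd ℂ (E.repr Z b)‖ ≤ 1 := by
  rw [norm_mul, RingHomIsometric.norm_map]
  exact mul_le_one₀ (coord_bound E a Z h) (norm_nonneg _) (coord_bound E b Z h)

lemma bdd_m4int (a b c d : Fin k) (Z : K) (h : ‖Z‖ = 1) :
    ‖E.repr Z a * starRingEnd ℂ (E.repr Z b)
      * (E.repr Z c * starRingEnd ℂ (E.repr Z d))‖ ≤ 1 := by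
  rw [norm_mul]
  exact mul_le_one₀ (bdd_m2int E a b Z h) (norm_nonneg _) (bdd_m2int E c d Z h)

lemma integrable_m2int (hsupp : σ (Metric.sphere (0 : K) 1)ᶜ = 0) (a b : Fin k) :
    Integrable (fun Z : K => E.repr Z a * starRingEnd ℂ (E.repr Z b)) σ :=
  integrable_of_cont_bdd σ hsupp (cont_m2int E a b) (bdd_m2int E a b)

lemma integrable_m4int (hsupp : σ (Metric.sphere (0 : K) 1)ᶜ = 0) (a b c d : Fin k) :
    Integrable (fun Z : K => E.repr Z a * starRingEnd ℂ (E.repr Z b)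
      * (E.repr Z c * starRingEnd ℂ (E.repr Z d))) σ :=
  integrable_of_cont_bdd σ hsupp (cont_m4int E a b c d) (bdd_m4int E a b c d)



variable {K : Type*} [NormedAddCommGroup K] [InnerProductSpace ℂ K]
  [MeasurableSpace K] [BorelSpace K]
  {k : ℕ} (E : OrthonormalBasis (Fin k) ℂ K)
  (σ : Measure K) [IsProbabilityMeasure σ]

lemma m2_phase (hinv : ∀ f : K ≃ₗᵢ[ℂ] K, Measure.map f σ = σ) (e a b : Fin k) :
    m2 E σ a b = (if a = e then I else 1) * starRingEnd ℂ (if b = e then I else 1)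
      * m2 E σ a b := by
  set U := basisConj E (phaseAt e) with hU
  have hpt : ∀ Z : K, E.repr (U Z) a * starRingEnd ℂ (E.repr (U Z) b)
      = (if a = e then I else 1) * starRingEnd ℂ (if b = e then I else 1)
        * (E.repr Z a * starRingEnd ℂ (E.repr Z b)) := by
    intro Z
    rw [hU, repr_basisConj]
    simp only [phaseAt_apply, map_mul]
    ring
  calc m2 E σ a b
      = ∫ Z, E.repr (U Z) a * starRingEnd ℂ (E.repr (U Z) b) ∂σ :=
        (integral_comp_isometry σ hinv U (cont_m2int E a b)).symm
    _ = ∫ Z, (if a = e then I else 1) * starRingEnd ℂ (if b = e then I else 1)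
          * (E.repr Z a * starRingEnd ℂ (E.repr Z b)) ∂σ :=
        integral_congr_ae (Filter.Eventually.of_forall hpt)
    _ = _ := integral_const_mul _ _

lemma m4_phase (hinv : ∀ f : K ≃ₗᵢ[ℂ] K, Measure.map f σ = σ) (e a b c d : Fin k) :
    m4 E σ a b c d = (if a = e then I else 1) * starRingEnd ℂ (if b = e then I else 1)
      * ((if c = e then I else 1) * starRingEnd ℂ (if d = e then I else 1))
      * m4 E σ a b c d := by
  set U := basisConj E (phaseAt e) with hU
  have hpt : ∀ Z : K, E.repr (U Z) a * starRingEnd ℂ (E.repr (U Z) b)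
        * (E.repr (U Z) c * starRingEnd ℂ (E.repr (U Z) d))
      = (if a = e then I else 1) * starRingEnd ℂ (if b = e then I else 1)
        * ((if c = e then I else 1) * starRingEnd ℂ (if d = e then I else 1))
        * (E.repr Z a * starRingEnd ℂ (E.repr Z b)
            * (E.repr Z c * starRingEnd ℂ (E.repr Z d))) := by
    intro Z
    rw [hU, repr_basisConj]
    simp only [phaseAt_apply, map_mul]
    ring
  calc m4 E σ a b c d
      = ∫ Z, E.repr (U Z) a * starRingEnd ℂ (E.repr (U Z) b)
          * (E.repr (U Z) c * starRingEnd ℂ (E.repr (U Z) d)) ∂σ :=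
        (integral_comp_isometry σ hinv U (cont_m4int E a b c d)).symm
    _ = ∫ Z, (if a = e then I else 1) * starRingEnd ℂ (if b = e then I else 1)
          * ((if c = e then I else 1) * starRingEnd ℂ (if d = e then I else 1))
          * (E.repr Z a * starRingEnd ℂ (E.repr Z b)
              * (E.repr Z c * starRingEnd ℂ (E.repr Z d))) ∂σ :=
        integral_congr_ae (Filter.Eventually.of_forall hpt)
    _ = _ := integral_const_mul _ _

lemma m2_offdiag (hinv : ∀ f : K ≃ₗᵢ[ℂ] K, Measure.map f σ = σ) {a b : Fin k}
    (hab : a ≠ b) : m2 E σ a b = 0 := by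
  have h := m2_phase E σ hinv a a b
  rw [if_pos rfl, if_neg (fun hc : b = a => hab hc.symm)] at h
  simp only [map_one, mul_one] at h
  have h0 : (1 - I) * m2 E σ a b = 0 := by linear_combination h
  rcases mul_eq_zero.1 h0 with h1 | h1
  · exfalso
    have : I = 1 := (sub_eq_zero.1 h1).symm
    have him := congrArg Complex.im this
    simp at him
  · exact h1

lemma m4_vanish (hinv : ∀ f : K ≃ₗᵢ[ℂ] K, Measure.map f σ = σ) {a b c d : Fin k}
    (h1 : ¬(a = b ∧ c = d)) (h2 : ¬(a = d ∧ b = c)) : m4 E σ a b c d = 0 := by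
  obtain ⟨e, he⟩ : ∃ e : Fin k,
      (if a = e then I else 1) * starRingEnd ℂ (if b = e then I else 1)
        * ((if c = e then I else 1) * starRingEnd ℂ (if d = e then I else 1)) ≠ 1 := by
    by_cases hab : a = b
    · have hcd : c ≠ d := fun h => h1 ⟨hab, h⟩
      refine ⟨c, ?_⟩
      subst hab
      have hdc : ¬ d = c := fun h => hcd h.symm
      by_cases hac : a = c <;>
        simp [hac, hdc, Complex.conj_I, Complex.ext_iff] <;> norm_num
    · by_cases had : a = d
      · have hbc : b ≠ c := fun h => h2 ⟨had, h⟩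
        refine ⟨b, ?_⟩
        subst had
        have hcb : ¬ c = b := fun h => hbc h.symm
        have hab' : ¬ a = b := hab
        simp [hab', hcb, Complex.conj_I, Complex.ext_iff]
      · refine ⟨a, ?_⟩
        have hba : ¬ b = a := fun h => hab h.symm
        have hda : ¬ d = a := fun h => had h.symm
        by_cases hca : c = a <;>
          simp [hba, hda, hca, Complex.conj_I, Complex.ext_iff] <;> norm_num
  have h := m4_phase E σ hinv e a b c d
  have h0 : (1 - ((if a = e then I else 1) * starRingEnd ℂ (if b = e then I else 1)
      * ((if c = e then I else 1) * starRingEnd ℂ (if d = e then I else 1))))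
      * m4 E σ a b c d = 0 := by linear_combination h
  rcases mul_eq_zero.1 h0 with h3 | h3
  · exact absurd (sub_eq_zero.1 h3).symm he
  · exact h3

lemma m4_perm (x y : Fin k) : m4 E σ x y y x = m4 E σ x x y y :=
  integral_congr_ae (Filter.Eventually.of_forall fun Z => by ring)

lemma m4_swap (x y : Fin k) : m4 E σ x x y y = m4 E σ y y x x :=
  integral_congr_ae (Filter.Eventually.of_forall fun Z => by ring)

lemma exp2_aux (x y : ℂ) :
    (x + y) / ((Real.sqrt 2 : ℝ) : ℂ) * starRingEnd ℂ ((x + y) / ((Real.sqrt 2 : ℝ) : ℂ))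
      = (2:ℂ)⁻¹ * (x * starRingEnd ℂ x + x * starRingEnd ℂ y
          + y * starRingEnd ℂ x + y * starRingEnd ℂ y) := by
  have hc : starRingEnd ℂ ((x + y) / ((Real.sqrt 2 : ℝ) : ℂ))
      = (starRingEnd ℂ x + starRingEnd ℂ y) / ((Real.sqrt 2 : ℝ) : ℂ) := by
    rw [map_div₀, map_add, Complex.conj_ofReal]
  rw [hc, div_mul_div_comm, sqrt2C_mul_self]
  ring

lemma integral_add4 {f1 f2 f3 f4 : K → ℂ} (h1 : Integrable f1 σ) (h2 : Integrable f2 σ)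
    (h3 : Integrable f3 σ) (h4 : Integrable f4 σ) :
    ∫ Z, (f1 Z + f2 Z + f3 Z + f4 Z) ∂σ
      = (∫ Z, f1 Z ∂σ) + (∫ Z, f2 Z ∂σ) + (∫ Z, f3 Z ∂σ) + (∫ Z, f4 Z ∂σ) := by
  calc ∫ Z, (f1 Z + f2 Z + f3 Z + f4 Z) ∂σ
      = (∫ Z, (f1 Z + f2 Z + f3 Z) ∂σ) + ∫ Z, f4 Z ∂σ :=
        integral_add ((h1.add h2).add h3) h4
    _ = ((∫ Z, (f1 Z + f2 Z) ∂σ) + ∫ Z, f3 Z ∂σ) + ∫ Z, f4 Z ∂σ := by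
        congr 1
        exact integral_add (h1.add h2) h3
    _ = _ := by
        congr 2
        exact integral_add h1 h2

lemma m2_rot (hsupp : σ (Metric.sphere (0 : K) 1)ᶜ = 0)
    (hinv : ∀ f : K ≃ₗᵢ[ℂ] K, Measure.map f σ = σ) {a b : Fin k} (hab : a ≠ b) :
    m2 E σ a a = m2 E σ b b := by
  set U := basisConj E (rotAt a b hab) with hU
  have hpt : ∀ Z : K, E.repr (U Z) a * starRingEnd ℂ (E.repr (U Z) a)
      = (2:ℂ)⁻¹ * (E.repr Z a * starRingEnd ℂ (E.repr Z a)
          + E.repr Z a * starRingEnd ℂ (E.repr Z b)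
          + E.repr Z b * starRingEnd ℂ (E.repr Z a)
          + E.repr Z b * starRingEnd ℂ (E.repr Z b)) := by
    intro Z
    rw [hU, repr_basisConj]
    simp only [rotAt_apply, if_pos rfl]
    exact exp2_aux _ _
  have key : m2 E σ a a
      = (2:ℂ)⁻¹ * (m2 E σ a a + m2 E σ a b + m2 E σ b a + m2 E σ b b) := by
    calc m2 E σ a a
        = ∫ Z, E.repr (U Z) a * starRingEnd ℂ (E.repr (U Z) a) ∂σ :=
          (integral_comp_isometry σ hinv U (cont_m2int E a a)).symm
      _ = ∫ Z, (2:ℂ)⁻¹ * (E.repr Z a * starRingEnd ℂ (E.repr Z a)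
            + E.repr Z a * starRingEnd ℂ (E.repr Z b)
            + E.repr Z b * starRingEnd ℂ (E.repr Z a)
            + E.repr Z b * starRingEnd ℂ (E.repr Z b)) ∂σ :=
          integral_congr_ae (Filter.Eventually.of_forall hpt)
      _ = (2:ℂ)⁻¹ * ∫ Z, (E.repr Z a * starRingEnd ℂ (E.repr Z a)
            + E.repr Z a * starRingEnd ℂ (E.repr Z b)
            + E.repr Z b * starRingEnd ℂ (E.repr Z a)
            + E.repr Z b * starRingEnd ℂ (E.repr Z b)) ∂σ := integral_const_mul _ _
      _ = (2:ℂ)⁻¹ * (m2 E σ a a + m2 E σ a b + m2 E σ b a + m2 E σ b b) := by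
          rw [integral_add4 σ (integrable_m2int E σ hsupp a a) (integrable_m2int E σ hsupp a b)
            (integrable_m2int E σ hsupp b a) (integrable_m2int E σ hsupp b b)]
          rfl
  have hab0 : m2 E σ a b = 0 := m2_offdiag E σ hinv hab
  have hba0 : m2 E σ b a = 0 := m2_offdiag E σ hinv (Ne.symm hab)
  rw [hab0, hba0] at key
  linear_combination 2 * key


end Moments

noncomputable section Moments
variable {K : Type*} [NormedAddCommGroup K] [InnerProductSpace ℂ K]
  [MeasurableSpace K] [BorelSpace K]
  {k : ℕ} (E : OrthonormalBasis (Fin k) ℂ K)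
  (σ : Measure K) [IsProbabilityMeasure σ]
lemma exp4_aux (v : Fin 2 → ℂ) :
    (v 0 + v 1) / ((Real.sqrt 2 : ℝ) : ℂ)
        * starRingEnd ℂ ((v 0 + v 1) / ((Real.sqrt 2 : ℝ) : ℂ))
        * ((v 0 + v 1) / ((Real.sqrt 2 : ℝ) : ℂ)
        * starRingEnd ℂ ((v 0 + v 1) / ((Real.sqrt 2 : ℝ) : ℂ)))
      = (4:ℂ)⁻¹ * ∑ p1 : Fin 2, ∑ p2 : Fin 2, ∑ p3 : Fin 2, ∑ p4 : Fin 2,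
          v p1 * starRingEnd ℂ (v p2) * (v p3 * starRingEnd ℂ (v p4)) := by
  have hc : starRingEnd ℂ ((v 0 + v 1) / ((Real.sqrt 2 : ℝ) : ℂ))
      = (starRingEnd ℂ (v 0) + starRingEnd ℂ (v 1)) / ((Real.sqrt 2 : ℝ) : ℂ) := by
    rw [map_div₀, map_add, Complex.conj_ofReal]
  rw [hc, div_mul_div_comm, sqrt2C_mul_self]
  simp only [Fin.sum_univ_two]
  ring

lemma m4_rot (hsupp : σ (Metric.sphere (0 : K) 1)ᶜ = 0)
    (hinv : ∀ f : K ≃ₗᵢ[ℂ] K, Measure.map f σ = σ) {a b : Fin k} (hab : a ≠ b) :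
    m4 E σ a a a a
      = (4:ℂ)⁻¹ * (m4 E σ a a a a + m4 E σ b b b b + 4 * m4 E σ a a b b) := by
  set U := basisConj E (rotAt a b hab) with hU
  set p : Fin 2 → Fin k := ![a, b] with hp
  have hpt : ∀ Z : K, E.repr (U Z) a * starRingEnd ℂ (E.repr (U Z) a)
        * (E.repr (U Z) a * starRingEnd ℂ (E.repr (U Z) a))
      = (4:ℂ)⁻¹ * ∑ p1 : Fin 2, ∑ p2 : Fin 2, ∑ p3 : Fin 2, ∑ p4 : Fin 2,
          E.repr Z (p p1) * starRingEnd ℂ (E.repr Z (p p2))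
            * (E.repr Z (p p3) * starRingEnd ℂ (E.repr Z (p p4))) := by
    intro Z
    rw [hU, repr_basisConj]
    simp only [rotAt_apply, if_pos rfl]
    have h := exp4_aux (fun q => E.repr Z (p q))
    simpa [hp] using h
  have key : m4 E σ a a a a
      = (4:ℂ)⁻¹ * ∑ p1 : Fin 2, ∑ p2 : Fin 2, ∑ p3 : Fin 2, ∑ p4 : Fin 2,
          m4 E σ (p p1) (p p2) (p p3) (p p4) := by
    calc m4 E σ a a a a
        = ∫ Z, E.repr (U Z) a * starRingEnd ℂ (E.repr (U Z) a)
            * (E.repr (U Z) a * starRingEnd ℂ (E.repr (U Z) a)) ∂σ :=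
          (integral_comp_isometry σ hinv U (cont_m4int E a a a a)).symm
      _ = ∫ Z, (4:ℂ)⁻¹ * ∑ p1 : Fin 2, ∑ p2 : Fin 2, ∑ p3 : Fin 2, ∑ p4 : Fin 2,
            E.repr Z (p p1) * starRingEnd ℂ (E.repr Z (p p2))
              * (E.repr Z (p p3) * starRingEnd ℂ (E.repr Z (p p4))) ∂σ :=
          integral_congr_ae (Filter.Eventually.of_forall hpt)
      _ = (4:ℂ)⁻¹ * ∫ Z, ∑ p1 : Fin 2, ∑ p2 : Fin 2, ∑ p3 : Fin 2, ∑ p4 : Fin 2,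
            E.repr Z (p p1) * starRingEnd ℂ (E.repr Z (p p2))
              * (E.repr Z (p p3) * starRingEnd ℂ (E.repr Z (p p4))) ∂σ :=
          integral_const_mul _ _
      _ = (4:ℂ)⁻¹ * ∑ p1 : Fin 2, ∑ p2 : Fin 2, ∑ p3 : Fin 2, ∑ p4 : Fin 2,
            m4 E σ (p p1) (p p2) (p p3) (p p4) := by
          congr 1
          rw [integral_finset_sum _ (fun i _ => integrable_finset_sum _ (fun j _ =>
            integrable_finset_sum _ (fun l _ => integrable_finset_sum _ (fun m _ =>
              integrable_m4int E σ hsupp (p i) (p j) (p l) (p m)))))]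
          refine Finset.sum_congr rfl fun i _ => ?_
          rw [integral_finset_sum _ (fun j _ => integrable_finset_sum _ (fun l _ =>
            integrable_finset_sum _ (fun m _ =>
              integrable_m4int E σ hsupp (p i) (p j) (p l) (p m))))]
          refine Finset.sum_congr rfl fun j _ => ?_
          rw [integral_finset_sum _ (fun l _ => integrable_finset_sum _ (fun m _ =>
              integrable_m4int E σ hsupp (p i) (p j) (p l) (p m)))]
          refine Finset.sum_congr rfl fun l _ => ?_
          rw [integral_finset_sum _ (fun m _ =>
              integrable_m4int E σ hsupp (p i) (p j) (p l) (p m))]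
          rfl
  have hba : b ≠ a := Ne.symm hab
  simp only [Fin.sum_univ_two, hp, Matrix.cons_val_zero, Matrix.cons_val_one,
    Matrix.head_cons] at key
  have v01 : m4 E σ a a a b = 0 := m4_vanish E σ hinv (by tauto) (by tauto)
  have v02 : m4 E σ a a b a = 0 := m4_vanish E σ hinv (by tauto) (by tauto)
  have v03 : m4 E σ a b a a = 0 := m4_vanish E σ hinv (by tauto) (by tauto)
  have v04 : m4 E σ a b a b = 0 := m4_vanish E σ hinv (by tauto) (by tauto)
  have v05 : m4 E σ a b b b = 0 := m4_vanish E σ hinv (by tauto) (by tauto)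
  have v06 : m4 E σ b a a a = 0 := m4_vanish E σ hinv (by tauto) (by tauto)
  have v07 : m4 E σ b a b a = 0 := m4_vanish E σ hinv (by tauto) (by tauto)
  have v08 : m4 E σ b a b b = 0 := m4_vanish E σ hinv (by tauto) (by tauto)
  have v09 : m4 E σ b b a b = 0 := m4_vanish E σ hinv (by tauto) (by tauto)
  have v10 : m4 E σ b b b a = 0 := m4_vanish E σ hinv (by tauto) (by tauto)
  rw [v01, v02, v03, v04, v05, v06, v07, v08, v09, v10, m4_perm E σ a b,
    m4_perm E σ b a, m4_swap E σ b a] at key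
  linear_combination key

lemma m4_diag (hsupp : σ (Metric.sphere (0 : K) 1)ᶜ = 0)
    (hinv : ∀ f : K ≃ₗᵢ[ℂ] K, Measure.map f σ = σ) {a b : Fin k} (hab : a ≠ b) :
    m4 E σ a a a a = m4 E σ b b b b := by
  have h1 := m4_rot E σ hsupp hinv hab
  have h2 := m4_rot E σ hsupp hinv (Ne.symm hab)
  have h3 := m4_swap E σ b a
  linear_combination h1 - h2 - h3

lemma m4_pair (hsupp : σ (Metric.sphere (0 : K) 1)ᶜ = 0)
    (hinv : ∀ f : K ≃ₗᵢ[ℂ] K, Measure.map f σ = σ) {a b : Fin k} (hab : a ≠ b) :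
    m4 E σ a a b b = m4 E σ a a a a / 2 := by
  have h1 := m4_rot E σ hsupp hinv hab
  have h2 := m4_diag E σ hsupp hinv hab
  linear_combination -h1 + (1/4 : ℂ) * h2


lemma coord_normsq_eq_one {Z : K} (hZ : ‖Z‖ = 1) :
    ∑ a : Fin k, E.repr Z a * starRingEnd ℂ (E.repr Z a) = 1 := by
  have hnorm : ‖E.repr Z‖ = 1 := by rw [LinearIsometryEquiv.norm_map]; exact hZ
  have hsum : ∑ a : Fin k, ‖E.repr Z a‖ ^ 2 = 1 := by
    have h := EuclideanSpace.norm_eq (E.repr Z)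
    rw [hnorm] at h
    have hnn : 0 ≤ ∑ a : Fin k, ‖E.repr Z a‖ ^ 2 :=
      Finset.sum_nonneg fun a _ => sq_nonneg _
    have := Real.sq_sqrt hnn
    rw [← h] at this
    simpa using this.symm
  have hterm : ∀ w : ℂ, w * starRingEnd ℂ w = ((‖w‖ ^ 2 : ℝ) : ℂ) := by
    intro w
    rw [Complex.mul_conj]
    norm_cast
    rw [← Complex.sq_norm]
  calc ∑ a : Fin k, E.repr Z a * starRingEnd ℂ (E.repr Z a)
      = ∑ a : Fin k, ((‖E.repr Z a‖ ^ 2 : ℝ) : ℂ) :=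
        Finset.sum_congr rfl fun a _ => hterm _
    _ = ((∑ a : Fin k, ‖E.repr Z a‖ ^ 2 : ℝ) : ℂ) := by push_cast; ring
    _ = 1 := by rw [hsum]; norm_num

lemma sum_m2 (hsupp : σ (Metric.sphere (0 : K) 1)ᶜ = 0) :
    ∑ a : Fin k, m2 E σ a a = 1 := by
  have h1 : ∑ a : Fin k, m2 E σ a a
      = ∫ Z, ∑ a : Fin k, E.repr Z a * starRingEnd ℂ (E.repr Z a) ∂σ :=
    (integral_finset_sum _ (fun a _ => integrable_m2int E σ hsupp a a)).symm
  rw [h1]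
  have h2 : ∀ᵐ Z ∂σ, ∑ a : Fin k, E.repr Z a * starRingEnd ℂ (E.repr Z a) = (1:ℂ) := by
    filter_upwards [ae_norm_one σ hsupp] with Z hZ
    exact coord_normsq_eq_one E hZ
  rw [integral_congr_ae h2]
  simp

lemma sum_m4 (hsupp : σ (Metric.sphere (0 : K) 1)ᶜ = 0) :
    ∑ a : Fin k, ∑ c : Fin k, m4 E σ a a c c = 1 := by
  have h1 : ∑ a : Fin k, ∑ c : Fin k, m4 E σ a a c c
      = ∫ Z, ∑ a : Fin k, ∑ c : Fin k, E.repr Z a * starRingEnd ℂ (E.repr Z a)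
          * (E.repr Z c * starRingEnd ℂ (E.repr Z c)) ∂σ := by
    rw [integral_finset_sum _ (fun a _ => integrable_finset_sum _ (fun c _ =>
      integrable_m4int E σ hsupp a a c c))]
    refine Finset.sum_congr rfl fun a _ => ?_
    rw [integral_finset_sum _ (fun c _ => integrable_m4int E σ hsupp a a c c)]
    rfl
  rw [h1]
  have h2 : ∀ᵐ Z ∂σ, ∑ a : Fin k, ∑ c : Fin k, E.repr Z a * starRingEnd ℂ (E.repr Z a)
      * (E.repr Z c * starRingEnd ℂ (E.repr Z c)) = (1:ℂ) := by
    filter_upwards [ae_norm_one σ hsupp] with Z hZ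
    have hone := coord_normsq_eq_one E hZ
    calc ∑ a : Fin k, ∑ c : Fin k, E.repr Z a * starRingEnd ℂ (E.repr Z a)
        * (E.repr Z c * starRingEnd ℂ (E.repr Z c))
        = (∑ a : Fin k, E.repr Z a * starRingEnd ℂ (E.repr Z a))
          * ∑ c : Fin k, E.repr Z c * starRingEnd ℂ (E.repr Z c) := by
          rw [Finset.sum_mul]
          exact Finset.sum_congr rfl fun a _ => by rw [Finset.mul_sum]
      _ = 1 := by rw [hone]; norm_num
  rw [integral_congr_ae h2]
  simp


lemma m4_diag_all (hsupp : σ (Metric.sphere (0 : K) 1)ᶜ = 0)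
    (hinv : ∀ f : K ≃ₗᵢ[ℂ] K, Measure.map f σ = σ) (x y : Fin k) :
    m4 E σ x x x x = m4 E σ y y y y := by
  by_cases h : x = y
  · rw [h]
  · exact m4_diag E σ hsupp hinv h

lemma m2_value (hsupp : σ (Metric.sphere (0 : K) 1)ᶜ = 0)
    (hinv : ∀ f : K ≃ₗᵢ[ℂ] K, Measure.map f σ = σ) (a : Fin k) :
    (k : ℂ) * m2 E σ a a = 1 := by
  have hall : ∀ x : Fin k, m2 E σ x x = m2 E σ a a := by
    intro x
    by_cases h : x = a
    · rw [h]
    · exact m2_rot E σ hsupp hinv h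
  have hS := sum_m2 E σ hsupp
  rw [Finset.sum_congr rfl (fun x _ => hall x), Finset.sum_const, Finset.card_univ,
    Fintype.card_fin, nsmul_eq_mul] at hS
  exact hS

lemma A_value (hk : 1 ≤ k) (hsupp : σ (Metric.sphere (0 : K) 1)ᶜ = 0)
    (hinv : ∀ f : K ≃ₗᵢ[ℂ] K, Measure.map f σ = σ) (a : Fin k) :
    (k : ℂ) * ((k : ℂ) + 1) * m4 E σ a a a a = 2 := by
  have hS := sum_m4 E σ hsupp
  have hrow : ∀ x : Fin k, ∑ c : Fin k, m4 E σ x x c c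
      = m4 E σ a a a a + ((k : ℂ) - 1) * (m4 E σ a a a a / 2) := by
    intro x
    rw [← Finset.sum_erase_add _ _ (Finset.mem_univ x)]
    have hx : m4 E σ x x x x = m4 E σ a a a a := m4_diag_all E σ hsupp hinv x a
    have hoff : ∀ c ∈ Finset.univ.erase x, m4 E σ x x c c = m4 E σ a a a a / 2 := by
      intro c hc
      have hxc : x ≠ c := fun h => (Finset.mem_erase.1 hc).1 h.symm
      rw [m4_pair E σ hsupp hinv hxc, hx]
    rw [Finset.sum_congr rfl hoff, Finset.sum_const, Finset.card_erase_of_mem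
      (Finset.mem_univ x), Finset.card_univ, Fintype.card_fin, nsmul_eq_mul, hx]
    have hcast : ((k - 1 : ℕ) : ℂ) = (k : ℂ) - 1 := by
      rw [Nat.cast_sub hk]; norm_num
    rw [hcast]
    ring
  rw [Finset.sum_congr rfl (fun x _ => hrow x), Finset.sum_const, Finset.card_univ,
    Fintype.card_fin, nsmul_eq_mul] at hS
  linear_combination 2 * hS

lemma m4_full (hsupp : σ (Metric.sphere (0 : K) 1)ᶜ = 0)
    (hinv : ∀ f : K ≃ₗᵢ[ℂ] K, Measure.map f σ = σ) (a0 a b c d : Fin k) :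
    m4 E σ a b c d
      = (if a = b ∧ c = d then 1 else 0) * (m4 E σ a0 a0 a0 a0 / 2)
        + (if a = d ∧ b = c then 1 else 0) * (m4 E σ a0 a0 a0 a0 / 2) := by
  by_cases h1 : a = b ∧ c = d
  · obtain ⟨hab, hcd⟩ := h1
    subst hab; subst hcd
    by_cases h2 : a = c
    · subst h2
      rw [if_pos (⟨rfl, rfl⟩ : a = a ∧ a = a), m4_diag_all E σ hsupp hinv a a0]
      ring
    · have h2' : ¬(a = c ∧ a = c) := fun h => h2 h.1
      rw [if_pos ⟨rfl, rfl⟩, if_neg h2', m4_pair E σ hsupp hinv h2,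
        m4_diag_all E σ hsupp hinv a a0]
      ring
  · by_cases h2 : a = d ∧ b = c
    · obtain ⟨had, hbc⟩ := h2
      subst had; subst hbc
      have hab : a ≠ b := fun h => h1 ⟨h, h.symm⟩
      rw [if_neg h1, if_pos ⟨rfl, rfl⟩, m4_perm E σ a b, m4_pair E σ hsupp hinv hab,
        m4_diag_all E σ hsupp hinv a a0]
      ring
    · rw [if_neg h1, if_neg h2, m4_vanish E σ hinv h1 h2]
      ring

end Moments

/-- **Equation (2) of the paper: the identity for `S_k^+`.** Let `V` be an
`n`-dimensional complex inner product space with orthonormal basis `F`, let `R`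
be a Kähler curvature-type tensor on `V` with Ricci form
`Ric(Z,Z̄) = Σ_i R(Z,Z̄,F_i,F̄_i)`. Let `K ⊆ V` be a complex `k`-dimensional
subspace (`1 ≤ k ≤ n`) with orthonormal basis `E`, let `σ` be the
rotation-invariant probability measure on the unit sphere of `K`, and let
`S_k(K) = Σ_{i,j} R(E_i,Ē_i,E_j,Ē_j)`. Then
`k · ∫ [Ric(Z,Z̄) + R(Z,Z̄,Z,Z̄)] dσ(Z) = Σ_j Ric(E_j,Ē_j) + (2/(k+1)) S_k(K)`. -/
theorem S_k_plus_eq_trace_add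
    {V : Type*} [NormedAddCommGroup V] [InnerProductSpace ℂ V]
    (n k : ℕ) (hk : 1 ≤ k) (hkn : k ≤ n)
    (F : OrthonormalBasis (Fin n) ℂ V)
    (R : V → V → V → V → ℂ) (hR : IsKahlerCurvatureTensor R)
    (K : Submodule ℂ V) (E : OrthonormalBasis (Fin k) ℂ K)
    [MeasurableSpace K] [BorelSpace K]
    (σ : Measure K) [IsProbabilityMeasure σ]
    (hsupp : σ (Metric.sphere (0 : K) 1)ᶜ = 0)
    (hinv : ∀ f : K ≃ₗᵢ[ℂ] K, Measure.map f σ = σ) :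
    (k : ℂ) * ∫ Z : K, ((∑ i : Fin n, R Z Z (F i) (F i)) + R Z Z Z Z) ∂σ =
      (∑ j : Fin k, ∑ i : Fin n, R (E j) (E j) (F i) (F i)) +
        (2 / ((k : ℂ) + 1)) * ∑ i : Fin k, ∑ j : Fin k,
          R (E i) (E i) (E j) (E j) := by
  classical
  set a0 : Fin k := ⟨0, hk⟩ with ha0
  -- expansion of an element of K in the basis E, inside V
  have hZsum : ∀ Z : K, (Z : V) = ∑ a : Fin k, E.repr Z a • ((E a : K) : V) := by
    intro Z
    conv_lhs => rw [← E.sum_repr Z]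
    push_cast
    rfl
  -- pointwise expansion of the Ricci-type sum
  have hRic : ∀ Z : K, (∑ i : Fin n, R Z Z (F i) (F i))
      = ∑ a : Fin k, ∑ b : Fin k, E.repr Z a * starRingEnd ℂ (E.repr Z b)
          * (∑ i : Fin n, R (E a) (E b) (F i) (F i)) := by
    intro Z
    have e2 : ∀ x y : V, R (Z : V) (Z : V) x y
        = ∑ a : Fin k, ∑ b : Fin k, E.repr Z a * starRingEnd ℂ (E.repr Z b)
            * R (E a) (E b) x y := by
      intro x y
      rw [hZsum Z]
      exact hR.expand2 _ _ _ _ _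
    calc ∑ i : Fin n, R (Z : V) (Z : V) (F i) (F i)
        = ∑ i : Fin n, ∑ a : Fin k, ∑ b : Fin k,
            E.repr Z a * starRingEnd ℂ (E.repr Z b) * R (E a) (E b) (F i) (F i) :=
          Finset.sum_congr rfl fun i _ => e2 _ _
      _ = ∑ a : Fin k, ∑ i : Fin n, ∑ b : Fin k,
            E.repr Z a * starRingEnd ℂ (E.repr Z b) * R (E a) (E b) (F i) (F i) :=
          Finset.sum_comm
      _ = ∑ a : Fin k, ∑ b : Fin k, ∑ i : Fin n,
            E.repr Z a * starRingEnd ℂ (E.repr Z b) * R (E a) (E b) (F i) (F i) :=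
          Finset.sum_congr rfl fun a _ => Finset.sum_comm
      _ = ∑ a : Fin k, ∑ b : Fin k, E.repr Z a * starRingEnd ℂ (E.repr Z b)
            * (∑ i : Fin n, R (E a) (E b) (F i) (F i)) := by
          refine Finset.sum_congr rfl fun a _ => Finset.sum_congr rfl fun b _ => ?_
          rw [Finset.mul_sum]
  -- pointwise expansion of the quartic term
  have hR4 : ∀ Z : K, R (Z : V) (Z : V) (Z : V) (Z : V)
      = ∑ a : Fin k, ∑ b : Fin k, ∑ c : Fin k, ∑ d : Fin k,
          E.repr Z a * starRingEnd ℂ (E.repr Z b)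
            * (E.repr Z c * starRingEnd ℂ (E.repr Z d))
            * R (E a) (E b) (E c) (E d) := by
    intro Z
    rw [hZsum Z]
    exact hR.expand4 _ _ _ _ _
  -- the integral splits into moments
  have hint : (∫ Z : K, ((∑ i : Fin n, R Z Z (F i) (F i)) + R Z Z Z Z) ∂σ)
      = (∑ a : Fin k, ∑ b : Fin k, m2 E σ a b
            * (∑ i : Fin n, R (E a) (E b) (F i) (F i)))
        + ∑ a : Fin k, ∑ b : Fin k, ∑ c : Fin k, ∑ d : Fin k,
            m4 E σ a b c d * R (E a) (E b) (E c) (E d) := by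
    rw [integral_congr_ae (Filter.Eventually.of_forall fun Z => by
      simp only [hRic Z, hR4 Z] :
      (fun Z : K => (∑ i : Fin n, R Z Z (F i) (F i)) + R (Z:V) (Z:V) (Z:V) (Z:V))
        =ᵐ[σ] fun Z : K =>
          (∑ a : Fin k, ∑ b : Fin k, E.repr Z a * starRingEnd ℂ (E.repr Z b)
            * (∑ i : Fin n, R (E a) (E b) (F i) (F i)))
          + ∑ a : Fin k, ∑ b : Fin k, ∑ c : Fin k, ∑ d : Fin k,
              E.repr Z a * starRingEnd ℂ (E.repr Z b)
                * (E.repr Z c * starRingEnd ℂ (E.repr Z d))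
                * R (E a) (E b) (E c) (E d))]
    have intA : Integrable (fun Z : K =>
        ∑ a : Fin k, ∑ b : Fin k, E.repr Z a * starRingEnd ℂ (E.repr Z b)
          * (∑ i : Fin n, R (E a) (E b) (F i) (F i))) σ :=
      integrable_finset_sum _ (fun a _ => integrable_finset_sum _ (fun b _ =>
        (integrable_m2int E σ hsupp a b).mul_const _))
    have intB : Integrable (fun Z : K =>
        ∑ a : Fin k, ∑ b : Fin k, ∑ c : Fin k, ∑ d : Fin k,
          E.repr Z a * starRingEnd ℂ (E.repr Z b)
            * (E.repr Z c * starRingEnd ℂ (E.repr Z d))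
            * R (E a) (E b) (E c) (E d)) σ :=
      integrable_finset_sum _ (fun a _ => integrable_finset_sum _ (fun b _ =>
        integrable_finset_sum _ (fun c _ => integrable_finset_sum _ (fun d _ =>
          (integrable_m4int E σ hsupp a b c d).mul_const _))))
    rw [integral_add intA intB]
    congr 1
    · rw [integral_finset_sum _ (fun a _ => integrable_finset_sum _ (fun b _ =>
        (integrable_m2int E σ hsupp a b).mul_const _))]
      refine Finset.sum_congr rfl fun a _ => ?_
      rw [integral_finset_sum _ (fun b _ => (integrable_m2int E σ hsupp a b).mul_const _)]
      refine Finset.sum_congr rfl fun b _ => ?_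
      exact integral_mul_const _ _
    · rw [integral_finset_sum _ (fun a _ => integrable_finset_sum _ (fun b _ =>
        integrable_finset_sum _ (fun c _ => integrable_finset_sum _ (fun d _ =>
          (integrable_m4int E σ hsupp a b c d).mul_const _))))]
      refine Finset.sum_congr rfl fun a _ => ?_
      rw [integral_finset_sum _ (fun b _ => integrable_finset_sum _ (fun c _ =>
        integrable_finset_sum _ (fun d _ =>
          (integrable_m4int E σ hsupp a b c d).mul_const _)))]
      refine Finset.sum_congr rfl fun b _ => ?_
      rw [integral_finset_sum _ (fun c _ => integrable_finset_sum _ (fun d _ =>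
          (integrable_m4int E σ hsupp a b c d).mul_const _))]
      refine Finset.sum_congr rfl fun c _ => ?_
      rw [integral_finset_sum _ (fun d _ =>
          (integrable_m4int E σ hsupp a b c d).mul_const _)]
      refine Finset.sum_congr rfl fun d _ => ?_
      exact integral_mul_const _ _
  rw [hint]
  -- evaluate the second-moment sum
  have h2sum : ∑ a : Fin k, ∑ b : Fin k, m2 E σ a b
      * (∑ i : Fin n, R (E a) (E b) (F i) (F i))
      = ∑ a : Fin k, m2 E σ a a * (∑ i : Fin n, R (E a) (E a) (F i) (F i)) := by
    refine Finset.sum_congr rfl fun a _ => ?_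
    rw [Finset.sum_eq_single a]
    · intro b _ hba
      rw [m2_offdiag E σ hinv (fun h => hba h.symm), zero_mul]
    · intro h
      exact absurd (Finset.mem_univ a) h
  -- evaluate the fourth-moment sum
  have hm4full : ∀ a b c d : Fin k, m4 E σ a b c d
      = (if a = b ∧ c = d then 1 else 0) * (m4 E σ a0 a0 a0 a0 / 2)
        + (if a = d ∧ b = c then 1 else 0) * (m4 E σ a0 a0 a0 a0 / 2) :=
    fun a b c d => m4_full E σ hsupp hinv a0 a b c d
  have h4sum : ∑ a : Fin k, ∑ b : Fin k, ∑ c : Fin k, ∑ d : Fin k,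
        m4 E σ a b c d * R (E a) (E b) (E c) (E d)
      = m4 E σ a0 a0 a0 a0 * ∑ i : Fin k, ∑ j : Fin k, R (E i) (E i) (E j) (E j) := by
    have step1 : ∑ a : Fin k, ∑ b : Fin k, ∑ c : Fin k, ∑ d : Fin k,
          m4 E σ a b c d * R (E a) (E b) (E c) (E d)
        = (∑ a : Fin k, ∑ c : Fin k,
              (m4 E σ a0 a0 a0 a0 / 2) * R (E a) (E a) (E c) (E c))
          + ∑ a : Fin k, ∑ b : Fin k,
              (m4 E σ a0 a0 a0 a0 / 2) * R (E a) (E b) (E b) (E a) := by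
      set X := m4 E σ a0 a0 a0 a0 / 2 with hX
      have hsplit : ∀ a b c d : Fin k,
          m4 E σ a b c d * R (E a) (E b) (E c) (E d)
            = (if a = b then (if c = d then X * R (E a) (E b) (E c) (E d) else 0) else 0)
              + (if a = d then (if b = c then X * R (E a) (E b) (E c) (E d) else 0)
                  else 0) := by
        intro a b c d
        rw [hm4full a b c d, add_mul]
        congr 1
        · by_cases h1 : a = b <;> by_cases h2 : c = d <;>
            simp [h1, h2] <;> ring
        · by_cases h1 : a = d <;> by_cases h2 : b = c <;>
            simp [h1, h2] <;> ring
      simp only [hsplit, Finset.sum_add_distrib]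
      congr 1
      · -- first delta sum
        refine Finset.sum_congr rfl fun a _ => ?_
        have collapse_d : ∀ b c : Fin k, (∑ d : Fin k,
            (if a = b then (if c = d then X * R (E a) (E b) (E c) (E d) else 0) else 0))
            = if a = b then X * R (E a) (E b) (E c) (E c) else 0 := by
          intro b c
          by_cases h1 : a = b
          · simp only [h1, if_true]
            rw [Finset.sum_ite_eq]
            simp
          · simp [h1]
        calc ∑ b : Fin k, ∑ c : Fin k, ∑ d : Fin k,
              (if a = b then (if c = d then X * R (E a) (E b) (E c) (E d) else 0) else 0)
            = ∑ b : Fin k, ∑ c : Fin k,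
                (if a = b then X * R (E a) (E b) (E c) (E c) else 0) :=
              Finset.sum_congr rfl fun b _ => Finset.sum_congr rfl fun c _ =>
                collapse_d b c
          _ = ∑ b : Fin k, (if a = b then ∑ c : Fin k, X * R (E a) (E b) (E c) (E c)
                else 0) := by
              refine Finset.sum_congr rfl fun b _ => ?_
              by_cases h1 : a = b <;> simp [h1]
          _ = ∑ c : Fin k, X * R (E a) (E a) (E c) (E c) := by
              rw [Finset.sum_ite_eq]
              simp
      · -- second delta sum
        refine Finset.sum_congr rfl fun a _ => ?_
        have collapse_d : ∀ b c : Fin k, (∑ d : Fin k,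
            (if a = d then (if b = c then X * R (E a) (E b) (E c) (E d) else 0) else 0))
            = if b = c then X * R (E a) (E b) (E c) (E a) else 0 := by
          intro b c
          by_cases h2 : b = c
          · simp only [h2, if_true]
            rw [Finset.sum_ite_eq]
            simp
          · simp [h2]
        calc ∑ b : Fin k, ∑ c : Fin k, ∑ d : Fin k,
              (if a = d then (if b = c then X * R (E a) (E b) (E c) (E d) else 0) else 0)
            = ∑ b : Fin k, ∑ c : Fin k,
                (if b = c then X * R (E a) (E b) (E c) (E a) else 0) :=
              Finset.sum_congr rfl fun b _ => Finset.sum_congr rfl fun c _ =>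
                collapse_d b c
          _ = ∑ b : Fin k, X * R (E a) (E b) (E b) (E a) := by
              refine Finset.sum_congr rfl fun b _ => ?_
              rw [Finset.sum_ite_eq]
              simp
    rw [step1]
    have habba : ∀ a b : Fin k, R ((E a : K) : V) (E b) (E b) (E a)
        = R ((E b : K) : V) (E b) (E a) (E a) := fun a b => hR.symm₁₃ _ _ _ _
    have step2 : ∑ a : Fin k, ∑ b : Fin k,
          (m4 E σ a0 a0 a0 a0 / 2) * R (E a) (E b) (E b) (E a)
        = ∑ a : Fin k, ∑ b : Fin k,
          (m4 E σ a0 a0 a0 a0 / 2) * R (E a) (E a) (E b) (E b) := by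
      rw [Finset.sum_comm]
      refine Finset.sum_congr rfl fun b _ => Finset.sum_congr rfl fun a _ => ?_
      rw [habba]
    rw [step2, ← Finset.sum_add_distrib]
    rw [Finset.mul_sum]
    refine Finset.sum_congr rfl fun a _ => ?_
    rw [← Finset.sum_add_distrib, Finset.mul_sum]
    refine Finset.sum_congr rfl fun c _ => ?_
    ring
  rw [h2sum, h4sum]
  -- final arithmetic
  have hkA := A_value E σ hk hsupp hinv a0
  have hkne : ((k : ℂ) + 1) ≠ 0 := by
    have h := Nat.cast_ne_zero (R := ℂ).2 (Nat.succ_ne_zero k)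
    push_cast at h
    exact h
  have hkA' : (k : ℂ) * m4 E σ a0 a0 a0 a0 = 2 / ((k : ℂ) + 1) := by
    rw [eq_div_iff hkne]
    linear_combination hkA
  rw [mul_add, Finset.mul_sum]
  have hfirst : ∑ a : Fin k, (k : ℂ) * (m2 E σ a a
      * (∑ i : Fin n, R (E a) (E a) (F i) (F i)))
      = ∑ j : Fin k, ∑ i : Fin n, R (E j) (E j) (F i) (F i) := by
    refine Finset.sum_congr rfl fun a _ => ?_
    rw [← mul_assoc, m2_value E σ hsupp hinv a, one_mul]
  rw [hfirst, ← mul_assoc, hkA']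
end

section
/- Let k ≥ 1, let V be a complex inner product space of dimension k with orthonormal basis (E_1,…,E_k), let R be a Kähler curvature-type tensor on V, and set S_k = Σ_{i,j=1}^k R(E_i,Ē_i,E_j,Ē_j). Let σ denote the rotation-invariant probability measure on the unit sphere of V. Then ∫ [Σ_{j=1}^k R(Z,Z̄,E_j,Ē_j) − R(Z,Z̄,Z,Z̄)] dσ(Z) = ((k−1)/(k(k+1))) · S_k. -/
open MeasureTheory Finset

namespace AvgAux
variable {V : Type*} [NormedAddCommGroup V] [InnerProductSpace ℂ V]
variable {R : V → V → V → V → ℂ}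

lemma R_sum₁ (hR : IsKahlerCurvatureTensor R) {ι : Type*} (s : Finset ι)
    (f : ι → ℂ) (v : ι → V) (y z w : V) :
    R (∑ i ∈ s, f i • v i) y z w = ∑ i ∈ s, f i * R (v i) y z w := by
  classical
  induction s using Finset.induction with
  | empty => simpa using hR.map_smul₁ 0 0 y z w
  | insert _ _ h ih =>
      rw [Finset.sum_insert h, hR.map_add₁, hR.map_smul₁, ih, Finset.sum_insert h]

lemma R_sum₂ (hR : IsKahlerCurvatureTensor R) {ι : Type*} (s : Finset ι)
    (f : ι → ℂ) (v : ι → V) (x z w : V) :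
    R x (∑ i ∈ s, f i • v i) z w = ∑ i ∈ s, starRingEnd ℂ (f i) * R x (v i) z w := by
  classical
  induction s using Finset.induction with
  | empty => simpa using hR.map_smul₂ 0 x 0 z w
  | insert _ _ h ih =>
      rw [Finset.sum_insert h, hR.map_add₂, hR.map_smul₂, ih, Finset.sum_insert h]

lemma R_sum₃ (hR : IsKahlerCurvatureTensor R) {ι : Type*} (s : Finset ι)
    (f : ι → ℂ) (v : ι → V) (x y w : V) :
    R x y (∑ i ∈ s, f i • v i) w = ∑ i ∈ s, f i * R x y (v i) w := by
  classical
  induction s using Finset.induction with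
  | empty => simpa using hR.map_smul₃ 0 x y 0 w
  | insert _ _ h ih =>
      rw [Finset.sum_insert h, hR.map_add₃, hR.map_smul₃, ih, Finset.sum_insert h]

lemma R_sum₄ (hR : IsKahlerCurvatureTensor R) {ι : Type*} (s : Finset ι)
    (f : ι → ℂ) (v : ι → V) (x y z : V) :
    R x y z (∑ i ∈ s, f i • v i) = ∑ i ∈ s, starRingEnd ℂ (f i) * R x y z (v i) := by
  classical
  induction s using Finset.induction with
  | empty => simpa using hR.map_smul₄ 0 x y z 0
  | insert _ _ h ih =>
      rw [Finset.sum_insert h, hR.map_add₄, hR.map_smul₄, ih, Finset.sum_insert h]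

variable {k : ℕ} (E : OrthonormalBasis (Fin k) ℂ V)

/-- coordinate functional -/
noncomputable def zc (a : Fin k) (Z : V) : ℂ := inner ℂ (E a) Z

lemma expand2 (hR : IsKahlerCurvatureTensor R) (X Y u v : V) :
    R X Y u v = ∑ a : Fin k, ∑ b : Fin k,
      zc E a X * starRingEnd ℂ (zc E b Y) * R (E a) (E b) u v := by
  conv_lhs => rw [← E.sum_repr' X, ← E.sum_repr' Y]
  rw [R_sum₁ hR]
  refine Finset.sum_congr rfl fun a _ => ?_
  rw [R_sum₂ hR, Finset.mul_sum]
  exact Finset.sum_congr rfl fun b _ => by rw [zc, zc]; ring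

lemma expand4 (hR : IsKahlerCurvatureTensor R) (X Y Z W : V) :
    R X Y Z W = ∑ a : Fin k, ∑ b : Fin k, ∑ c : Fin k, ∑ d : Fin k,
      zc E a X * starRingEnd ℂ (zc E b Y) * zc E c Z * starRingEnd ℂ (zc E d W) *
        R (E a) (E b) (E c) (E d) := by
  rw [expand2 E hR X Y Z W]
  refine Finset.sum_congr rfl fun a _ => Finset.sum_congr rfl fun b _ => ?_
  conv_lhs => rw [← E.sum_repr' Z, ← E.sum_repr' W, R_sum₃ hR]
  rw [Finset.mul_sum]
  refine Finset.sum_congr rfl fun c _ => ?_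
  rw [R_sum₄ hR]
  simp only [Finset.mul_sum]
  exact Finset.sum_congr rfl fun d _ => by simp only [zc]; ring

section Measure
variable [MeasurableSpace V] [BorelSpace V] {σ : Measure V}

lemma ae_norm_one (hsupp : σ (Metric.sphere (0 : V) 1)ᶜ = 0) : ∀ᵐ Z ∂σ, ‖Z‖ = 1 := by
  have h : ∀ᵐ Z ∂σ, Z ∈ Metric.sphere (0 : V) 1 := by
    rw [MeasureTheory.ae_iff]
    simpa [Set.compl_def] using hsupp
  filter_upwards [h] with Z hZ
  simpa [mem_sphere_zero_iff_norm] using hZ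

lemma integrable_bdd [IsFiniteMeasure σ] (hsupp : σ (Metric.sphere (0 : V) 1)ᶜ = 0)
    {g : V → ℂ} (hg : Continuous g) {C : ℝ} (hb : ∀ Z : V, ‖Z‖ = 1 → ‖g Z‖ ≤ C) :
    Integrable g σ := by
  refine (integrable_const C).mono' hg.aestronglyMeasurable ?_
  filter_upwards [ae_norm_one hsupp] with Z hZ using hb Z hZ

lemma integral_comp_unitary (hinv : ∀ f : V ≃ₗᵢ[ℂ] V, Measure.map f σ = σ)
    (U : V ≃ₗᵢ[ℂ] V) (g : V → ℂ) :
    ∫ Z, g Z ∂σ = ∫ Z, g (U Z) ∂σ := by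
  conv_lhs => rw [← hinv U]
  exact MeasureTheory.integral_map_equiv (U.toHomeomorph.toMeasurableEquiv) g

end Measure

section Unitaries

lemma continuous_zc (a : Fin k) : Continuous (zc E a) :=
  Continuous.inner continuous_const continuous_id

lemma norm_zc_le (a : Fin k) (Z : V) : ‖zc E a Z‖ ≤ ‖Z‖ := by
  have h := norm_inner_le_norm (𝕜 := ℂ) (E a) Z
  rwa [E.orthonormal.1 a, one_mul] at h

/-- diagonal phase map on Euclidean space -/
noncomputable def phaseL (u : Fin k → ℂ) (hu : ∀ i, u i ≠ 0) :
    EuclideanSpace ℂ (Fin k) ≃ₗ[ℂ] EuclideanSpace ℂ (Fin k) where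
  toFun x := WithLp.toLp 2 fun i => u i * x i
  invFun x := WithLp.toLp 2 fun i => (u i)⁻¹ * x i
  map_add' x y := (WithLp.ext_iff _).2 <| funext fun i => by simp [PiLp.add_apply]; ring
  map_smul' c x := (WithLp.ext_iff _).2 <| funext fun i => by simp [PiLp.smul_apply, smul_eq_mul]; ring
  left_inv x := (WithLp.ext_iff _).2 <| funext fun i => by
    show (u i)⁻¹ * (u i * x i) = x i
    rw [inv_mul_cancel_left₀ (hu i)]
  right_inv x := (WithLp.ext_iff _).2 <| funext fun i => by
    show u i * ((u i)⁻¹ * x i) = x i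
    rw [mul_inv_cancel_left₀ (hu i)]

lemma phaseL_inner (u : Fin k → ℂ) (hu : ∀ i, u i ≠ 0) (hu1 : ∀ i, ‖u i‖ = 1)
    (x y : EuclideanSpace ℂ (Fin k)) :
    (inner ℂ (phaseL u hu x) (phaseL u hu y) : ℂ) = inner ℂ x y := by
  simp only [PiLp.inner_apply, RCLike.inner_apply']
  refine Finset.sum_congr rfl fun i _ => ?_
  have h1 : u i * starRingEnd ℂ (u i) = 1 := by
    rw [Complex.mul_conj, Complex.normSq_eq_norm_sq, hu1 i]
    norm_num
  show starRingEnd ℂ (u i * x i) * (u i * y i) = _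
  rw [map_mul]
  linear_combination (starRingEnd ℂ (x i) * y i) * h1

noncomputable def phaseU (E : OrthonormalBasis (Fin k) ℂ V) (u : Fin k → ℂ)
    (hu : ∀ i, u i ≠ 0) (hu1 : ∀ i, ‖u i‖ = 1) : V ≃ₗᵢ[ℂ] V :=
  E.repr.trans ((((phaseL u hu).isometryOfInner (phaseL_inner u hu hu1)).trans E.repr.symm))

lemma phaseU_apply (u : Fin k → ℂ) (hu : ∀ i, u i ≠ 0) (hu1 : ∀ i, ‖u i‖ = 1) (i : Fin k) :
    phaseU E u hu hu1 (E i) = u i • E i := by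
  have h : (phaseL u hu) (E.repr (E i)) = u i • (E.repr (E i)) := by
    rw [E.repr_self]
    refine (WithLp.ext_iff _).2 <| funext fun j => ?_
    show u j * EuclideanSpace.single i 1 j = (u i • EuclideanSpace.single i (1:ℂ)) j
    rw [PiLp.smul_apply]
    by_cases hj : j = i
    · subst hj; simp [EuclideanSpace.single_apply]
    · simp [EuclideanSpace.single_apply, hj]
  show E.repr.symm ((phaseL u hu).isometryOfInner _ (E.repr (E i))) = _
  rw [LinearEquiv.coe_isometryOfInner, h, _root_.map_smul, E.repr.symm_apply_apply]

lemma phase_zc (u : Fin k → ℂ) (hu : ∀ i, u i ≠ 0) (hu1 : ∀ i, ‖u i‖ = 1) (a : Fin k) (Z : V) :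
    zc E a (phaseU E u hu hu1 Z) = u a * zc E a Z := by
  have hconj : u a * starRingEnd ℂ (u a) = 1 := by
    rw [Complex.mul_conj, Complex.normSq_eq_norm_sq, hu1 a]; norm_num
  have h : phaseU E u hu hu1 ((u a)⁻¹ • E a) = E a := by
    rw [_root_.map_smul, phaseU_apply, smul_smul, inv_mul_cancel₀ (hu a), one_smul]
  calc zc E a (phaseU E u hu hu1 Z)
      = inner ℂ (phaseU E u hu hu1 ((u a)⁻¹ • E a)) (phaseU E u hu hu1 Z) := by rw [h]; rfl
    _ = inner ℂ ((u a)⁻¹ • E a) Z := LinearIsometryEquiv.inner_map_map _ _ _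
    _ = starRingEnd ℂ (u a)⁻¹ * zc E a Z := by rw [inner_smul_left]; rfl
    _ = u a * zc E a Z := by
        have : u a = ((starRingEnd ℂ) (u a))⁻¹ := eq_inv_of_mul_eq_one_left hconj
        rw [map_inv₀, ← this]

noncomputable def permU (E : OrthonormalBasis (Fin k) ℂ V) (π : Equiv.Perm (Fin k)) :
    V ≃ₗᵢ[ℂ] V :=
  E.repr.trans (E.reindex π.symm).repr.symm

lemma permU_apply (π : Equiv.Perm (Fin k)) (i : Fin k) : permU E π (E i) = E (π i) := by
  show (E.reindex π.symm).repr.symm (E.repr (E i)) = E (π i)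
  rw [E.repr_self, OrthonormalBasis.repr_symm_single, OrthonormalBasis.reindex_apply,
    Equiv.symm_symm]

lemma perm_zc (π : Equiv.Perm (Fin k)) (a : Fin k) (Z : V) :
    zc E a (permU E π Z) = zc E (π.symm a) Z := by
  calc zc E a (permU E π Z)
      = inner ℂ (permU E π (E (π.symm a))) (permU E π Z) := by rw [permU_apply, Equiv.apply_symm_apply]; rfl
    _ = zc E (π.symm a) Z := LinearIsometryEquiv.inner_map_map _ _ _

end Unitaries

section Rotation

noncomputable def rc : ℝ := (Real.sqrt 2)⁻¹

lemma rc_sq : (rc : ℂ) * rc = 1/2 := by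
  have h : (rc : ℝ) * rc = 1/2 := by
    rw [rc, ← mul_inv, Real.mul_self_sqrt (by norm_num : (0:ℝ) ≤ 2)]
    norm_num
  calc (rc:ℂ) * rc = ((rc * rc : ℝ) : ℂ) := by push_cast; ring
    _ = 1/2 := by rw [h]; norm_num

noncomputable def rotL (p q : Fin k) (hpq : p ≠ q) :
    EuclideanSpace ℂ (Fin k) ≃ₗ[ℂ] EuclideanSpace ℂ (Fin k) where
  toFun x := WithLp.toLp 2 fun i => if i = p then (rc:ℂ) * (x p + x q)
    else if i = q then (rc:ℂ) * (x p - x q) else x i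
  invFun x := WithLp.toLp 2 fun i => if i = p then (rc:ℂ) * (x p + x q)
    else if i = q then (rc:ℂ) * (x p - x q) else x i
  map_add' x y := (WithLp.ext_iff _).2 <| funext fun i => by
    simp only [PiLp.add_apply]
    split_ifs <;> ring
  map_smul' c x := (WithLp.ext_iff _).2 <| funext fun i => by
    simp only [PiLp.smul_apply, smul_eq_mul, RingHom.id_apply]
    split_ifs <;> ring
  left_inv x := (WithLp.ext_iff _).2 <| funext fun i => by
    have hqp : q ≠ p := Ne.symm hpq
    by_cases hip : i = p
    · subst hip
      simp only [eq_self_iff_true, if_true, if_neg hqp]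
      linear_combination (2 * x i) * rc_sq
    · by_cases hiq : i = q
      · subst hiq
        simp only [eq_self_iff_true, if_true, if_neg hip]
        linear_combination (2 * x i) * rc_sq
      · simp only [if_neg hip, if_neg hiq]
  right_inv x := (WithLp.ext_iff _).2 <| funext fun i => by
    have hqp : q ≠ p := Ne.symm hpq
    by_cases hip : i = p
    · subst hip
      simp only [eq_self_iff_true, if_true, if_neg hqp]
      linear_combination (2 * x i) * rc_sq
    · by_cases hiq : i = q
      · subst hiq
        simp only [eq_self_iff_true, if_true, if_neg hip]
        linear_combination (2 * x i) * rc_sq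
      · simp only [if_neg hip, if_neg hiq]

lemma rotL_apply (p q : Fin k) (hpq : p ≠ q) (x : EuclideanSpace ℂ (Fin k)) (i : Fin k) :
    rotL p q hpq x i = if i = p then (rc:ℂ) * (x p + x q)
      else if i = q then (rc:ℂ) * (x p - x q) else x i := rfl

lemma rotL_inner (p q : Fin k) (hpq : p ≠ q) (x y : EuclideanSpace ℂ (Fin k)) :
    (inner ℂ (rotL p q hpq x) (rotL p q hpq y) : ℂ) = inner ℂ x y := by
  have hqp : q ≠ p := Ne.symm hpq
  simp only [PiLp.inner_apply, RCLike.inner_apply']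
  have hq : q ∈ Finset.univ.erase p := Finset.mem_erase.2 ⟨hqp, Finset.mem_univ q⟩
  rw [← Finset.add_sum_erase Finset.univ
      (fun i => starRingEnd ℂ (rotL p q hpq x i) * (rotL p q hpq y i)) (Finset.mem_univ p),
    ← Finset.add_sum_erase (Finset.univ.erase p)
      (fun i => starRingEnd ℂ (rotL p q hpq x i) * (rotL p q hpq y i)) hq,
    ← Finset.add_sum_erase Finset.univ
      (fun i => starRingEnd ℂ (x i) * (y i)) (Finset.mem_univ p),
    ← Finset.add_sum_erase (Finset.univ.erase p)
      (fun i => starRingEnd ℂ (x i) * (y i)) hq]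
  have hS : ∑ i ∈ (Finset.univ.erase p).erase q,
      starRingEnd ℂ (rotL p q hpq x i) * (rotL p q hpq y i)
      = ∑ i ∈ (Finset.univ.erase p).erase q, starRingEnd ℂ (x i) * (y i) := by
    refine Finset.sum_congr rfl fun i hi => ?_
    have hiq : i ≠ q := (Finset.mem_erase.1 hi).1
    have hip : i ≠ p := (Finset.mem_erase.1 (Finset.mem_erase.1 hi).2).1
    simp only [rotL_apply, if_neg hip, if_neg hiq]
  have hH : starRingEnd ℂ (rotL p q hpq x p) * (rotL p q hpq y p)
      + starRingEnd ℂ (rotL p q hpq x q) * (rotL p q hpq y q)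
      = starRingEnd ℂ (x p) * (y p) + starRingEnd ℂ (x q) * (y q) := by
    rw [rotL_apply, rotL_apply, rotL_apply, rotL_apply, if_pos rfl, if_pos rfl,
      if_neg hqp, if_pos rfl, if_neg hqp, if_pos rfl]
    simp only [map_mul, map_add, map_sub, Complex.conj_ofReal]
    linear_combination (2 * starRingEnd ℂ (x p) * y p + 2 * starRingEnd ℂ (x q) * y q) * rc_sq
  rw [← add_assoc, ← add_assoc, hS, hH]

noncomputable def rotU (E : OrthonormalBasis (Fin k) ℂ V) (p q : Fin k) (hpq : p ≠ q) :
    V ≃ₗᵢ[ℂ] V :=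
  E.repr.trans (((rotL p q hpq).isometryOfInner (rotL_inner p q hpq)).trans E.repr.symm)

lemma rotU_apply_p (p q : Fin k) (hpq : p ≠ q) :
    rotU E p q hpq (E p) = (rc:ℂ) • E p + (rc:ℂ) • E q := by
  have hqp : q ≠ p := Ne.symm hpq
  have h : rotL p q hpq (E.repr (E p)) = (rc:ℂ) • (E.repr (E p)) + (rc:ℂ) • (E.repr (E q)) := by
    rw [E.repr_self, E.repr_self]
    refine (WithLp.ext_iff _).2 <| funext fun j => ?_
    rw [rotL_apply, PiLp.add_apply, PiLp.smul_apply, PiLp.smul_apply]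
    by_cases hjp : j = p
    · simp [hjp, EuclideanSpace.single_apply, hqp, hpq]
    · by_cases hjq : j = q
      · simp [hjq, EuclideanSpace.single_apply, hqp, hpq]
      · simp [EuclideanSpace.single_apply, hjp, hjq]
  show E.repr.symm ((rotL p q hpq).isometryOfInner _ (E.repr (E p))) = _
  rw [LinearEquiv.coe_isometryOfInner, h, map_add, _root_.map_smul, _root_.map_smul,
    E.repr.symm_apply_apply, E.repr.symm_apply_apply]

lemma rotU_apply_q (p q : Fin k) (hpq : p ≠ q) :
    rotU E p q hpq (E q) = (rc:ℂ) • E p - (rc:ℂ) • E q := by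
  have hqp : q ≠ p := Ne.symm hpq
  have h : rotL p q hpq (E.repr (E q)) = (rc:ℂ) • (E.repr (E p)) - (rc:ℂ) • (E.repr (E q)) := by
    rw [E.repr_self, E.repr_self]
    refine (WithLp.ext_iff _).2 <| funext fun j => ?_
    rw [rotL_apply, PiLp.sub_apply, PiLp.smul_apply, PiLp.smul_apply]
    by_cases hjp : j = p
    · simp [hjp, EuclideanSpace.single_apply, hqp, hpq]
    · by_cases hjq : j = q
      · simp [hjq, EuclideanSpace.single_apply, hqp, hpq]
      · simp [EuclideanSpace.single_apply, hjp, hjq]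
  show E.repr.symm ((rotL p q hpq).isometryOfInner _ (E.repr (E q))) = _
  rw [LinearEquiv.coe_isometryOfInner, h, map_sub, _root_.map_smul, _root_.map_smul,
    E.repr.symm_apply_apply, E.repr.symm_apply_apply]

lemma rot_zc_p (p q : Fin k) (hpq : p ≠ q) (Z : V) :
    zc E p (rotU E p q hpq Z) = (rc:ℂ) * (zc E p Z + zc E q Z) := by
  have hw : rotU E p q hpq ((rc:ℂ) • E p + (rc:ℂ) • E q) = E p := by
    rw [map_add, _root_.map_smul, _root_.map_smul, rotU_apply_p, rotU_apply_q]
    simp only [smul_add, smul_sub, smul_smul]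
    rw [rc_sq]
    module
  calc zc E p (rotU E p q hpq Z)
      = inner ℂ (rotU E p q hpq ((rc:ℂ) • E p + (rc:ℂ) • E q)) (rotU E p q hpq Z) := by
        rw [hw]; rfl
    _ = inner ℂ ((rc:ℂ) • E p + (rc:ℂ) • E q) Z := LinearIsometryEquiv.inner_map_map _ _ _
    _ = (rc:ℂ) * (zc E p Z + zc E q Z) := by
        rw [inner_add_left, inner_smul_left, inner_smul_left, Complex.conj_ofReal]
        show (rc:ℂ) * zc E p Z + (rc:ℂ) * zc E q Z = _
        ring

end Rotation

section Moments
variable [MeasurableSpace V] [BorelSpace V] (σ : Measure V)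

/-- second moment -/
noncomputable def M2 (E : OrthonormalBasis (Fin k) ℂ V) (a b : Fin k) : ℂ :=
  ∫ Z, zc E a Z * starRingEnd ℂ (zc E b Z) ∂σ

/-- fourth moment -/
noncomputable def M4 (E : OrthonormalBasis (Fin k) ℂ V) (a b c d : Fin k) : ℂ :=
  ∫ Z, zc E a Z * starRingEnd ℂ (zc E b Z) * zc E c Z * starRingEnd ℂ (zc E d Z) ∂σ

variable [IsProbabilityMeasure σ]

lemma cont2 (a b : Fin k) :
    Continuous fun Z : V => zc E a Z * starRingEnd ℂ (zc E b Z) := by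
  have h := continuous_zc E (k := k)
  exact (h a).mul ((h b).star)

lemma cont4 (a b c d : Fin k) :
    Continuous fun Z : V =>
      zc E a Z * starRingEnd ℂ (zc E b Z) * zc E c Z * starRingEnd ℂ (zc E d Z) := by
  have h := continuous_zc E (k := k)
  exact (((h a).mul ((h b).star)).mul (h c)).mul ((h d).star)

lemma bound_zc (a : Fin k) {Z : V} (hZ : ‖Z‖ = 1) : ‖zc E a Z‖ ≤ 1 :=
  (norm_zc_le E a Z).trans_eq hZ

lemma integrable2 (hsupp : σ (Metric.sphere (0 : V) 1)ᶜ = 0) (a b : Fin k) :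
    Integrable (fun Z => zc E a Z * starRingEnd ℂ (zc E b Z)) σ := by
  refine integrable_bdd hsupp (cont2 E a b) (C := 1) fun Z hZ => ?_
  rw [norm_mul, RCLike.norm_conj]
  exact mul_le_one₀ (bound_zc E a hZ) (norm_nonneg _) (bound_zc E b hZ)

lemma integrable4 (hsupp : σ (Metric.sphere (0 : V) 1)ᶜ = 0) (a b c d : Fin k) :
    Integrable (fun Z =>
      zc E a Z * starRingEnd ℂ (zc E b Z) * zc E c Z * starRingEnd ℂ (zc E d Z)) σ := by
  refine integrable_bdd hsupp (cont4 E a b c d) (C := 1) fun Z hZ => ?_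
  rw [norm_mul, norm_mul, norm_mul, RCLike.norm_conj, RCLike.norm_conj]
  have h1 := bound_zc E a hZ; have h2 := bound_zc E b hZ
  have h3 := bound_zc E c hZ; have h4 := bound_zc E d hZ
  have := mul_le_one₀ (mul_le_one₀ (mul_le_one₀ h1 (norm_nonneg _) h2)
    (norm_nonneg _) h3) (norm_nonneg _) h4
  exact this

lemma ae_sum_sq (hsupp : σ (Metric.sphere (0 : V) 1)ᶜ = 0) :
    ∀ᵐ Z ∂σ, ∑ b : Fin k, zc E b Z * starRingEnd ℂ (zc E b Z) = 1 := by
  filter_upwards [ae_norm_one hsupp] with Z hZ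
  have h := E.sum_inner_mul_inner Z Z
  have h2 : (inner ℂ Z Z : ℂ) = 1 := by
    rw [inner_self_eq_norm_sq_to_K, hZ]; norm_num
  calc ∑ b : Fin k, zc E b Z * starRingEnd ℂ (zc E b Z)
      = ∑ b : Fin k, (inner ℂ Z (E b) : ℂ) * inner ℂ (E b) Z := by
        refine Finset.sum_congr rfl fun b _ => ?_
        rw [zc, ← inner_conj_symm Z (E b)]
        ring
    _ = 1 := by rw [h, h2]

lemma M2_offdiag (hsupp : σ (Metric.sphere (0 : V) 1)ᶜ = 0)
    (hinv : ∀ f : V ≃ₗᵢ[ℂ] V, Measure.map f σ = σ) {a b : Fin k} (hab : a ≠ b) :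
    M2 σ E a b = 0 := by
  classical
  set u : Fin k → ℂ := fun i => if i = a then Complex.I else 1 with hu_def
  have hu : ∀ i, u i ≠ 0 := by
    intro i; by_cases h : i = a <;> simp [hu_def, h, Complex.I_ne_zero]
  have hu1 : ∀ i, ‖u i‖ = 1 := by
    intro i; by_cases h : i = a <;> simp [hu_def, h]
  have hstep := integral_comp_unitary hinv (phaseU E u hu hu1)
    (fun Z => zc E a Z * starRingEnd ℂ (zc E b Z))
  have hua : u a = Complex.I := by simp [hu_def]
  have hub : u b = 1 := by simp [hu_def, Ne.symm hab]
  have hptw : (fun Z => zc E a ((phaseU E u hu hu1) Z)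
      * starRingEnd ℂ (zc E b ((phaseU E u hu hu1) Z)))
      = fun Z => Complex.I * (zc E a Z * starRingEnd ℂ (zc E b Z)) := by
    funext Z
    rw [phase_zc, phase_zc, hua, hub, one_mul]
    ring
  rw [hptw, integral_const_mul] at hstep
  have h0 : (Complex.I - 1) * M2 σ E a b = 0 := by
    rw [M2]; linear_combination (-1 : ℂ) * hstep
  rcases mul_eq_zero.1 h0 with h | h
  · exact absurd (sub_eq_zero.1 h) (by norm_num [Complex.ext_iff])
  · exact h

lemma M2_diag (hsupp : σ (Metric.sphere (0 : V) 1)ᶜ = 0)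
    (hinv : ∀ f : V ≃ₗᵢ[ℂ] V, Measure.map f σ = σ) (hk : 1 ≤ k) (a : Fin k) :
    M2 σ E a a = 1 / (k : ℂ) := by
  have hswap : ∀ b, M2 σ E b b = M2 σ E a a := by
    intro b
    have hstep := integral_comp_unitary hinv (permU E (Equiv.swap a b))
      (fun Z => zc E b Z * starRingEnd ℂ (zc E b Z))
    rw [M2, hstep]
    have hptw : (fun Z => zc E b ((permU E (Equiv.swap a b)) Z)
        * starRingEnd ℂ (zc E b ((permU E (Equiv.swap a b)) Z)))
        = fun Z => zc E a Z * starRingEnd ℂ (zc E a Z) := by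
      funext Z
      rw [perm_zc]
      rw [Equiv.symm_swap, Equiv.swap_apply_right]
    rw [hptw, M2]
  have hsum : ∑ b : Fin k, M2 σ E b b = 1 := by
    have hint : ∀ b ∈ Finset.univ, Integrable
        (fun Z => zc E b Z * starRingEnd ℂ (zc E b Z)) σ :=
      fun b _ => integrable2 E σ hsupp b b
    rw [show ∑ b : Fin k, M2 σ E b b
        = ∫ Z, ∑ b : Fin k, zc E b Z * starRingEnd ℂ (zc E b Z) ∂σ from
      (integral_finset_sum Finset.univ hint).symm]
    rw [integral_congr_ae (g := fun _ => (1:ℂ)) (ae_sum_sq E σ hsupp)]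
    simp
  have hk0 : (k : ℂ) ≠ 0 := Nat.cast_ne_zero.2 (by omega)
  have hconst : ∑ b : Fin k, M2 σ E b b = (k : ℂ) * M2 σ E a a := by
    rw [Finset.sum_congr rfl fun b _ => hswap b, Finset.sum_const, Finset.card_univ,
      Fintype.card_fin, nsmul_eq_mul]
  rw [hconst] at hsum
  field_simp
  linear_combination hsum

lemma M2_eq (hsupp : σ (Metric.sphere (0 : V) 1)ᶜ = 0)
    (hinv : ∀ f : V ≃ₗᵢ[ℂ] V, Measure.map f σ = σ) (hk : 1 ≤ k) (a b : Fin k) :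
    M2 σ E a b = if a = b then 1 / (k : ℂ) else 0 := by
  by_cases h : a = b
  · subst h; rw [if_pos rfl]; exact M2_diag E σ hsupp hinv hk a
  · rw [if_neg h]; exact M2_offdiag E σ hsupp hinv h

end Moments

lemma comb {α : Type*} [DecidableEq α] {a b c d : α}
    (h : ∀ p : α, ((if a = p then 1 else 0) + (if c = p then 1 else 0) : ℤ)
      = (if b = p then 1 else 0) + (if d = p then 1 else 0)) :
    (a = b ∧ c = d) ∨ (a = d ∧ c = b) := by
  have ha := h a
  rw [if_pos rfl] at ha
  by_cases hba : b = a
  · by_cases hca : c = a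
    · rw [if_pos hca] at ha
      have hda : d = a := by
        by_contra hda
        rw [if_pos hba, if_neg hda] at ha; omega
      exact Or.inl ⟨hba.symm, hca.trans hda.symm⟩
    · have hda : ¬ d = a := by
        intro hda
        rw [if_neg hca, if_pos hba, if_pos hda] at ha; omega
      have hc := h c
      rw [if_pos rfl] at hc
      have hac : ¬ a = c := fun h' => hca h'.symm
      have hbc : ¬ b = c := fun h' => hca (h'.symm.trans hba)
      rw [if_neg hac, if_neg hbc] at hc
      have hdc : d = c := by
        by_contra hdc; rw [if_neg hdc] at hc; omega
      exact Or.inl ⟨hba.symm, hdc.symm⟩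
  · rw [if_neg hba] at ha
    have hda : d = a := by
      by_contra hda
      rw [if_neg hda] at ha
      by_cases hca : c = a
      · rw [if_pos hca] at ha; omega
      · rw [if_neg hca] at ha; omega
    have hca : ¬ c = a := by
      intro hca; rw [if_pos hca, if_pos hda] at ha; omega
    have hc := h c
    rw [if_pos rfl] at hc
    have hac : ¬ a = c := fun h' => hca h'.symm
    have hdc : ¬ d = c := fun h' => hac (hda.symm.trans h')
    rw [if_neg hac, if_neg hdc] at hc
    have hbc : b = c := by
      by_contra hbc; rw [if_neg hbc] at hc; omega
    exact Or.inr ⟨hda.symm, hbc.symm⟩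

section Moment4
variable [MeasurableSpace V] [BorelSpace V] (σ : Measure V) [IsProbabilityMeasure σ]

lemma M4_vanish (hsupp : σ (Metric.sphere (0 : V) 1)ᶜ = 0)
    (hinv : ∀ f : V ≃ₗᵢ[ℂ] V, Measure.map f σ = σ) {a b c d : Fin k}
    (h : ¬((a = b ∧ c = d) ∨ (a = d ∧ c = b))) : M4 σ E a b c d = 0 := by
  classical
  have hcomb : ¬ ∀ p : Fin k, ((if a = p then 1 else 0) + (if c = p then 1 else 0) : ℤ)
      = (if b = p then 1 else 0) + (if d = p then 1 else 0) := fun hall => h (comb hall)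
  push_neg at hcomb
  obtain ⟨p, hp⟩ := hcomb
  set u : Fin k → ℂ := fun i => if i = p then Complex.I else 1 with hu_def
  have hu : ∀ i, u i ≠ 0 := by
    intro i; by_cases h' : i = p <;> simp [hu_def, h', Complex.I_ne_zero]
  have hu1 : ∀ i, ‖u i‖ = 1 := by
    intro i; by_cases h' : i = p <;> simp [hu_def, h']
  have hstep := integral_comp_unitary hinv (phaseU E u hu hu1)
    (fun Z => zc E a Z * starRingEnd ℂ (zc E b Z) * zc E c Z * starRingEnd ℂ (zc E d Z))
  set v : ℂ := u a * starRingEnd ℂ (u b) * u c * starRingEnd ℂ (u d) with hv_def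
  have hptw : (fun Z => zc E a ((phaseU E u hu hu1) Z)
      * starRingEnd ℂ (zc E b ((phaseU E u hu hu1) Z))
      * zc E c ((phaseU E u hu hu1) Z)
      * starRingEnd ℂ (zc E d ((phaseU E u hu hu1) Z)))
      = fun Z => v * (zc E a Z * starRingEnd ℂ (zc E b Z)
        * zc E c Z * starRingEnd ℂ (zc E d Z)) := by
    funext Z
    rw [phase_zc, phase_zc, phase_zc, phase_zc, hv_def]
    simp only [map_mul]
    ring
  rw [hptw, integral_const_mul] at hstep
  have hv : v ≠ 1 := by
    clear hstep hptw
    rw [hv_def, hu_def]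
    by_cases h1 : a = p <;> by_cases h2 : b = p <;> by_cases h3 : c = p <;>
      by_cases h4 : d = p <;>
      simp only [h1, h2, h3, h4, if_true, if_false] at hp ⊢ <;>
      simp_all [Complex.conj_I] <;>
      norm_num [Complex.ext_iff]
  have h0 : (v - 1) * M4 σ E a b c d = 0 := by
    rw [M4]; linear_combination (-1 : ℂ) * hstep
  rcases mul_eq_zero.1 h0 with h' | h'
  · exact absurd (sub_eq_zero.1 h') hv
  · exact h'

lemma M4_perm (hinv : ∀ f : V ≃ₗᵢ[ℂ] V, Measure.map f σ = σ)
    (π : Equiv.Perm (Fin k)) (a b c d : Fin k) :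
    M4 σ E a b c d = M4 σ E (π.symm a) (π.symm b) (π.symm c) (π.symm d) := by
  rw [M4, integral_comp_unitary hinv (permU E π), M4]
  congr 1
  funext Z
  simp only [perm_zc]

lemma M4_swap24 (a b c d : Fin k) : M4 σ E a b c d = M4 σ E a d c b := by
  rw [M4, M4]; congr 1; funext Z; ring

lemma M4_sum (hsupp : σ (Metric.sphere (0 : V) 1)ᶜ = 0) (a b : Fin k) :
    ∑ c : Fin k, M4 σ E a b c c = M2 σ E a b := by
  rw [M2, show ∑ c : Fin k, M4 σ E a b c c
      = ∫ Z, ∑ c : Fin k, zc E a Z * starRingEnd ℂ (zc E b Z)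
        * zc E c Z * starRingEnd ℂ (zc E c Z) ∂σ from
    (integral_finset_sum Finset.univ fun c _ => integrable4 E σ hsupp a b c c).symm]
  refine integral_congr_ae ?_
  filter_upwards [ae_sum_sq E σ hsupp] with Z hZ
  calc ∑ c : Fin k, zc E a Z * starRingEnd ℂ (zc E b Z)
        * zc E c Z * starRingEnd ℂ (zc E c Z)
      = (zc E a Z * starRingEnd ℂ (zc E b Z))
        * ∑ c : Fin k, zc E c Z * starRingEnd ℂ (zc E c Z) := by
        rw [Finset.mul_sum]; exact Finset.sum_congr rfl fun c _ => by ring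
    _ = zc E a Z * starRingEnd ℂ (zc E b Z) := by rw [hZ, mul_one]

lemma M4_diag_eq (hinv : ∀ f : V ≃ₗᵢ[ℂ] V, Measure.map f σ = σ) (p p' : Fin k) :
    M4 σ E p p p p = M4 σ E p' p' p' p' := by
  rw [M4_perm E σ hinv (Equiv.swap p p') p p p p, Equiv.symm_swap, Equiv.swap_apply_left]

lemma M4_offdiag_eq (hinv : ∀ f : V ≃ₗᵢ[ℂ] V, Measure.map f σ = σ)
    {p q p' q' : Fin k} (hpq : p ≠ q) (hpq' : p' ≠ q') :
    M4 σ E p p q q = M4 σ E p' p' q' q' := by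
  classical
  set e : Equiv.Perm (Fin k) :=
    (Equiv.swap p p').trans (Equiv.swap ((Equiv.swap p p') q) q') with he_def
  have h1 : (Equiv.swap p p') q ≠ p' := by
    intro hq
    have h' := congrArg (Equiv.swap p p') hq
    rw [Equiv.swap_apply_self, Equiv.swap_apply_right] at h'
    exact hpq h'.symm
  have hep : e p = p' := by
    show Equiv.swap ((Equiv.swap p p') q) q' ((Equiv.swap p p') p) = p'
    rw [Equiv.swap_apply_left]
    exact Equiv.swap_apply_of_ne_of_ne (Ne.symm h1) hpq'
  have heq : e q = q' := Equiv.swap_apply_left _ _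
  have h2 : e.symm p' = p := by rw [Equiv.symm_apply_eq, hep]
  have h3 : e.symm q' = q := by rw [Equiv.symm_apply_eq, heq]
  have h := M4_perm E σ hinv e p' p' q' q'
  rw [h2, h3] at h
  exact h.symm

lemma integral_quadsum {ι : Type*} [Fintype ι] (f : ι → ι → ι → ι → V → ℂ)
    (hf : ∀ a b c d, Integrable (f a b c d) σ) :
    ∫ Z, ∑ a : ι, ∑ b : ι, ∑ c : ι, ∑ d : ι, f a b c d Z ∂σ
      = ∑ a : ι, ∑ b : ι, ∑ c : ι, ∑ d : ι, ∫ Z, f a b c d Z ∂σ := by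
  rw [integral_finset_sum _ (fun a _ => integrable_finset_sum _ fun b _ =>
    integrable_finset_sum _ fun c _ => integrable_finset_sum _ fun d _ => hf a b c d)]
  refine Finset.sum_congr rfl fun a _ => ?_
  rw [integral_finset_sum _ (fun b _ => integrable_finset_sum _ fun c _ =>
    integrable_finset_sum _ fun d _ => hf a b c d)]
  refine Finset.sum_congr rfl fun b _ => ?_
  rw [integral_finset_sum _ (fun c _ => integrable_finset_sum _ fun d _ => hf a b c d)]
  refine Finset.sum_congr rfl fun c _ => ?_
  exact integral_finset_sum _ fun d _ => hf a b c d

lemma rc4 : (rc : ℂ)^4 = 1/4 := by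
  linear_combination ((rc:ℂ) * (rc:ℂ) + 1/2) * rc_sq

lemma M4_rot (hsupp : σ (Metric.sphere (0 : V) 1)ᶜ = 0)
    (hinv : ∀ f : V ≃ₗᵢ[ℂ] V, Measure.map f σ = σ) {p q : Fin k} (hpq : p ≠ q) :
    M4 σ E p p p p = 2 * M4 σ E p p q q := by
  classical
  have hstep := integral_comp_unitary hinv (rotU E p q hpq)
    (fun Z => zc E p Z * starRingEnd ℂ (zc E p Z) * zc E p Z * starRingEnd ℂ (zc E p Z))
  set idx : Fin 2 → Fin k := ![p, q] with hidx
  have hptw : (fun Z => zc E p ((rotU E p q hpq) Z)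
      * starRingEnd ℂ (zc E p ((rotU E p q hpq) Z))
      * zc E p ((rotU E p q hpq) Z)
      * starRingEnd ℂ (zc E p ((rotU E p q hpq) Z)))
      = fun Z => (rc:ℂ)^4 * ∑ a : Fin 2, ∑ b : Fin 2, ∑ c : Fin 2, ∑ d : Fin 2,
          zc E (idx a) Z * starRingEnd ℂ (zc E (idx b) Z)
          * zc E (idx c) Z * starRingEnd ℂ (zc E (idx d) Z) := by
    funext Z
    rw [rot_zc_p E p q hpq]
    simp only [Fin.sum_univ_two, hidx, Matrix.cons_val_zero, Matrix.cons_val_one,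
      Matrix.head_cons, map_mul, map_add, Complex.conj_ofReal]
    ring
  rw [hptw, integral_const_mul] at hstep
  have hqs : ∫ Z, ∑ a : Fin 2, ∑ b : Fin 2, ∑ c : Fin 2, ∑ d : Fin 2,
      zc E (idx a) Z * starRingEnd ℂ (zc E (idx b) Z)
      * zc E (idx c) Z * starRingEnd ℂ (zc E (idx d) Z) ∂σ
      = ∑ a : Fin 2, ∑ b : Fin 2, ∑ c : Fin 2, ∑ d : Fin 2,
        M4 σ E (idx a) (idx b) (idx c) (idx d) :=
    integral_quadsum σ _ (fun a b c d => integrable4 E σ hsupp _ _ _ _)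
  rw [hqs] at hstep
  simp only [Fin.sum_univ_two, hidx, Matrix.cons_val_zero, Matrix.cons_val_one,
    Matrix.head_cons] at hstep
  have hqp : q ≠ p := Ne.symm hpq
  -- vanishing terms
  have v1 : M4 σ E p p p q = 0 := M4_vanish E σ hsupp hinv (by simp [hpq, hqp])
  have v2 : M4 σ E p p q p = 0 := M4_vanish E σ hsupp hinv (by simp [hpq, hqp])
  have v3 : M4 σ E p q p p = 0 := M4_vanish E σ hsupp hinv (by simp [hpq, hqp])
  have v4 : M4 σ E q p p p = 0 := M4_vanish E σ hsupp hinv (by simp [hpq, hqp])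
  have v5 : M4 σ E p q p q = 0 := M4_vanish E σ hsupp hinv (by simp [hpq, hqp])
  have v6 : M4 σ E q p q p = 0 := M4_vanish E σ hsupp hinv (by simp [hpq, hqp])
  have v7 : M4 σ E q q q p = 0 := M4_vanish E σ hsupp hinv (by simp [hpq, hqp])
  have v8 : M4 σ E q q p q = 0 := M4_vanish E σ hsupp hinv (by simp [hpq, hqp])
  have v9 : M4 σ E q p q q = 0 := M4_vanish E σ hsupp hinv (by simp [hpq, hqp])
  have v10 : M4 σ E p q q q = 0 := M4_vanish E σ hsupp hinv (by simp [hpq, hqp])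
  have e1 : M4 σ E q q q q = M4 σ E p p p p := M4_diag_eq E σ hinv q p
  have e2 : M4 σ E q q p p = M4 σ E p p q q := M4_offdiag_eq E σ hinv hqp hpq
  have e3 : M4 σ E p q q p = M4 σ E p p q q := M4_swap24 E σ p q q p
  have e4 : M4 σ E q p p q = M4 σ E p p q q := by
    rw [M4_swap24 E σ q p p q]
    exact M4_offdiag_eq E σ hinv hqp hpq
  rw [v1, v2, v3, v4, v5, v6, v7, v8, v9, v10, e1, e2, e3, e4, rc4] at hstep
  have hM : M4 σ E p p p p = ∫ Z, zc E p Z * starRingEnd ℂ (zc E p Z)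
      * zc E p Z * starRingEnd ℂ (zc E p Z) ∂σ := rfl
  rw [← hM] at hstep
  linear_combination 2 * hstep

lemma M4_B (hsupp : σ (Metric.sphere (0 : V) 1)ᶜ = 0)
    (hinv : ∀ f : V ≃ₗᵢ[ℂ] V, Measure.map f σ = σ) (hk : 1 ≤ k)
    {p q : Fin k} (hpq : p ≠ q) :
    M4 σ E p p q q = 1 / ((k : ℂ) * (k + 1)) := by
  have hsum := M4_sum E σ hsupp p p
  rw [M2_diag E σ hsupp hinv hk] at hsum
  have hsplit : ∑ c : Fin k, M4 σ E p p c c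
      = M4 σ E p p p p + ∑ c ∈ Finset.univ.erase p, M4 σ E p p c c :=
    (Finset.add_sum_erase _ _ (Finset.mem_univ p)).symm
  have hconst : ∑ c ∈ Finset.univ.erase p, M4 σ E p p c c
      = ((k : ℂ) - 1) * M4 σ E p p q q := by
    rw [Finset.sum_congr rfl (fun c hc => M4_offdiag_eq E σ hinv
      (Ne.symm (Finset.mem_erase.1 hc).1) hpq), Finset.sum_const,
      Finset.card_erase_of_mem (Finset.mem_univ p), Finset.card_univ, Fintype.card_fin,
      nsmul_eq_mul, Nat.cast_sub hk, Nat.cast_one]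
  have hA := M4_rot E σ hsupp hinv hpq
  rw [hsplit, hconst, hA] at hsum
  have hk0 : (k : ℂ) ≠ 0 := Nat.cast_ne_zero.2 (by omega)
  have hk1 : (k : ℂ) + 1 ≠ 0 := by
    intro h
    have := Nat.cast_add_one_ne_zero (R := ℂ) k
    exact this (by push_cast; linear_combination h)
  field_simp
  field_simp at hsum
  linear_combination hsum

lemma M4_A (hsupp : σ (Metric.sphere (0 : V) 1)ᶜ = 0)
    (hinv : ∀ f : V ≃ₗᵢ[ℂ] V, Measure.map f σ = σ) (hk : 1 ≤ k) (p : Fin k) :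
    M4 σ E p p p p = 2 / ((k : ℂ) * (k + 1)) := by
  by_cases hk2 : 2 ≤ k
  · have hnt : Nontrivial (Fin k) := Fin.nontrivial_iff_two_le.mpr hk2
    obtain ⟨q, hq⟩ := exists_ne p
    rw [M4_rot E σ hsupp hinv (Ne.symm hq), M4_B E σ hsupp hinv hk (Ne.symm hq)]
    ring
  · have hk1 : k = 1 := by omega
    subst hk1
    have hsum := M4_sum E σ hsupp p p
    rw [M2_diag E σ hsupp hinv hk] at hsum
    have hp0 : p = 0 := Subsingleton.elim p 0
    subst hp0
    rw [Fin.sum_univ_one] at hsum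
    rw [hsum]
    norm_num

end Moment4

section Final
variable [MeasurableSpace V] [BorelSpace V] (σ : Measure V) [IsProbabilityMeasure σ]

lemma M4_eq (hsupp : σ (Metric.sphere (0 : V) 1)ᶜ = 0)
    (hinv : ∀ f : V ≃ₗᵢ[ℂ] V, Measure.map f σ = σ) (hk : 1 ≤ k) (a b c d : Fin k) :
    M4 σ E a b c d = ((if a = b then 1 else 0) * (if c = d then 1 else 0)
      + (if a = d then 1 else 0) * (if c = b then 1 else 0)) / ((k : ℂ) * ((k : ℂ) + 1)) := by
  by_cases hab : a = b
  · subst hab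
    by_cases hcd : c = d
    · subst hcd
      by_cases hac : a = c
      · subst hac
        rw [M4_A E σ hsupp hinv hk a]
        norm_num
      · rw [M4_B E σ hsupp hinv hk hac]
        simp [hac]
    · have h0 : M4 σ E a a c d = 0 := M4_vanish E σ hsupp hinv (by
        rintro (⟨-, h⟩ | ⟨had, hca⟩)
        · exact hcd h
        · exact hcd (by grind))
      have h2 : (if a = d then (1:ℂ) else 0) * (if c = a then 1 else 0) = 0 := by
        by_cases had : a = d
        · rw [if_neg (fun hca : c = a => hcd (hca.trans had))]; ring
        · rw [if_neg had]; ring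
      rw [h0, if_pos rfl, if_neg hcd, h2]
      norm_num
  · by_cases had : a = d
    · subst had
      by_cases hcb : c = b
      · subst hcb
        have hac : a ≠ c := fun h => hab h
        rw [M4_swap24 E σ a c c a, M4_B E σ hsupp hinv hk hac]
        simp [hab, hac]
      · have h0 : M4 σ E a b c a = 0 := M4_vanish E σ hsupp hinv (by
          rintro (⟨h, -⟩ | ⟨-, h⟩)
          · exact hab h
          · exact hcb h)
        rw [h0]
        simp [hab, hcb]
    · have h0 : M4 σ E a b c d = 0 := M4_vanish E σ hsupp hinv (by
        rintro (⟨h, -⟩ | ⟨h, -⟩)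
        · exact hab h
        · exact had h)
      rw [h0]
      simp [hab, had]

end Final
end AvgAux

open AvgAux in
/-- **Sphere average of `Ric_k^⊥`.** Let `V` be a `k`-dimensional complex inner
product space (`k ≥ 1`) with orthonormal basis `E`, let `R` be a Kähler
curvature-type tensor on `V`, let `S_k = Σ_{i,j} R(E_i,Ē_i,E_j,Ē_j)`, and let `σ`
be the rotation-invariant probability measure on the unit sphere of `V`. Then
`∫ [Σ_j R(Z,Z̄,E_j,Ē_j) − R(Z,Z̄,Z,Z̄)] dσ(Z) = ((k−1)/(k(k+1))) · S_k`. -/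
theorem average_Ric_k_perp
    {V : Type*} [NormedAddCommGroup V] [InnerProductSpace ℂ V]
    [MeasurableSpace V] [BorelSpace V]
    (k : ℕ) (hk : 1 ≤ k) (E : OrthonormalBasis (Fin k) ℂ V)
    (R : V → V → V → V → ℂ) (hR : IsKahlerCurvatureTensor R)
    (σ : Measure V) [IsProbabilityMeasure σ]
    (hsupp : σ (Metric.sphere (0 : V) 1)ᶜ = 0)
    (hinv : ∀ f : V ≃ₗᵢ[ℂ] V, Measure.map f σ = σ) :
    ∫ Z, ((∑ j : Fin k, R Z Z (E j) (E j)) - R Z Z Z Z) ∂σ =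
      (((k : ℂ) - 1) / (k * (k + 1))) * ∑ i : Fin k, ∑ j : Fin k,
        R (E i) (E i) (E j) (E j) := by
  classical
  have hk0 : (k : ℂ) ≠ 0 := Nat.cast_ne_zero.2 (by omega)
  have hk1 : (k : ℂ) + 1 ≠ 0 := by
    intro h
    exact Nat.cast_add_one_ne_zero (R := ℂ) k (by push_cast; linear_combination h)
  -- pointwise expansion
  have hptw : ∀ Z : V, (∑ j : Fin k, R Z Z (E j) (E j)) - R Z Z Z Z
      = (∑ a : Fin k, ∑ b : Fin k, zc E a Z * starRingEnd ℂ (zc E b Z)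
          * ∑ j : Fin k, R (E a) (E b) (E j) (E j))
        - ∑ a : Fin k, ∑ b : Fin k, ∑ c : Fin k, ∑ d : Fin k,
            zc E a Z * starRingEnd ℂ (zc E b Z) * zc E c Z
              * starRingEnd ℂ (zc E d Z) * R (E a) (E b) (E c) (E d) := by
    intro Z
    congr 1
    · calc ∑ j : Fin k, R Z Z (E j) (E j)
          = ∑ j : Fin k, ∑ a : Fin k, ∑ b : Fin k,
              zc E a Z * starRingEnd ℂ (zc E b Z) * R (E a) (E b) (E j) (E j) :=
            Finset.sum_congr rfl fun j _ => expand2 E hR Z Z (E j) (E j)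
        _ = ∑ a : Fin k, ∑ j : Fin k, ∑ b : Fin k,
              zc E a Z * starRingEnd ℂ (zc E b Z) * R (E a) (E b) (E j) (E j) :=
            Finset.sum_comm
        _ = ∑ a : Fin k, ∑ b : Fin k, ∑ j : Fin k,
              zc E a Z * starRingEnd ℂ (zc E b Z) * R (E a) (E b) (E j) (E j) :=
            Finset.sum_congr rfl fun a _ => Finset.sum_comm
        _ = ∑ a : Fin k, ∑ b : Fin k, zc E a Z * starRingEnd ℂ (zc E b Z)
              * ∑ j : Fin k, R (E a) (E b) (E j) (E j) :=
            Finset.sum_congr rfl fun a _ => Finset.sum_congr rfl fun b _ =>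
              (Finset.mul_sum _ _ _).symm
    · exact expand4 E hR Z Z Z Z
  simp only [hptw]
  -- integrability
  have hint2 : ∀ a b : Fin k, Integrable (fun Z =>
      zc E a Z * starRingEnd ℂ (zc E b Z) * ∑ j : Fin k, R (E a) (E b) (E j) (E j)) σ :=
    fun a b => (integrable2 E σ hsupp a b).mul_const _
  have hint4 : ∀ a b c d : Fin k, Integrable (fun Z =>
      zc E a Z * starRingEnd ℂ (zc E b Z) * zc E c Z * starRingEnd ℂ (zc E d Z)
        * R (E a) (E b) (E c) (E d)) σ :=
    fun a b c d => (integrable4 E σ hsupp a b c d).mul_const _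
  rw [integral_sub
    (integrable_finset_sum _ fun a _ => integrable_finset_sum _ fun b _ => hint2 a b)
    (integrable_finset_sum _ fun a _ => integrable_finset_sum _ fun b _ =>
      integrable_finset_sum _ fun c _ => integrable_finset_sum _ fun d _ => hint4 a b c d)]
  -- first piece
  have hval2 : ∀ a b : Fin k, ∫ Z, zc E a Z * starRingEnd ℂ (zc E b Z) ∂σ
      = if a = b then 1 / (k : ℂ) else 0 := fun a b => M2_eq E σ hsupp hinv hk a b
  have h1 : ∫ Z, ∑ a : Fin k, ∑ b : Fin k, zc E a Z * starRingEnd ℂ (zc E b Z)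
      * ∑ j : Fin k, R (E a) (E b) (E j) (E j) ∂σ
      = (1 / (k : ℂ)) * ∑ a : Fin k, ∑ j : Fin k, R (E a) (E a) (E j) (E j) := by
    rw [integral_finset_sum _ fun a _ => integrable_finset_sum _ fun b _ => hint2 a b]
    rw [Finset.mul_sum]
    refine Finset.sum_congr rfl fun a _ => ?_
    rw [integral_finset_sum _ fun b _ => hint2 a b]
    have : ∀ b : Fin k, ∫ Z, zc E a Z * starRingEnd ℂ (zc E b Z)
        * ∑ j : Fin k, R (E a) (E b) (E j) (E j) ∂σ
        = (if a = b then 1 / (k : ℂ) else 0) * ∑ j : Fin k, R (E a) (E b) (E j) (E j) := by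
      intro b
      rw [MeasureTheory.integral_mul_const, hval2]
    simp only [this, ite_mul, zero_mul, Finset.sum_ite_eq, Finset.mem_univ, if_true]
  -- second piece
  have hval4 : ∀ a b c d : Fin k,
      ∫ Z, zc E a Z * starRingEnd ℂ (zc E b Z) * zc E c Z
        * starRingEnd ℂ (zc E d Z) ∂σ
      = ((if a = b then 1 else 0) * (if c = d then 1 else 0)
        + (if a = d then 1 else 0) * (if c = b then 1 else 0)) / ((k : ℂ) * ((k : ℂ) + 1)) :=
    fun a b c d => M4_eq E σ hsupp hinv hk a b c d
  have h2 : ∫ Z, ∑ a : Fin k, ∑ b : Fin k, ∑ c : Fin k, ∑ d : Fin k,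
      zc E a Z * starRingEnd ℂ (zc E b Z) * zc E c Z * starRingEnd ℂ (zc E d Z)
        * R (E a) (E b) (E c) (E d) ∂σ
      = (2 / ((k : ℂ) * ((k : ℂ) + 1)))
          * ∑ i : Fin k, ∑ j : Fin k, R (E i) (E i) (E j) (E j) := by
    rw [integral_quadsum σ _ (fun a b c d => (integrable4 E σ hsupp a b c d).mul_const _)]
    have hone : ∀ a b c d : Fin k,
        ∫ Z, zc E a Z * starRingEnd ℂ (zc E b Z) * zc E c Z * starRingEnd ℂ (zc E d Z)
          * R (E a) (E b) (E c) (E d) ∂σ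
        = (1 / ((k : ℂ) * ((k : ℂ) + 1)))
            * ((if a = b then (1:ℂ) else 0) * ((if c = d then (1:ℂ) else 0)
                * R (E a) (E b) (E c) (E d)))
          + (1 / ((k : ℂ) * ((k : ℂ) + 1)))
            * ((if a = d then (1:ℂ) else 0) * ((if c = b then (1:ℂ) else 0)
                * R (E a) (E b) (E c) (E d))) := by
      intro a b c d
      rw [MeasureTheory.integral_mul_const, hval4]
      ring
    have hc1 : ∑ a : Fin k, ∑ b : Fin k, ∑ c : Fin k, ∑ d : Fin k,
        (∫ Z, zc E a Z * starRingEnd ℂ (zc E b Z) * zc E c Z * starRingEnd ℂ (zc E d Z)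
          * R (E a) (E b) (E c) (E d) ∂σ)
        = (1 / ((k : ℂ) * ((k : ℂ) + 1)))
            * ∑ a : Fin k, ∑ b : Fin k, ∑ c : Fin k, ∑ d : Fin k,
              ((if a = b then (1:ℂ) else 0) * ((if c = d then (1:ℂ) else 0)
                * R (E a) (E b) (E c) (E d)))
          + (1 / ((k : ℂ) * ((k : ℂ) + 1)))
            * ∑ a : Fin k, ∑ b : Fin k, ∑ c : Fin k, ∑ d : Fin k,
              ((if a = d then (1:ℂ) else 0) * ((if c = b then (1:ℂ) else 0)
                * R (E a) (E b) (E c) (E d))) := by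
      rw [Finset.sum_congr rfl fun a _ => Finset.sum_congr rfl fun b _ =>
        Finset.sum_congr rfl fun c _ => Finset.sum_congr rfl fun d _ => hone a b c d]
      simp only [Finset.sum_add_distrib, Finset.mul_sum]
    rw [hc1]
    have part1 : ∑ a : Fin k, ∑ b : Fin k, ∑ c : Fin k, ∑ d : Fin k,
        (if a = b then (1:ℂ) else 0) * ((if c = d then (1:ℂ) else 0)
          * R (E a) (E b) (E c) (E d))
        = ∑ i : Fin k, ∑ j : Fin k, R (E i) (E i) (E j) (E j) := by
      simp only [ite_mul, one_mul, zero_mul, Finset.sum_ite_irrel, Finset.sum_const_zero,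
        Finset.sum_ite_eq, Finset.mem_univ, if_true]
    have part2 : ∑ a : Fin k, ∑ b : Fin k, ∑ c : Fin k, ∑ d : Fin k,
        (if a = d then (1:ℂ) else 0) * ((if c = b then (1:ℂ) else 0)
          * R (E a) (E b) (E c) (E d))
        = ∑ i : Fin k, ∑ j : Fin k, R (E i) (E i) (E j) (E j) := by
      have step : ∑ a : Fin k, ∑ b : Fin k, ∑ c : Fin k, ∑ d : Fin k,
          (if a = d then (1:ℂ) else 0) * ((if c = b then (1:ℂ) else 0)
            * R (E a) (E b) (E c) (E d))
          = ∑ a : Fin k, ∑ b : Fin k, R (E a) (E b) (E b) (E a) := by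
        simp only [ite_mul, one_mul, zero_mul, Finset.sum_ite_irrel, Finset.sum_const_zero,
          Finset.sum_ite_eq, Finset.sum_ite_eq', Finset.mem_univ, if_true]
      rw [step]
      calc ∑ a : Fin k, ∑ b : Fin k, R (E a) (E b) (E b) (E a)
          = ∑ a : Fin k, ∑ b : Fin k, R (E b) (E b) (E a) (E a) :=
            Finset.sum_congr rfl fun a _ => Finset.sum_congr rfl fun b _ =>
              hR.symm₁₃ (E a) (E b) (E b) (E a)
        _ = ∑ i : Fin k, ∑ j : Fin k, R (E i) (E i) (E j) (E j) := Finset.sum_comm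
    rw [part1, part2]
    ring
  rw [h1, h2]
  rw [← sub_mul]
  congr 1
  field_simp
  ring
end

section
/- Let k ≥ 1, let V be a complex inner product space of dimension k with orthonormal basis (E_1,…,E_k), let R be a Kähler curvature-type tensor on V, and set S_k = Σ_{i,j=1}^k R(E_i,Ē_i,E_j,Ē_j). Let σ denote the rotation-invariant probability measure on the unit sphere of V. Then ∫ [Σ_{j=1}^k R(Z,Z̄,E_j,Ē_j) + R(Z,Z̄,Z,Z̄)] dσ(Z) = ((k+3)/(k(k+1))) · S_k. -/
set_option linter.unusedSectionVars false


open MeasureTheory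

namespace AvgRic
variable {V : Type*} [NormedAddCommGroup V] [InnerProductSpace ℂ V]
  [MeasurableSpace V] [BorelSpace V] {k : ℕ}

noncomputable def zc (E : OrthonormalBasis (Fin k) ℂ V) (i : Fin k) (Z : V) : ℂ :=
  inner ℂ (E i) Z

lemma zc_cont (E : OrthonormalBasis (Fin k) ℂ V) (i : Fin k) : Continuous (zc E i) :=
  Continuous.inner continuous_const continuous_id

lemma norm_zc_le (E : OrthonormalBasis (Fin k) ℂ V) (i : Fin k) (Z : V) :
    ‖zc E i Z‖ ≤ ‖Z‖ := by
  have := norm_inner_le_norm (𝕜 := ℂ) (E i) Z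
  simpa [zc, E.orthonormal.1 i] using this

lemma sum_zc_smul (E : OrthonormalBasis (Fin k) ℂ V) (Z : V) :
    ∑ i, zc E i Z • E i = Z := E.sum_repr' Z

noncomputable def onb (E : OrthonormalBasis (Fin k) ℂ V) (hk : 1 ≤ k)
    (F : Fin k → V) (hF : Orthonormal ℂ F) : OrthonormalBasis (Fin k) ℂ V :=
  haveI : Nonempty (Fin k) := ⟨⟨0, hk⟩⟩
  haveI : FiniteDimensional ℂ V := E.toBasis.finiteDimensional_of_finite
  (basisOfLinearIndependentOfCardEqFinrank hF.linearIndependent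
    (by simp [Module.finrank_eq_card_basis E.toBasis])).toOrthonormalBasis
    (by rwa [coe_basisOfLinearIndependentOfCardEqFinrank])

lemma onb_apply (E : OrthonormalBasis (Fin k) ℂ V) (hk : 1 ≤ k)
    (F : Fin k → V) (hF : Orthonormal ℂ F) (i : Fin k) : onb E hk F hF i = F i := by
  haveI : Nonempty (Fin k) := ⟨⟨0, hk⟩⟩
  haveI : FiniteDimensional ℂ V := E.toBasis.finiteDimensional_of_finite
  have := Module.Basis.coe_toOrthonormalBasis (basisOfLinearIndependentOfCardEqFinrank hF.linearIndependent
    (by simp [Module.finrank_eq_card_basis E.toBasis]))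
    (by rwa [coe_basisOfLinearIndependentOfCardEqFinrank])
  calc onb E hk F hF i = _ := congrFun this i
  _ = F i := by rw [coe_basisOfLinearIndependentOfCardEqFinrank]

noncomputable def uni (E : OrthonormalBasis (Fin k) ℂ V) (hk : 1 ≤ k)
    (F : Fin k → V) (hF : Orthonormal ℂ F) : V ≃ₗᵢ[ℂ] V :=
  E.repr.trans (onb E hk F hF).repr.symm

lemma uni_apply (E : OrthonormalBasis (Fin k) ℂ V) (hk : 1 ≤ k)
    (F : Fin k → V) (hF : Orthonormal ℂ F) (i : Fin k) :
    uni E hk F hF (E i) = F i := by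
  rw [uni, LinearIsometryEquiv.trans_apply, OrthonormalBasis.repr_self,
    OrthonormalBasis.repr_symm_single, onb_apply]

lemma zc_uni (E : OrthonormalBasis (Fin k) ℂ V) (hk : 1 ≤ k)
    (F : Fin k → V) (hF : Orthonormal ℂ F) (i : Fin k) (Z : V) :
    zc E i (uni E hk F hF Z) = ∑ j, (inner ℂ (E i) (F j) : ℂ) * zc E j Z := by
  conv_lhs => rw [← sum_zc_smul E Z]
  rw [zc, map_sum]
  simp only [LinearIsometryEquiv.map_smul, uni_apply, inner_sum, inner_smul_right]
  exact Finset.sum_congr rfl fun j _ => mul_comm _ _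


open scoped ComplexConjugate

section Measure
variable (E : OrthonormalBasis (Fin k) ℂ V) (σ : Measure V) [IsProbabilityMeasure σ]

lemma ae_sphere (hsupp : σ (Metric.sphere (0 : V) 1)ᶜ = 0) : ∀ᵐ Z ∂σ, ‖Z‖ = 1 := by
  have h : ∀ᵐ Z ∂σ, Z ∈ Metric.sphere (0 : V) 1 := by
    rw [MeasureTheory.ae_iff]
    exact hsupp
  filter_upwards [h] with Z hZ
  simpa [mem_sphere_zero_iff_norm] using hZ

lemma integrable_of_sphere_bound (hsupp : σ (Metric.sphere (0 : V) 1)ᶜ = 0)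
    (f : V → ℂ) (hf : Continuous f) (C : ℝ) (hC : ∀ Z : V, ‖Z‖ = 1 → ‖f Z‖ ≤ C) :
    Integrable f σ := by
  refine (integrable_const C).mono' hf.aestronglyMeasurable ?_
  filter_upwards [ae_sphere σ hsupp] with Z hZ using hC Z hZ

noncomputable def mon2 (a b : Fin k) : V → ℂ := fun Z => zc E a Z * conj (zc E b Z)

noncomputable def mon4 (a b c d : Fin k) : V → ℂ :=
  fun Z => zc E a Z * conj (zc E b Z) * (zc E c Z * conj (zc E d Z))

lemma mon2_cont (a b : Fin k) : Continuous (mon2 E a b) :=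
  ((zc_cont E a).mul ((zc_cont E b).star))

lemma mon4_cont (a b c d : Fin k) : Continuous (mon4 E a b c d) :=
  ((mon2_cont E a b).mul (mon2_cont E c d))

lemma norm_mon2_le (a b : Fin k) (Z : V) (hZ : ‖Z‖ = 1) : ‖mon2 E a b Z‖ ≤ 1 := by
  have ha := norm_zc_le E a Z; have hb := norm_zc_le E b Z
  rw [hZ] at ha hb
  calc ‖mon2 E a b Z‖ = ‖zc E a Z‖ * ‖zc E b Z‖ := by
        rw [mon2, norm_mul, RCLike.norm_conj]
  _ ≤ 1 * 1 := by
        exact mul_le_mul ha hb (norm_nonneg _) zero_le_one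
  _ = 1 := one_mul 1

lemma norm_mon4_le (a b c d : Fin k) (Z : V) (hZ : ‖Z‖ = 1) : ‖mon4 E a b c d Z‖ ≤ 1 := by
  have h1 := norm_mon2_le E a b Z hZ; have h2 := norm_mon2_le E c d Z hZ
  calc ‖mon4 E a b c d Z‖ = ‖mon2 E a b Z‖ * ‖mon2 E c d Z‖ := norm_mul _ _
  _ ≤ 1 * 1 := mul_le_mul h1 h2 (norm_nonneg _) zero_le_one
  _ = 1 := one_mul 1

lemma integrable_mon2 (hsupp : σ (Metric.sphere (0 : V) 1)ᶜ = 0) (a b : Fin k) :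
    Integrable (mon2 E a b) σ :=
  integrable_of_sphere_bound σ hsupp _ (mon2_cont E a b) 1 (norm_mon2_le E a b)

lemma integrable_mon4 (hsupp : σ (Metric.sphere (0 : V) 1)ᶜ = 0) (a b c d : Fin k) :
    Integrable (mon4 E a b c d) σ :=
  integrable_of_sphere_bound σ hsupp _ (mon4_cont E a b c d) 1 (norm_mon4_le E a b c d)

noncomputable def M2 (a b : Fin k) : ℂ := ∫ Z, mon2 E a b Z ∂σ
noncomputable def M4 (a b c d : Fin k) : ℂ := ∫ Z, mon4 E a b c d Z ∂σ

lemma integral_comp_uni (hinv : ∀ f : V ≃ₗᵢ[ℂ] V, Measure.map f σ = σ)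
    (U : V ≃ₗᵢ[ℂ] V) (f : V → ℂ) (hf : AEStronglyMeasurable f σ) :
    ∫ Z, f Z ∂σ = ∫ Z, f (U Z) ∂σ := by
  conv_lhs => rw [← hinv U]
  exact MeasureTheory.integral_map U.continuous.measurable.aemeasurable
    (by rwa [hinv U])

end Measure

section Unitaries
variable (E : OrthonormalBasis (Fin k) ℂ V)

lemma E_inner (i j : Fin k) : (inner ℂ (E i) (E j) : ℂ) = if i = j then 1 else 0 :=
  orthonormal_iff_ite.mp E.orthonormal i j

lemma orthonormal_diag (ε : Fin k → ℂ) (hε : ∀ i, ‖ε i‖ = 1) :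
    Orthonormal ℂ (fun i => ε i • E i) := by
  rw [orthonormal_iff_ite]
  intro i j
  rw [inner_smul_left, inner_smul_right, E_inner]
  by_cases h : i = j
  · subst h
    simp only [if_true, mul_one]
    rw [mul_comm, Complex.mul_conj]
    norm_cast
    simp [Complex.normSq_eq_norm_sq, hε i]
  · simp [h]

lemma zc_uni_diag (hk : 1 ≤ k) (ε : Fin k → ℂ) (hε : ∀ i, ‖ε i‖ = 1) (i : Fin k) (Z : V) :
    zc E i (uni E hk _ (orthonormal_diag E ε hε) Z) = ε i * zc E i Z := by
  rw [zc_uni]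
  rw [Finset.sum_eq_single i]
  · rw [inner_smul_right, E_inner, if_pos rfl, mul_one]
  · intro j _ hj
    rw [inner_smul_right, E_inner, if_neg (Ne.symm hj)]
    ring
  · intro h; exact absurd (Finset.mem_univ i) h

lemma orthonormal_perm (π : Equiv.Perm (Fin k)) :
    Orthonormal ℂ (fun j => E (π j)) := E.orthonormal.comp π π.injective

lemma zc_uni_perm (hk : 1 ≤ k) (π : Equiv.Perm (Fin k)) (i : Fin k) (Z : V) :
    zc E i (uni E hk _ (orthonormal_perm E π) Z) = zc E (π.symm i) Z := by
  rw [zc_uni]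
  rw [Finset.sum_eq_single (π.symm i)]
  · rw [E_inner, if_pos (Equiv.apply_symm_apply π i).symm, one_mul]
  · intro j _ hj
    rw [E_inner, if_neg, zero_mul]
    intro h
    exact hj (by rw [h, Equiv.symm_apply_apply])
  · intro h; exact absurd (Finset.mem_univ _) h

end Unitaries

section Moments
variable (E : OrthonormalBasis (Fin k) ℂ V) (hk : 1 ≤ k) (σ : Measure V)
  [IsProbabilityMeasure σ]
  (hsupp : σ (Metric.sphere (0 : V) 1)ᶜ = 0)
  (hinv : ∀ f : V ≃ₗᵢ[ℂ] V, Measure.map f σ = σ)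

include hk hinv in
lemma M2_diag (ε : Fin k → ℂ) (hε : ∀ i, ‖ε i‖ = 1) (a b : Fin k) :
    M2 E σ a b = ε a * conj (ε b) * M2 E σ a b := by
  have key : ∀ Z, mon2 E a b (uni E hk _ (orthonormal_diag E ε hε) Z)
      = ε a * conj (ε b) * mon2 E a b Z := by
    intro Z
    simp only [mon2]
    rw [zc_uni_diag E hk ε hε a Z, zc_uni_diag E hk ε hε b Z, map_mul]
    ring
  calc M2 E σ a b = ∫ Z, mon2 E a b (uni E hk _ (orthonormal_diag E ε hε) Z) ∂σ :=
        integral_comp_uni σ hinv _ _ (mon2_cont E a b).aestronglyMeasurable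
  _ = ∫ Z, ε a * conj (ε b) * mon2 E a b Z ∂σ := by simp_rw [key]
  _ = ε a * conj (ε b) * M2 E σ a b := integral_const_mul _ _

include hk hinv in
lemma M4_diag (ε : Fin k → ℂ) (hε : ∀ i, ‖ε i‖ = 1) (a b c d : Fin k) :
    M4 E σ a b c d = ε a * conj (ε b) * (ε c * conj (ε d)) * M4 E σ a b c d := by
  have key : ∀ Z, mon4 E a b c d (uni E hk _ (orthonormal_diag E ε hε) Z)
      = ε a * conj (ε b) * (ε c * conj (ε d)) * mon4 E a b c d Z := by
    intro Z
    simp only [mon4]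
    rw [zc_uni_diag E hk ε hε a Z, zc_uni_diag E hk ε hε b Z,
      zc_uni_diag E hk ε hε c Z, zc_uni_diag E hk ε hε d Z, map_mul, map_mul]
    ring
  calc M4 E σ a b c d = ∫ Z, mon4 E a b c d (uni E hk _ (orthonormal_diag E ε hε) Z) ∂σ :=
        integral_comp_uni σ hinv _ _ (mon4_cont E a b c d).aestronglyMeasurable
  _ = ∫ Z, ε a * conj (ε b) * (ε c * conj (ε d)) * mon4 E a b c d Z ∂σ := by simp_rw [key]
  _ = _ := integral_const_mul _ _

include hk hinv in
lemma M2_perm (π : Equiv.Perm (Fin k)) (a b : Fin k) :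
    M2 E σ a b = M2 E σ (π.symm a) (π.symm b) := by
  have key : ∀ Z, mon2 E a b (uni E hk _ (orthonormal_perm E π) Z)
      = mon2 E (π.symm a) (π.symm b) Z := by
    intro Z
    simp only [mon2, zc_uni_perm]
  calc M2 E σ a b = ∫ Z, mon2 E a b (uni E hk _ (orthonormal_perm E π) Z) ∂σ :=
        integral_comp_uni σ hinv _ _ (mon2_cont E a b).aestronglyMeasurable
  _ = M2 E σ (π.symm a) (π.symm b) := by simp_rw [key]; rfl

include hk hinv in
lemma M4_perm (π : Equiv.Perm (Fin k)) (a b c d : Fin k) :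
    M4 E σ a b c d = M4 E σ (π.symm a) (π.symm b) (π.symm c) (π.symm d) := by
  have key : ∀ Z, mon4 E a b c d (uni E hk _ (orthonormal_perm E π) Z)
      = mon4 E (π.symm a) (π.symm b) (π.symm c) (π.symm d) Z := by
    intro Z
    simp only [mon4, zc_uni_perm]
  calc M4 E σ a b c d = ∫ Z, mon4 E a b c d (uni E hk _ (orthonormal_perm E π) Z) ∂σ :=
        integral_comp_uni σ hinv _ _ (mon4_cont E a b c d).aestronglyMeasurable
  _ = _ := by simp_rw [key]; rfl

end Moments

section Values
variable (E : OrthonormalBasis (Fin k) ℂ V) (hk : 1 ≤ k) (σ : Measure V)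
  [IsProbabilityMeasure σ]
  (hsupp : σ (Metric.sphere (0 : V) 1)ᶜ = 0)
  (hinv : ∀ f : V ≃ₗᵢ[ℂ] V, Measure.map f σ = σ)

lemma sum_mon2_diag (Z : V) : ∑ a, mon2 E a a Z = (inner ℂ Z Z : ℂ) := by
  simp only [mon2, zc]
  calc ∑ a, (inner ℂ (E a) Z : ℂ) * conj (inner ℂ (E a) Z)
      = ∑ a, (inner ℂ Z (E a) : ℂ) * inner ℂ (E a) Z := by
        refine Finset.sum_congr rfl fun a _ => ?_
        rw [inner_conj_symm]
        ring
  _ = (inner ℂ Z Z : ℂ) := E.sum_inner_mul_inner Z Z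

include hsupp in
lemma sum_M2_diag : ∑ a, M2 E σ a a = 1 := by
  have h1 : ∑ a, M2 E σ a a = ∫ Z, ∑ a, mon2 E a a Z ∂σ :=
    (integral_finset_sum _ (fun a _ => integrable_mon2 E σ hsupp a a)).symm
  rw [h1]
  have h2 : (fun Z => ∑ a, mon2 E a a Z) =ᵐ[σ] fun _ => (1 : ℂ) := by
    filter_upwards [ae_sphere σ hsupp] with Z hZ
    rw [sum_mon2_diag, inner_self_eq_norm_sq_to_K, hZ]
    norm_num
  rw [integral_congr_ae h2]
  simp

include hsupp in
lemma sum_M4_diag : ∑ a, ∑ c, M4 E σ a a c c = 1 := by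
  have h1 : ∑ a, ∑ c, M4 E σ a a c c = ∫ Z, ∑ a, ∑ c, mon4 E a a c c Z ∂σ := by
    rw [integral_finset_sum _ (fun a _ => integrable_finset_sum _
      (fun c _ => integrable_mon4 E σ hsupp a a c c))]
    exact Finset.sum_congr rfl fun a _ =>
      (integral_finset_sum _ (fun c _ => integrable_mon4 E σ hsupp a a c c)).symm
  rw [h1]
  have h2 : (fun Z => ∑ a, ∑ c, mon4 E a a c c Z) =ᵐ[σ] fun _ => (1 : ℂ) := by
    filter_upwards [ae_sphere σ hsupp] with Z hZ
    have : ∀ a c, mon4 E a a c c Z = mon2 E a a Z * mon2 E c c Z := fun a c => rfl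
    simp_rw [this, ← Finset.mul_sum, ← Finset.sum_mul, sum_mon2_diag,
      inner_self_eq_norm_sq_to_K, hZ]
    norm_num
  rw [integral_congr_ae h2]
  simp

include hk hinv in
lemma M4_vanish (a b c d : Fin k) (h : ¬((a = b ∧ c = d) ∨ (a = d ∧ c = b))) :
    M4 E σ a b c d = 0 := by
  classical
  push_neg at h
  obtain ⟨h1, h2⟩ := h
  -- for a chosen index t, the diagonal unitary with I at t multiplies M4 by a factor
  have main : ∀ t : Fin k,
      M4 E σ a b c d = ((if a = t then Complex.I else 1) * conj (if b = t then Complex.I else 1)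
        * ((if c = t then Complex.I else 1) * conj (if d = t then Complex.I else 1)))
        * M4 E σ a b c d := by
    intro t
    exact M4_diag E hk σ hinv (fun s => if s = t then Complex.I else 1)
      (fun i => by by_cases hi : i = t <;> simp [hi]) a b c d
  suffices hfac : ∃ t : Fin k, ((if a = t then Complex.I else 1)
      * conj (if b = t then Complex.I else 1)
      * ((if c = t then Complex.I else 1) * conj (if d = t then Complex.I else 1))) ≠ 1 by
    obtain ⟨t, ht⟩ := hfac
    by_contra hM
    exact ht (mul_right_cancel₀ hM (((main t).symm.trans (one_mul _).symm)).symm).symm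
  by_cases hab : a = b
  · have hcd : c ≠ d := fun hcd => (h1 hab) hcd
    refine ⟨c, ?_⟩
    rw [if_neg (fun hh : d = c => hcd hh.symm), if_pos rfl]
    by_cases hac : a = c
    · rw [if_pos hac, if_pos (hab ▸ hac : b = c)]
      simp [Complex.ext_iff]
    · rw [if_neg hac, if_neg (fun hh : b = c => hac (hab.trans hh))]
      simp [Complex.ext_iff]
  · by_cases had : a = d
    · have hcb : c ≠ b := fun hcb => (h2 had) hcb
      refine ⟨c, ?_⟩
      have hdc : (d = c) ↔ (a = c) := by rw [← had]
      rw [if_neg (fun hh : b = c => hcb hh.symm), if_pos rfl]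
      by_cases hac : a = c
      · rw [if_pos hac, if_pos (hdc.mpr hac)]
        simp [Complex.ext_iff]
      · rw [if_neg hac, if_neg (fun hh => hac (hdc.mp hh))]
        simp [Complex.ext_iff]
    · refine ⟨a, ?_⟩
      rw [if_pos rfl, if_neg (fun hh : b = a => hab hh.symm),
        if_neg (fun hh : d = a => had hh.symm)]
      by_cases hca : c = a
      · rw [if_pos hca]; norm_num [Complex.ext_iff]
      · rw [if_neg hca]; simp [Complex.ext_iff]

include hk hinv in
lemma M4_perm' (π : Equiv.Perm (Fin k)) (a b c d : Fin k) :
    M4 E σ (π a) (π b) (π c) (π d) = M4 E σ a b c d := by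
  have := M4_perm E hk σ hinv π (π a) (π b) (π c) (π d)
  simpa using this

include hk hinv in
lemma M2_perm' (π : Equiv.Perm (Fin k)) (a b : Fin k) :
    M2 E σ (π a) (π b) = M2 E σ a b := by
  have := M2_perm E hk σ hinv π (π a) (π b)
  simpa using this

include hk hinv in
lemma M2_offdiag (a b : Fin k) (h : a ≠ b) : M2 E σ a b = 0 := by
  have hd := M2_diag E hk σ hinv (fun s => if s = a then (-1 : ℂ) else 1)
    (fun i => by by_cases hi : i = a <;> simp [hi]) a b
  rw [if_pos rfl, if_neg (fun hh : b = a => h hh.symm)] at hd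
  simp only [map_one, mul_one] at hd
  linear_combination (1/2 : ℂ) * hd

include hk hsupp hinv in
lemma M2_value (a b : Fin k) : M2 E σ a b = if a = b then ((k : ℂ))⁻¹ else 0 := by
  by_cases hab : a = b
  · subst hab
    rw [if_pos rfl]
    have hall : ∀ c : Fin k, M2 E σ c c = M2 E σ a a := fun c => by
      simpa [Equiv.swap_apply_left] using M2_perm' E hk σ hinv (Equiv.swap a c) a a
    have hsum := sum_M2_diag E σ hsupp
    rw [Finset.sum_congr rfl (fun c _ => hall c), Finset.sum_const,
      Finset.card_univ, Fintype.card_fin] at hsum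
    have hk0 : (k : ℂ) ≠ 0 := Nat.cast_ne_zero.mpr (by omega)
    field_simp
    rw [mul_comm]
    simpa [nsmul_eq_mul] using hsum
  · rw [if_neg hab]
    exact M2_offdiag E hk σ hinv a b hab

end Values

section Rotation
variable (E : OrthonormalBasis (Fin k) ℂ V) (hk : 1 ≤ k) (σ : Measure V)
  [IsProbabilityMeasure σ]
  (hsupp : σ (Metric.sphere (0 : V) 1)ᶜ = 0)
  (hinv : ∀ f : V ≃ₗᵢ[ℂ] V, Measure.map f σ = σ)

noncomputable def rr : ℂ := (((Real.sqrt 2)⁻¹ : ℝ) : ℂ)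

lemma conj_rr : conj rr = rr := Complex.conj_ofReal _

lemma rr_sq : rr * rr = 2⁻¹ := by
  rw [rr, ← Complex.ofReal_mul, ← mul_inv, Real.mul_self_sqrt (by norm_num)]
  norm_num

noncomputable def rotF (a b : Fin k) : Fin k → V := fun i =>
  if i = a then rr • (E a + E b) else if i = b then rr • (E a - E b) else E i

lemma orthonormal_rotF (a b : Fin k) (hab : a ≠ b) : Orthonormal ℂ (rotF E a b) := by
  rw [orthonormal_iff_ite]
  intro i j
  by_cases hia : i = a <;> by_cases hja : j = a <;>
    by_cases hib : i = b <;> by_cases hjb : j = b <;>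
      simp_all [rotF, inner_add_left, inner_add_right, inner_sub_left, inner_sub_right,
        inner_smul_left, inner_smul_right, E_inner, hab, Ne.symm hab, conj_rr,
        -inner_self_eq_norm_sq_to_K] <;>
    (try simp_all [eq_comm]) <;>
    linear_combination (2 : ℂ) * rr_sq

lemma zc_rot (a b : Fin k) (hab : a ≠ b) (Z : V) :
    zc E a (uni E hk _ (orthonormal_rotF E a b hab) Z) = rr * (zc E a Z + zc E b Z) := by
  rw [zc_uni]
  have hterm : ∀ j : Fin k, (inner ℂ (E a) (rotF E a b j) : ℂ) * zc E j Z
      = (if j = a then rr * zc E a Z else 0) + (if j = b then rr * zc E b Z else 0) := by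
    intro j
    by_cases hja : j = a
    · subst hja
      rw [if_pos rfl, if_neg hab, rotF, if_pos rfl, inner_smul_right]
      simp [inner_add_right, E_inner, hab, Ne.symm hab]
    · rw [if_neg hja]
      by_cases hjb : j = b
      · subst hjb
        rw [if_pos rfl, rotF, if_neg hja, if_pos rfl, inner_smul_right]
        simp [inner_sub_right, E_inner, hab, Ne.symm hab, hja, Ne.symm hja]
      · rw [if_neg hjb, rotF, if_neg hja, if_neg hjb, E_inner,
          if_neg (fun hh : a = j => hja hh.symm)]
        simp
  rw [Finset.sum_congr rfl (fun j _ => hterm j), Finset.sum_add_distrib,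
    Finset.sum_ite_eq' Finset.univ a, Finset.sum_ite_eq' Finset.univ b]
  simp
  ring


lemma M4_abba (a b : Fin k) : M4 E σ a b b a = M4 E σ a a b b := by
  have : mon4 E a b b a = mon4 E a a b b := by
    funext Z; simp only [mon4]; ring
  rw [M4, M4, this]

include hk hinv in
lemma M4_pair_eq (a c a' c' : Fin k) (hac : a ≠ c) (hac' : a' ≠ c') :
    M4 E σ a a c c = M4 E σ a' a' c' c' := by
  classical
  set c₁ := Equiv.swap a a' c with hc₁def
  have hc₁ : c₁ ≠ a' := by
    rcases eq_or_ne c a' with h|h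
    · rw [hc₁def, h, Equiv.swap_apply_right]
      exact fun hh => hac (hh.trans h.symm)
    · rcases eq_or_ne c a with h2|h2
      · exact absurd h2.symm hac
      · rw [hc₁def, Equiv.swap_apply_of_ne_of_ne h2 h]; exact h
  set π := (Equiv.swap a a').trans (Equiv.swap c₁ c') with hπ
  have hπa : π a = a' := by
    rw [hπ]
    simp only [Equiv.trans_apply, Equiv.swap_apply_left]
    exact Equiv.swap_apply_of_ne_of_ne (Ne.symm hc₁) hac'
  have hπc : π c = c' := by
    rw [hπ]
    simp only [Equiv.trans_apply, ← hc₁def]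
    exact Equiv.swap_apply_left _ _
  have := M4_perm' E hk σ hinv π a a c c
  rw [hπa, hπc] at this
  exact this.symm

include hk hinv in
lemma M4_diag4_eq (a b : Fin k) : M4 E σ a a a a = M4 E σ b b b b := by
  have := M4_perm' E hk σ hinv (Equiv.swap a b) b b b b
  rw [Equiv.swap_apply_right] at this
  exact this

include hk hsupp hinv in
lemma M4_p2q (a b : Fin k) (hab : a ≠ b) : M4 E σ a a a a = 2 * M4 E σ a a b b := by
  classical
  set g : Fin 2 → Fin k := ![a, b] with hg
  set U := uni E hk _ (orthonormal_rotF E a b hab) with hUdef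
  have hrr : (rr * rr) * (rr * rr) = (4 : ℂ)⁻¹ := by rw [rr_sq]; norm_num
  have hU : ∀ Z, mon4 E a a a a (U Z) = (4 : ℂ)⁻¹ *
      ∑ s : Fin 2 × Fin 2 × Fin 2 × Fin 2,
        mon4 E (g s.1) (g s.2.1) (g s.2.2.1) (g s.2.2.2) Z := by
    intro Z
    have h1 : zc E a (U Z) = rr * (zc E a Z + zc E b Z) := zc_rot E hk a b hab Z
    simp only [mon4, h1, map_mul, map_add, conj_rr, Fintype.sum_prod_type,
      Fin.sum_univ_two, hg, Matrix.cons_val_zero, Matrix.cons_val_one, Matrix.head_cons]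
    linear_combination ((zc E a Z + zc E b Z) * (conj (zc E a Z) + conj (zc E b Z)) *
      ((zc E a Z + zc E b Z) * (conj (zc E a Z) + conj (zc E b Z)))) * hrr
  have hint : M4 E σ a a a a = (4 : ℂ)⁻¹ *
      ∑ s : Fin 2 × Fin 2 × Fin 2 × Fin 2,
        M4 E σ (g s.1) (g s.2.1) (g s.2.2.1) (g s.2.2.2) := by
    calc M4 E σ a a a a = ∫ Z, mon4 E a a a a (U Z) ∂σ :=
          integral_comp_uni σ hinv _ _ (mon4_cont E a a a a).aestronglyMeasurable
    _ = ∫ Z, (4 : ℂ)⁻¹ * ∑ s : Fin 2 × Fin 2 × Fin 2 × Fin 2,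
          mon4 E (g s.1) (g s.2.1) (g s.2.2.1) (g s.2.2.2) Z ∂σ := by simp_rw [hU]
    _ = (4 : ℂ)⁻¹ * ∫ Z, ∑ s : Fin 2 × Fin 2 × Fin 2 × Fin 2,
          mon4 E (g s.1) (g s.2.1) (g s.2.2.1) (g s.2.2.2) Z ∂σ := integral_const_mul _ _
    _ = _ := by
          rw [integral_finset_sum _ (fun s _ => integrable_mon4 E σ hsupp _ _ _ _)]
          rfl
  have hbb : M4 E σ b b b b = M4 E σ a a a a := M4_diag4_eq E hk σ hinv b a
  have hbbaa : M4 E σ b b a a = M4 E σ a a b b :=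
    M4_pair_eq E hk σ hinv b a a b (Ne.symm hab) hab
  have habba : M4 E σ a b b a = M4 E σ a a b b := M4_abba E σ a b
  have hbaab : M4 E σ b a a b = M4 E σ a a b b := by
    rw [M4_abba E σ b a]; exact hbbaa
  have v1 : M4 E σ a a a b = 0 := M4_vanish E hk σ hinv _ _ _ _ (by simp [hab])
  have v2 : M4 E σ a a b a = 0 := M4_vanish E hk σ hinv _ _ _ _ (by simp [hab, Ne.symm hab])
  have v3 : M4 E σ a b a a = 0 := M4_vanish E hk σ hinv _ _ _ _ (by simp [hab, Ne.symm hab])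
  have v4 : M4 E σ b a a a = 0 := M4_vanish E hk σ hinv _ _ _ _ (by simp [hab, Ne.symm hab])
  have v5 : M4 E σ b b b a = 0 := M4_vanish E hk σ hinv _ _ _ _ (by simp [hab, Ne.symm hab])
  have v6 : M4 E σ b b a b = 0 := M4_vanish E hk σ hinv _ _ _ _ (by simp [hab, Ne.symm hab])
  have v7 : M4 E σ b a b b = 0 := M4_vanish E hk σ hinv _ _ _ _ (by simp [hab, Ne.symm hab])
  have v8 : M4 E σ a b b b = 0 := M4_vanish E hk σ hinv _ _ _ _ (by simp [hab, Ne.symm hab])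
  have v9 : M4 E σ a b a b = 0 := M4_vanish E hk σ hinv _ _ _ _ (by simp [hab])
  have v10 : M4 E σ b a b a = 0 := M4_vanish E hk σ hinv _ _ _ _ (by simp [Ne.symm hab])
  rw [Fintype.sum_prod_type] at hint
  simp only [Fintype.sum_prod_type, Fin.sum_univ_two, hg, Matrix.cons_val_zero,
    Matrix.cons_val_one, Matrix.head_cons, v1, v2, v3, v4, v5, v6, v7, v8, v9, v10,
    hbb, hbbaa, habba, hbaab] at hint
  linear_combination (2 : ℂ) * hint


include hk hsupp hinv in
lemma M4_key (x y : Fin k) : M4 E σ x x y y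
    = ((k : ℂ) * ((k : ℂ) + 1))⁻¹ * (1 + if x = y then 1 else 0) := by
  classical
  obtain rfl | h2 : k = 1 ∨ 2 ≤ k := by omega
  · have hx : x = 0 := Subsingleton.elim x 0
    have hy : y = 0 := Subsingleton.elim y 0
    have hsum := sum_M4_diag E σ hsupp
    simp only [Fin.sum_univ_one] at hsum
    subst hx; subst hy
    rw [show (0 : Fin 1) = 0 from rfl] at *
    rw [hsum]  -- ?
    norm_num
  · set a0 : Fin k := ⟨0, by omega⟩ with ha0
    set a1 : Fin k := ⟨1, by omega⟩ with ha1
    have hne : a0 ≠ a1 := by simp [ha0, ha1, Fin.ext_iff]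
    set q := M4 E σ a0 a0 a1 a1 with hq
    have hqeq : ∀ u v : Fin k, u ≠ v → M4 E σ u u v v = q :=
      fun u v huv => M4_pair_eq E hk σ hinv u v a0 a1 huv hne
    have hpeq : ∀ u : Fin k, M4 E σ u u u u = 2 * q := fun u => by
      rw [M4_diag4_eq E hk σ hinv u a0, M4_p2q E hk σ hsupp hinv a0 a1 hne]
    have hsum := sum_M4_diag E σ hsupp
    have hsum2 : ∑ u : Fin k, ∑ v : Fin k, M4 E σ u u v v
        = ∑ u : Fin k, ∑ v : Fin k, (q + if u = v then q else 0) := by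
      refine Finset.sum_congr rfl fun u _ => Finset.sum_congr rfl fun v _ => ?_
      by_cases huv : u = v
      · subst huv; rw [hpeq u, if_pos rfl]; ring
      · rw [hqeq u v huv, if_neg huv]; ring
    rw [hsum2] at hsum
    simp only [Finset.sum_add_distrib, Finset.sum_const, Finset.card_univ,
      Fintype.card_fin, Finset.sum_ite_eq, Finset.mem_univ, if_pos] at hsum
    -- hsum : k • (k • q + q) = 1  (roughly)
    have hk0 : (k : ℂ) ≠ 0 := Nat.cast_ne_zero.mpr (by omega)
    have hk1 : (k : ℂ) + 1 ≠ 0 := by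
      have : ((k + 1 : ℕ) : ℂ) ≠ 0 := Nat.cast_ne_zero.mpr (by omega)
      push_cast at this; exact this
    have hqval : q = ((k : ℂ) * ((k : ℂ) + 1))⁻¹ := by
      simp only [nsmul_eq_mul] at hsum
      field_simp
      linear_combination hsum
    by_cases hxy : x = y
    · subst hxy; rw [hpeq x, if_pos rfl, hqval]; ring
    · rw [hqeq x y hxy, if_neg hxy, hqval]; ring


include hk hsupp hinv in
lemma M4_value (a b c d : Fin k) : M4 E σ a b c d =
    ((k : ℂ) * ((k : ℂ) + 1))⁻¹ * ((if a = b then 1 else 0) * (if c = d then 1 else 0)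
      + (if a = d then 1 else 0) * (if c = b then 1 else 0)) := by
  classical
  by_cases hab : a = b
  · by_cases hcd : c = d
    · subst hab; subst hcd
      rw [M4_key E hk σ hsupp hinv a c, if_pos rfl, if_pos rfl]
      by_cases hac : a = c
      · subst hac; simp
      · rw [if_neg hac, if_neg (fun h : c = a => hac h.symm)]; ring
    · have hv : M4 E σ a b c d = 0 := by
        refine M4_vanish E hk σ hinv a b c d ?_
        rintro (⟨_, h⟩ | ⟨h1, h2⟩)
        · exact hcd h
        · exact hcd (h2.trans (hab.symm.trans h1))
      rw [hv, if_neg hcd, if_pos hab]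
      by_cases had : a = d
      · rw [if_neg (fun h : c = b => hcd ((h.trans hab.symm).trans had))]; ring
      · rw [if_neg had]; ring
  · by_cases had : a = d
    · by_cases hcb : c = b
      · subst hcb; subst had
        rw [M4_abba E σ a c, M4_key E hk σ hsupp hinv a c,
          if_neg hab, if_pos rfl, if_pos rfl, if_neg (fun h : c = a => hab h.symm)]
        ring
      · rw [M4_vanish E hk σ hinv a b c d (by tauto), if_neg hab, if_neg hcb]; ring
    · rw [M4_vanish E hk σ hinv a b c d (by tauto), if_neg hab, if_neg had]; ring

end Rotation

section Tensor
variable {R : V → V → V → V → ℂ} (hR : IsKahlerCurvatureTensor R)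
include hR

lemma R_zero₁ (y z w : V) : R 0 y z w = 0 := by
  simpa using hR.map_smul₁ 0 0 y z w

lemma R_zero₂ (x z w : V) : R x 0 z w = 0 := by
  simpa using hR.map_smul₂ 0 x 0 z w

lemma R_zero₃ (x y w : V) : R x y 0 w = 0 := by
  simpa using hR.map_smul₃ 0 x y 0 w

lemma R_zero₄ (x y z : V) : R x y z 0 = 0 := by
  simpa using hR.map_smul₄ 0 x y z 0

lemma R_sum₁ {ι : Type*} (s : Finset ι) (f : ι → V) (y z w : V) :
    R (∑ i ∈ s, f i) y z w = ∑ i ∈ s, R (f i) y z w := by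
  classical
  induction s using Finset.cons_induction with
  | empty => simpa using R_zero₁ hR y z w
  | cons a s ha ih => rw [Finset.sum_cons, hR.map_add₁, ih, Finset.sum_cons]

lemma R_sum₂ {ι : Type*} (s : Finset ι) (f : ι → V) (x z w : V) :
    R x (∑ i ∈ s, f i) z w = ∑ i ∈ s, R x (f i) z w := by
  classical
  induction s using Finset.cons_induction with
  | empty => simpa using R_zero₂ hR x z w
  | cons a s ha ih => rw [Finset.sum_cons, hR.map_add₂, ih, Finset.sum_cons]

lemma R_sum₃ {ι : Type*} (s : Finset ι) (f : ι → V) (x y w : V) :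
    R x y (∑ i ∈ s, f i) w = ∑ i ∈ s, R x y (f i) w := by
  classical
  induction s using Finset.cons_induction with
  | empty => simpa using R_zero₃ hR x y w
  | cons a s ha ih => rw [Finset.sum_cons, hR.map_add₃, ih, Finset.sum_cons]

lemma R_sum₄ {ι : Type*} (s : Finset ι) (f : ι → V) (x y z : V) :
    R x y z (∑ i ∈ s, f i) = ∑ i ∈ s, R x y z (f i) := by
  classical
  induction s using Finset.cons_induction with
  | empty => simpa using R_zero₄ hR x y z
  | cons a s ha ih => rw [Finset.sum_cons, hR.map_add₄, ih, Finset.sum_cons]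

lemma exp2 (E : OrthonormalBasis (Fin k) ℂ V) (x3 x4 : V) (Z : V) :
    R Z Z x3 x4 = ∑ a, ∑ b, mon2 E a b Z * R (E a) (E b) x3 x4 := by
  conv_lhs => rw [← sum_zc_smul E Z]
  rw [R_sum₁ hR]
  refine Finset.sum_congr rfl fun a _ => ?_
  rw [hR.map_smul₁, R_sum₂ hR]
  simp only [Finset.mul_sum]
  refine Finset.sum_congr rfl fun b _ => ?_
  rw [hR.map_smul₂]
  simp only [mon2]
  ring

lemma exp4 (E : OrthonormalBasis (Fin k) ℂ V) (Z : V) :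
    R Z Z Z Z = ∑ a, ∑ b, ∑ c, ∑ d, mon4 E a b c d Z * R (E a) (E b) (E c) (E d) := by
  conv_lhs => rw [← sum_zc_smul E Z]
  rw [R_sum₁ hR]
  refine Finset.sum_congr rfl fun a _ => ?_
  rw [hR.map_smul₁, R_sum₂ hR]
  simp only [Finset.mul_sum]
  refine Finset.sum_congr rfl fun b _ => ?_
  rw [hR.map_smul₂, R_sum₃ hR]
  simp only [Finset.mul_sum]
  refine Finset.sum_congr rfl fun c _ => ?_
  rw [hR.map_smul₃, R_sum₄ hR]
  simp only [Finset.mul_sum]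
  refine Finset.sum_congr rfl fun d _ => ?_
  rw [hR.map_smul₄]
  simp only [mon4]
  ring

end Tensor

section IntSums
variable (σ : Measure V)

lemma integral_sum2 (f : Fin k → Fin k → V → ℂ) (hf : ∀ a b, Integrable (f a b) σ) :
    ∫ Z, (∑ a, ∑ b, f a b Z) ∂σ = ∑ a, ∑ b, ∫ Z, f a b Z ∂σ := by
  rw [integral_finset_sum _ (fun a _ => integrable_finset_sum _ (fun b _ => hf a b))]
  exact Finset.sum_congr rfl fun a _ => integral_finset_sum _ (fun b _ => hf a b)

lemma integral_sum3 (f : Fin k → Fin k → Fin k → V → ℂ)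
    (hf : ∀ a b c, Integrable (f a b c) σ) :
    ∫ Z, (∑ a, ∑ b, ∑ c, f a b c Z) ∂σ = ∑ a, ∑ b, ∑ c, ∫ Z, f a b c Z ∂σ := by
  rw [integral_finset_sum _ (fun a _ => integrable_finset_sum _ (fun b _ =>
    integrable_finset_sum _ (fun c _ => hf a b c)))]
  exact Finset.sum_congr rfl fun a _ => integral_sum2 σ _ (hf a)

lemma integral_sum4 (f : Fin k → Fin k → Fin k → Fin k → V → ℂ)
    (hf : ∀ a b c d, Integrable (f a b c d) σ) :
    ∫ Z, (∑ a, ∑ b, ∑ c, ∑ d, f a b c d Z) ∂σ = ∑ a, ∑ b, ∑ c, ∑ d, ∫ Z, f a b c d Z ∂σ := by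
  rw [integral_finset_sum _ (fun a _ => integrable_finset_sum _ (fun b _ =>
    integrable_finset_sum _ (fun c _ => integrable_finset_sum _ (fun d _ => hf a b c d))))]
  exact Finset.sum_congr rfl fun a _ => integral_sum3 σ _ (hf a)

end IntSums
end AvgRic

open AvgRic

/-- **Sphere average of `Ric_k^+`.** Let `V` be a `k`-dimensional complex inner
product space (`k ≥ 1`) with orthonormal basis `E`, let `R` be a Kähler
curvature-type tensor on `V`, let `S_k = Σ_{i,j} R(E_i,Ē_i,E_j,Ē_j)`, and let `σ`
be the rotation-invariant probability measure on the unit sphere of `V`. Then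
`∫ [Σ_j R(Z,Z̄,E_j,Ē_j) + R(Z,Z̄,Z,Z̄)] dσ(Z) = ((k+3)/(k(k+1))) · S_k`. -/
theorem average_Ric_k_plus
    {V : Type*} [NormedAddCommGroup V] [InnerProductSpace ℂ V]
    [MeasurableSpace V] [BorelSpace V]
    (k : ℕ) (hk : 1 ≤ k) (E : OrthonormalBasis (Fin k) ℂ V)
    (R : V → V → V → V → ℂ) (hR : IsKahlerCurvatureTensor R)
    (σ : Measure V) [IsProbabilityMeasure σ]
    (hsupp : σ (Metric.sphere (0 : V) 1)ᶜ = 0)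
    (hinv : ∀ f : V ≃ₗᵢ[ℂ] V, Measure.map f σ = σ) :
    ∫ Z, ((∑ j : Fin k, R Z Z (E j) (E j)) + R Z Z Z Z) ∂σ =
      (((k : ℂ) + 3) / (k * (k + 1))) * ∑ i : Fin k, ∑ j : Fin k,
        R (E i) (E i) (E j) (E j) := by
  classical
  have hk0 : (k : ℂ) ≠ 0 := Nat.cast_ne_zero.mpr (by omega)
  have hk1 : (k : ℂ) + 1 ≠ 0 := by
    have : ((k + 1 : ℕ) : ℂ) ≠ 0 := Nat.cast_ne_zero.mpr (by omega)
    push_cast at this; exact this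
  have hpt : ∀ Z : V, ((∑ j : Fin k, R Z Z (E j) (E j)) + R Z Z Z Z)
      = (∑ j : Fin k, ∑ a, ∑ b, mon2 E a b Z * R (E a) (E b) (E j) (E j))
        + ∑ a, ∑ b, ∑ c, ∑ d, mon4 E a b c d Z * R (E a) (E b) (E c) (E d) := by
    intro Z
    congr 1
    · exact Finset.sum_congr rfl fun j _ => exp2 hR E (E j) (E j) Z
    · exact exp4 hR E Z
  have h0 : ∫ Z, ((∑ j : Fin k, R Z Z (E j) (E j)) + R Z Z Z Z) ∂σ
      = ∫ Z, ((∑ j : Fin k, ∑ a, ∑ b, mon2 E a b Z * R (E a) (E b) (E j) (E j))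
        + ∑ a, ∑ b, ∑ c, ∑ d, mon4 E a b c d Z * R (E a) (E b) (E c) (E d)) ∂σ := by
    exact congrArg _ (funext hpt)
  rw [h0, integral_add
    (integrable_finset_sum _ (fun j _ => integrable_finset_sum _ (fun a _ =>
      integrable_finset_sum _ (fun b _ => (integrable_mon2 E σ hsupp a b).mul_const _))))
    (integrable_finset_sum _ (fun a _ => integrable_finset_sum _ (fun b _ =>
      integrable_finset_sum _ (fun c _ => integrable_finset_sum _ (fun d _ =>
        (integrable_mon4 E σ hsupp a b c d).mul_const _)))))]
  rw [integral_sum3 σ _ (fun j a b => (integrable_mon2 E σ hsupp a b).mul_const _),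
    integral_sum4 σ _ (fun a b c d => (integrable_mon4 E σ hsupp a b c d).mul_const _)]
  simp only [MeasureTheory.integral_mul_const]
  have hM2 : ∀ a b : Fin k, (∫ Z, mon2 E a b Z ∂σ) = if a = b then ((k : ℂ))⁻¹ else 0 :=
    fun a b => M2_value E hk σ hsupp hinv a b
  have hM4 : ∀ a b c d : Fin k, (∫ Z, mon4 E a b c d Z ∂σ)
      = ((k : ℂ) * ((k : ℂ) + 1))⁻¹ * ((if a = b then 1 else 0) * (if c = d then 1 else 0)
        + (if a = d then 1 else 0) * (if c = b then 1 else 0)) :=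
    fun a b c d => M4_value E hk σ hsupp hinv a b c d
  simp only [hM2, hM4]
  set T : Fin k → Fin k → Fin k → Fin k → ℂ := fun a b c d => R (E a) (E b) (E c) (E d) with hT
  set co : ℂ := ((k : ℂ) * ((k : ℂ) + 1))⁻¹ with hco
  have part1 : (∑ j : Fin k, ∑ a, ∑ b, (if a = b then ((k : ℂ))⁻¹ else 0) * T a b j j)
      = (k : ℂ)⁻¹ * ∑ i, ∑ j, T i i j j := by
    have h1 : ∀ j a : Fin k, (∑ b, (if a = b then ((k : ℂ))⁻¹ else 0) * T a b j j)
        = (k : ℂ)⁻¹ * T a a j j := by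
      intro j a
      rw [Finset.sum_eq_single a]
      · rw [if_pos rfl]
      · intro b _ hb; rw [if_neg (fun h => hb h.symm), zero_mul]
      · intro h; exact absurd (Finset.mem_univ a) h
    simp_rw [h1]
    rw [Finset.sum_comm]
    simp_rw [Finset.mul_sum]
  have part2 : (∑ a, ∑ b, ∑ c, ∑ d : Fin k,
        co * ((if a = b then (1:ℂ) else 0) * (if c = d then 1 else 0)
          + (if a = d then 1 else 0) * (if c = b then 1 else 0)) * T a b c d)
      = co * (∑ a, ∑ c, T a a c c) + co * (∑ a, ∑ c, T a c c a) := by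
    have h2 : ∀ a b : Fin k, (∑ c, ∑ d : Fin k,
          co * ((if a = b then (1:ℂ) else 0) * (if c = d then 1 else 0)) * T a b c d)
        = if a = b then co * ∑ c, T a b c c else 0 := by
      intro a b
      by_cases hab : a = b
      · rw [if_pos hab, if_pos hab, Finset.mul_sum]
        refine Finset.sum_congr rfl fun c _ => ?_
        rw [Finset.sum_eq_single c]
        · rw [if_pos rfl]; ring
        · intro d _ hd; rw [if_neg (fun h => hd h.symm)]; ring
        · intro h; exact absurd (Finset.mem_univ c) h
      · rw [if_neg hab, if_neg hab]
        refine Finset.sum_eq_zero fun c _ => ?_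
        refine Finset.sum_eq_zero fun d _ => ?_
        ring
    have h3 : ∀ a b : Fin k, (∑ c, ∑ d : Fin k,
          co * ((if a = d then (1:ℂ) else 0) * (if c = b then 1 else 0)) * T a b c d)
        = co * T a b b a := by
      intro a b
      rw [Finset.sum_eq_single b]
      · rw [Finset.sum_eq_single a]
        · rw [if_pos rfl, if_pos rfl]; ring
        · intro d _ hd; rw [if_neg (fun h => hd h.symm)]; ring
        · intro h; exact absurd (Finset.mem_univ a) h
      · intro c _ hc
        refine Finset.sum_eq_zero fun d _ => ?_
        rw [if_neg hc]; ring
      · intro h; exact absurd (Finset.mem_univ b) h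
    have hsplit : ∀ a b : Fin k, (∑ c, ∑ d : Fin k,
          co * ((if a = b then (1:ℂ) else 0) * (if c = d then 1 else 0)
          + (if a = d then 1 else 0) * (if c = b then 1 else 0)) * T a b c d)
        = (∑ c, ∑ d : Fin k,
            co * ((if a = b then (1:ℂ) else 0) * (if c = d then 1 else 0)) * T a b c d)
          + ∑ c, ∑ d : Fin k,
            co * ((if a = d then (1:ℂ) else 0) * (if c = b then 1 else 0)) * T a b c d := by
      intro a b
      rw [← Finset.sum_add_distrib]
      refine Finset.sum_congr rfl fun c _ => ?_
      rw [← Finset.sum_add_distrib]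
      exact Finset.sum_congr rfl fun d _ => by ring
    simp_rw [hsplit, Finset.sum_add_distrib, h2, h3]
    congr 1
    · rw [Finset.mul_sum]
      refine Finset.sum_congr rfl fun a _ => ?_
      rw [Finset.sum_ite_eq, if_pos (Finset.mem_univ a)]
    · rw [Finset.mul_sum]
      refine Finset.sum_congr rfl fun a _ => ?_
      rw [Finset.mul_sum]
  rw [part1, part2]
  have hsw : (∑ a, ∑ c : Fin k, T a c c a) = ∑ i, ∑ j : Fin k, T i i j j := by
    have hsy : ∀ a c : Fin k, T a c c a = T c c a a :=
      fun a c => hR.symm₁₃ (E a) (E c) (E c) (E a)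
    calc (∑ a, ∑ c : Fin k, T a c c a) = ∑ a, ∑ c : Fin k, T c c a a :=
          Finset.sum_congr rfl fun a _ => Finset.sum_congr rfl fun c _ => hsy a c
    _ = _ := Finset.sum_comm
  rw [hsw, hco]
  have hkk : (k : ℂ) * ((k : ℂ) + 1) ≠ 0 := mul_ne_zero hk0 hk1
  have harith : ((k : ℂ) + 3) / ((k : ℂ) * ((k : ℂ) + 1))
      = (k : ℂ)⁻¹ + (((k : ℂ) * ((k : ℂ) + 1))⁻¹ + ((k : ℂ) * ((k : ℂ) + 1))⁻¹) := by
    field_simp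
    ring

  rw [harith]
  ring
end

section
/- Let V be a complex inner product space of dimension n ≥ 3, let R be a Kähler curvature-type tensor on V, and let φ ∈ ℝ. Assume that for every complex 3-dimensional subspace Σ ⊆ V, every orthonormal basis (E_1,E_2,E_3) of Σ, and every unit vector v ∈ Σ one has Σ_{j=1}^3 R(v,v̄,E_j,Ē_j) − R(v,v̄,v,v̄) ≥ φ (this quantity is real). Then for every orthonormal triple (e_1,e_2,e_l) in V, the real number R_{1 1̄ 1 1̄} + R_{2 2̄ 2 2̄} − R_{1 2̄ 1 2̄} − R_{2 1̄ 2 1̄} + 2(R_{1 1̄ l l̄} + R_{2 2̄ l l̄} + R_{1 2̄ l l̄} + R_{2 1̄ l l̄}) is at least 4φ, where R_{i j̄ k l̄} denotes R evaluated on the corresponding vectors of the triple. -/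
open MeasureTheory

/-- **Inequality (eq:Ric1) in the proof of Theorem 1.** Let `V` be a complex inner
product space of dimension `n ≥ 3`, `R` a Kähler curvature-type tensor and `φ ∈ ℝ`.
If `Ric_3^⊥ ≥ φ` pointwise (for every 3-dimensional subspace, orthonormal basis of
it and unit vector in it), then for every orthonormal triple `(e₁, e₂, e_l)`,
`R_{11̄11̄} + R_{22̄22̄} − R_{12̄12̄} − R_{21̄21̄}
  + 2(R_{11̄ll̄} + R_{22̄ll̄} + R_{12̄ll̄} + R_{21̄ll̄}) ≥ 4φ`. -/
theorem Ric1_inequality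
    {V : Type*} [NormedAddCommGroup V] [InnerProductSpace ℂ V] [FiniteDimensional ℂ V]
    (hn : 3 ≤ Module.finrank ℂ V)
    (R : V → V → V → V → ℂ) (hR : IsKahlerCurvatureTensor R) (φ : ℝ)
    (hRic : ∀ K : Submodule ℂ V, Module.finrank ℂ K = 3 →
      ∀ E : Fin 3 → V, Orthonormal ℂ E → (∀ j, E j ∈ K) →
      ∀ v ∈ K, ‖v‖ = 1 →
        φ ≤ ((∑ j : Fin 3, R v v (E j) (E j)) - R v v v v).re)
    (e : Fin 3 → V) (he : Orthonormal ℂ e) :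
    4 * φ ≤ (R (e 0) (e 0) (e 0) (e 0) + R (e 1) (e 1) (e 1) (e 1)
      - R (e 0) (e 1) (e 0) (e 1) - R (e 1) (e 0) (e 1) (e 0)
      + 2 * (R (e 0) (e 0) (e 2) (e 2) + R (e 1) (e 1) (e 2) (e 2)
        + R (e 0) (e 1) (e 2) (e 2) + R (e 1) (e 0) (e 2) (e 2))).re := by
  have hee : ∀ i j, (inner ℂ (e i) (e j) : ℂ) = if i = j then 1 else 0 :=
    orthonormal_iff_ite.mp he
  set c : ℝ := (Real.sqrt 2)⁻¹ with hc
  have hcc : (c : ℂ) * (c : ℂ) = 1/2 := by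
    have h2 : Real.sqrt 2 * Real.sqrt 2 = 2 := Real.mul_self_sqrt (by norm_num)
    have : c * c = 1/2 := by
      rw [hc, ← mul_inv, h2]; norm_num
    calc (c:ℂ) * c = ((c*c : ℝ) : ℂ) := by push_cast; ring
      _ = 1/2 := by rw [this]; norm_num
  set v : V := (c : ℂ) • (e 0 + e 1) with hv
  set u : V := (c : ℂ) • (e 0 - e 1) with hu
  have hE : Orthonormal ℂ ![v, u, e 2] := by
    rw [orthonormal_iff_ite]
    intro i j
    fin_cases i <;> fin_cases j <;>
      simp [hv, hu, inner_smul_left, inner_smul_right, inner_add_left,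
        inner_add_right, inner_sub_left, inner_sub_right, hee,
        inner_smul_real_left, inner_smul_real_right, Complex.real_smul, -Complex.coe_smul,
        Complex.conj_ofReal, -inner_self_eq_norm_sq_to_K] <;>
      linear_combination 2 * hcc
  have hli := he.linearIndependent
  set K : Submodule ℂ V := Submodule.span ℂ (Set.range e) with hK
  have hK3 : Module.finrank ℂ K = 3 := by
    rw [hK, finrank_span_eq_card hli]; simp
  have hmem : ∀ i, e i ∈ K := fun i => Submodule.subset_span ⟨i, rfl⟩
  have hvK : v ∈ K := Submodule.smul_mem _ _ (Submodule.add_mem _ (hmem 0) (hmem 1))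
  have huK : u ∈ K := Submodule.smul_mem _ _ (Submodule.sub_mem _ (hmem 0) (hmem 1))
  have hEK : ∀ j, (![v, u, e 2]) j ∈ K := by
    intro j; fin_cases j <;> simp [hvK, huK, hmem 2]
  have hv1 : ‖v‖ = 1 := by simpa using hE.1 0
  have hineq := hRic K hK3 ![v, u, e 2] hE hEK v hvK hv1
  rw [Fin.sum_univ_three] at hineq
  simp only [Matrix.cons_val_zero, Matrix.cons_val_one, Matrix.head_cons,
    Matrix.cons_val_two, Matrix.tail_cons] at hineq
  have ms3 : ∀ x y z z' w, R x y (z - z') w = R x y z w - R x y z' w := by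
    intro x y z z' w
    have h := hR.map_add₃ x y z' (z - z') w
    rw [add_sub_cancel] at h
    linear_combination -h
  have ms4 : ∀ x y z w w', R x y z (w - w') = R x y z w - R x y z w' := by
    intro x y z w w'
    have h := hR.map_add₄ x y z w' (w - w')
    rw [add_sub_cancel] at h
    linear_combination -h
  have s1 := hR.symm₂₄ (e 0) (e 1) (e 0) (e 0)
  have s2 := hR.symm₁₃ (e 1) (e 0) (e 0) (e 0)
  have s3 := hR.symm₁₃ (e 1) (e 1) (e 0) (e 0)
  have s4 := hR.symm₁₃ (e 0) (e 0) (e 1) (e 1)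
  have s5 := hR.symm₁₃ (e 0) (e 1) (e 1) (e 1)
  have s6 := hR.symm₂₄ (e 1) (e 0) (e 1) (e 1)
  have key : R (e 0) (e 0) (e 0) (e 0) + R (e 1) (e 1) (e 1) (e 1)
      - R (e 0) (e 1) (e 0) (e 1) - R (e 1) (e 0) (e 1) (e 0)
      + 2 * (R (e 0) (e 0) (e 2) (e 2) + R (e 1) (e 1) (e 2) (e 2)
        + R (e 0) (e 1) (e 2) (e 2) + R (e 1) (e 0) (e 2) (e 2))
      = 4 * (R v v u u + R v v (e 2) (e 2)) := by
    simp only [hv, hu, hR.map_smul₁, hR.map_smul₂, hR.map_smul₃, hR.map_smul₄,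
      hR.map_add₁, hR.map_add₂, hR.map_add₃, hR.map_add₄, ms3, ms4,
      Complex.conj_ofReal]
    linear_combination
      ((-4*(c:ℂ)*(c:ℂ) - 2) * (R (e 0) (e 0) (e 0) (e 0) + R (e 1) (e 1) (e 1) (e 1)
        - R (e 0) (e 1) (e 0) (e 1) - R (e 1) (e 0) (e 1) (e 0))
       - 4 * (R (e 0) (e 0) (e 2) (e 2) + R (e 1) (e 1) (e 2) (e 2)
        + R (e 0) (e 1) (e 2) (e 2) + R (e 1) (e 0) (e 2) (e 2))) * hcc
      + (-4*(c:ℂ)*(c:ℂ)*(c:ℂ)*(c:ℂ)) * (s1 + s2 + s3 + s4 + s5 + s6)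
  rw [key]
  have : (4 * (R v v u u + R v v (e 2) (e 2))).re
      = 4 * (R v v u u + R v v (e 2) (e 2)).re := by
    simp [Complex.mul_re]
  rw [this]
  have h2 : (R v v v v + R v v u u + R v v (e 2) (e 2) - R v v v v).re
      = (R v v u u + R v v (e 2) (e 2)).re := by ring_nf
  rw [h2] at hineq
  linarith
end

section
/- Let V be a complex inner product space of dimension n ≥ 3, let R be a Kähler curvature-type tensor on V, and let φ ∈ ℝ. Assume that for every complex 3-dimensional subspace Σ ⊆ V, every orthonormal basis (E_1,E_2,E_3) of Σ, and every unit vector v ∈ Σ one has Σ_{j=1}^3 R(v,v̄,E_j,Ē_j) − R(v,v̄,v,v̄) ≥ φ. Then for every orthonormal triple (e_1,e_2,e_l) in V, the real number R_{1 1̄ 1 1̄} + R_{2 2̄ 2 2̄} − R_{1 2̄ 1 2̄} − R_{2 1̄ 2 1̄} + 2(R_{1 1̄ l l̄} + R_{2 2̄ l l̄}) is at least 4φ. -/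
open MeasureTheory

/-- **Inequality (eq:Ric3) in the proof of Theorem 1.** Let `V` be a complex inner
product space of dimension `n ≥ 3`, `R` a Kähler curvature-type tensor and `φ ∈ ℝ`.
If `Ric_3^⊥ ≥ φ` pointwise, then for every orthonormal triple `(e₁, e₂, e_l)`,
`R_{11̄11̄} + R_{22̄22̄} − R_{12̄12̄} − R_{21̄21̄} + 2(R_{11̄ll̄} + R_{22̄ll̄}) ≥ 4φ`. -/
theorem Ric3_inequality
    {V : Type*} [NormedAddCommGroup V] [InnerProductSpace ℂ V] [FiniteDimensional ℂ V]
    (hn : 3 ≤ Module.finrank ℂ V)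
    (R : V → V → V → V → ℂ) (hR : IsKahlerCurvatureTensor R) (φ : ℝ)
    (hRic : ∀ K : Submodule ℂ V, Module.finrank ℂ K = 3 →
      ∀ E : Fin 3 → V, Orthonormal ℂ E → (∀ j, E j ∈ K) →
      ∀ v ∈ K, ‖v‖ = 1 →
        φ ≤ ((∑ j : Fin 3, R v v (E j) (E j)) - R v v v v).re)
    (e : Fin 3 → V) (he : Orthonormal ℂ e) :
    4 * φ ≤ (R (e 0) (e 0) (e 0) (e 0) + R (e 1) (e 1) (e 1) (e 1)
      - R (e 0) (e 1) (e 0) (e 1) - R (e 1) (e 0) (e 1) (e 0)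
      + 2 * (R (e 0) (e 0) (e 2) (e 2) + R (e 1) (e 1) (e 2) (e 2))).re := by
  classical
  set K : Submodule ℂ V := Submodule.span ℂ (Set.range e) with hK
  have hKrank : Module.finrank ℂ K = 3 := by
    rw [hK, finrank_span_eq_card he.linearIndependent]
    simp
  have hmem : ∀ j, e j ∈ K := fun j => Submodule.subset_span (Set.mem_range_self j)
  -- the scalar
  set c : ℂ := (Real.sqrt 2 : ℂ)⁻¹ with hc
  have hcconj : starRingEnd ℂ c = c := by
    rw [hc, map_inv₀, Complex.conj_ofReal]
  have hs2 : (Real.sqrt 2 : ℝ) ^ 2 = 2 := Real.sq_sqrt (by norm_num)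
  have hcc : c * c = 1 / 2 := by
    rw [hc, ← mul_inv]
    norm_cast
    rw [← sq, hs2]
    norm_num
  have hnorme : ∀ j, ‖e j‖ = 1 := he.1
  have hinner01 : (inner ℂ (e 0) (e 1) : ℂ) = 0 := he.2 (by decide)
  have hnormc : ‖c‖ = (Real.sqrt 2)⁻¹ := by
    rw [hc, norm_inv, Complex.norm_real, Real.norm_of_nonneg (Real.sqrt_nonneg 2)]
  have hn1 : ‖e 0 + e 1‖ = Real.sqrt 2 := by
    have h := norm_add_sq (𝕜 := ℂ) (e 0) (e 1)
    rw [hinner01] at h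
    simp [hnorme] at h
    rw [← Real.sqrt_sq (norm_nonneg (e 0 + e 1)), h]
    norm_num
  have hn2 : ‖e 0 - e 1‖ = Real.sqrt 2 := by
    have h := norm_sub_sq (𝕜 := ℂ) (e 0) (e 1)
    rw [hinner01] at h
    simp [hnorme] at h
    rw [← Real.sqrt_sq (norm_nonneg (e 0 - e 1)), h]
    norm_num
  have hvnorm : ∀ w : V, ‖w‖ = Real.sqrt 2 → ‖c • w‖ = 1 := by
    intro w hw
    rw [norm_smul, hnormc, hw, inv_mul_cancel₀ (by positivity)]
  -- apply the hypothesis at v₊ and v₋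
  have hmemv : ∀ w₁ w₂ : V, w₁ ∈ K → w₂ ∈ K → c • (w₁ + w₂) ∈ K := by
    intro w₁ w₂ h1 h2
    exact K.smul_mem c (K.add_mem h1 h2)
  have hp := hRic K hKrank e he hmem (c • (e 0 + e 1))
    (hmemv _ _ (hmem 0) (hmem 1)) (hvnorm _ hn1)
  have hm := hRic K hKrank e he hmem (c • (e 0 + (-1 : ℂ) • e 1))
    (K.smul_mem c (K.add_mem (hmem 0) (K.smul_mem _ (hmem 1))))
    (by rw [neg_one_smul, ← sub_eq_add_neg]; exact hvnorm _ hn2)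
  have s1 : R (e 0) (e 1) (e 1) (e 0) = R (e 0) (e 0) (e 1) (e 1) :=
    hR.symm₂₄ (e 0) (e 1) (e 1) (e 0)
  have s2 : R (e 1) (e 0) (e 0) (e 1) = R (e 1) (e 1) (e 0) (e 0) :=
    hR.symm₂₄ (e 1) (e 0) (e 0) (e 1)
  set vp : V := c • (e 0 + e 1) with hvp
  set vm : V := c • (e 0 + (-1 : ℂ) • e 1) with hvm
  have key : R (e 0) (e 0) (e 0) (e 0) + R (e 1) (e 1) (e 1) (e 1)
      - R (e 0) (e 1) (e 0) (e 1) - R (e 1) (e 0) (e 1) (e 0)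
      + 2 * (R (e 0) (e 0) (e 2) (e 2) + R (e 1) (e 1) (e 2) (e 2))
      = 2 * ((((∑ j : Fin 3, R vp vp (e j) (e j)) - R vp vp vp vp)
          + ((∑ j : Fin 3, R vm vm (e j) (e j)) - R vm vm vm vm))) := by
    simp only [hvp, hvm, Fin.sum_univ_three, hR.map_add₁, hR.map_add₂, hR.map_add₃,
      hR.map_add₄, hR.map_smul₁, hR.map_smul₂, hR.map_smul₃, hR.map_smul₄, hcconj,
      map_neg, map_one, neg_one_mul]
    linear_combination (-4*(R (e 0) (e 0) (e 0) (e 0) + R (e 0) (e 0) (e 1) (e 1)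
        + R (e 0) (e 0) (e 2) (e 2) + R (e 1) (e 1) (e 0) (e 0)
        + R (e 1) (e 1) (e 1) (e 1) + R (e 1) (e 1) (e 2) (e 2))
      + 4*(R (e 0) (e 0) (e 0) (e 0) + R (e 1) (e 1) (e 1) (e 1)
        + R (e 0) (e 0) (e 1) (e 1) + R (e 1) (e 1) (e 0) (e 0)
        + R (e 0) (e 1) (e 0) (e 1) + R (e 1) (e 0) (e 1) (e 0)
        + R (e 0) (e 1) (e 1) (e 0) + R (e 1) (e 0) (e 0) (e 1))*(c^2 + 1/2)) * hcc
      + s1 + s2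
  rw [key]
  have hre : (2 * ((((∑ j : Fin 3, R vp vp (e j) (e j)) - R vp vp vp vp)
      + ((∑ j : Fin 3, R vm vm (e j) (e j)) - R vm vm vm vm)))).re
      = 2 * (((∑ j : Fin 3, R vp vp (e j) (e j)) - R vp vp vp vp).re
        + ((∑ j : Fin 3, R vm vm (e j) (e j)) - R vm vm vm vm).re) := by
    simp [Complex.mul_re, Complex.add_re]
  rw [hre]
  linarith
end
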